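/- arXiv:1604.08015 — 6 statements merged into one kernel-verified Lean document; each statement's English description precedes it below -/
import Mathlib

section
/- For every complex number z = x + iy with x real and y a nonzero real number, Re(Γ'(z)/Γ(z)) ≥ log|z| − π/(2|y|). -/
open Complex Real Filter Topology

local notation "γ" => Real.eulerMascheroniConstant

noncomputable section

namespace DigammaAux

/-- The complex digamma function. -/
def psiC (s : ℂ) : ℂ := deriv Complex.Gamma s / Complex.Gamma s

/-- Terms of the digamma series. -/
def dterm (k : ℕ) (s : ℂ) : ℂ := 1 / ((k : ℂ) + 1) - 1 / ((k : ℂ) + s)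

/-- The digamma series. -/
def GC (s : ℂ) : ℂ := -(γ : ℂ) + ∑' k : ℕ, dterm k s

lemma slit_add_nat_ne {s : ℂ} (hs : s ∈ slitPlane) (k : ℕ) : (k : ℂ) + s ≠ 0 := by
  intro h
  have him : s.im = 0 := by simpa using congrArg Complex.im h
  have hre : (k : ℝ) + s.re = 0 := by simpa using congrArg Complex.re h
  rcases hs with h1 | h1
  · have : (0:ℝ) ≤ (k:ℝ) := Nat.cast_nonneg k
    linarith
  · exact h1 him

lemma slit_ne_neg_nat {s : ℂ} (hs : s ∈ slitPlane) (m : ℕ) : s ≠ -(m : ℂ) := by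
  intro h
  apply slit_add_nat_ne hs m
  rw [h]
  ring

lemma dterm_eq {k : ℕ} {s : ℂ} (h : (k : ℂ) + s ≠ 0) :
    dterm k s = (s - 1) / (((k : ℂ) + 1) * ((k : ℂ) + s)) := by
  have h1 : ((k : ℂ) + 1) ≠ 0 := by
    have h2 : ((k + 1 : ℕ) : ℂ) ≠ 0 := Nat.cast_ne_zero.mpr (Nat.succ_ne_zero k)
    push_cast at h2
    exact h2
  rw [dterm]
  field_simp
  ring

lemma dterm_bound {w : ℂ} {r : ℝ} (N : ℕ) (hN : 2 * (‖w‖ + r + 1) ≤ N) (k : ℕ) {s : ℂ}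
    (hs : s ∈ Metric.closedBall w r) :
    ‖dterm (k + N) s‖ ≤ 4 * (‖w‖ + r + 1) * (1 / ((k : ℝ) + 1) ^ 2) := by
  have hr : 0 ≤ r := Metric.nonempty_closedBall.mp ⟨s, hs⟩
  have hsw : ‖s - w‖ ≤ r := by
    rwa [Metric.mem_closedBall, dist_eq_norm] at hs
  have hs_norm : ‖s‖ ≤ ‖w‖ + r := by
    have := norm_sub_norm_le s w
    linarith
  have hwr : (0:ℝ) ≤ ‖w‖ + r := by positivity
  have hden : (k : ℝ) + 1 ≤ ‖((k + N : ℕ) : ℂ) + s‖ := by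
    have h1 : ‖((k + N : ℕ) : ℂ)‖ - ‖s‖ ≤ ‖((k + N : ℕ) : ℂ) + s‖ := by
      have := norm_sub_norm_le ((k + N : ℕ) : ℂ) (-s)
      simpa [sub_neg_eq_add] using this
    have h2 : ‖((k + N : ℕ) : ℂ)‖ = (k : ℝ) + N := by
      rw [Complex.norm_natCast]
      push_cast
      ring
    rw [h2] at h1
    linarith
  have h0 : ((k + N : ℕ) : ℂ) + s ≠ 0 := by
    intro h
    rw [h, norm_zero] at hden
    have : (0:ℝ) ≤ (k:ℝ) := Nat.cast_nonneg k
    linarith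
  rw [dterm_eq h0, norm_div, norm_mul]
  have e2 : ‖((k + N : ℕ) : ℂ) + 1‖ = (k : ℝ) + N + 1 := by
    rw [show ((k + N : ℕ) : ℂ) + 1 = ((k + N + 1 : ℕ) : ℂ) by push_cast; ring,
      Complex.norm_natCast]
    push_cast
    ring
  rw [e2]
  have hnum : ‖s - 1‖ ≤ ‖w‖ + r + 1 := by
    have h := norm_sub_le s 1
    rw [norm_one] at h
    linarith
  have hk1 : (0:ℝ) < (k:ℝ) + 1 := by positivity
  have hNk : (k : ℝ) + 1 ≤ (k : ℝ) + N + 1 := by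
    have : (0:ℝ) ≤ (N:ℝ) := Nat.cast_nonneg N
    linarith
  calc ‖s - 1‖ / (((k : ℝ) + N + 1) * ‖((k + N : ℕ) : ℂ) + s‖)
      ≤ (‖w‖ + r + 1) / (((k : ℝ) + 1) * ((k : ℝ) + 1)) := by
        gcongr <;> first
          | exact hnum
          | exact hden
          | exact hNk
          | positivity
    _ ≤ 4 * (‖w‖ + r + 1) * (1 / ((k : ℝ) + 1) ^ 2) := by
        rw [pow_two, one_div, div_eq_mul_inv, mul_inv]
        have ht : (0:ℝ) ≤ ((k:ℝ)+1)⁻¹ * ((k:ℝ)+1)⁻¹ := by positivity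
        nlinarith [mul_nonneg (show (0:ℝ) ≤ ‖w‖ + r + 1 by positivity) ht]

lemma summable_inv_sq : Summable (fun k : ℕ => 1 / ((k : ℝ) + 1) ^ 2) := by
  have h := (summable_one_div_nat_pow (p := 2)).mpr (by norm_num)
  have h2 := (summable_nat_add_iff (f := fun n : ℕ => 1 / (n : ℝ) ^ 2) 1).mpr h
  refine h2.congr fun k => ?_
  push_cast
  ring

lemma summable_dterm (s : ℂ) : Summable (fun k => dterm k s) := by
  set N := ⌈2 * (‖s‖ + 1 + 1)⌉₊ with hNdef
  have hN : 2 * (‖s‖ + 1 + 1) ≤ (N : ℝ) := Nat.le_ceil _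
  have hball : s ∈ Metric.closedBall s 1 := Metric.mem_closedBall_self (by norm_num)
  have htail : Summable (fun k => dterm (k + N) s) := by
    apply Summable.of_norm_bounded (summable_inv_sq.mul_left (4 * (‖s‖ + 1 + 1)))
    intro k
    exact dterm_bound N hN k hball
  exact (summable_nat_add_iff N).mp htail

lemma differentiableOn_dterm (k : ℕ) : DifferentiableOn ℂ (dterm k) slitPlane := by
  apply DifferentiableOn.sub
  · exact differentiableOn_const _
  · exact DifferentiableOn.div (differentiableOn_const 1)
      ((differentiable_const _).add differentiable_id).differentiableOn
      (fun s hs => slit_add_nat_ne hs k)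

lemma differentiableOn_dterm_sum (T : Finset ℕ) (N : ℕ) {V : Set ℂ} (hV : V ⊆ slitPlane) :
    DifferentiableOn ℂ (fun s => ∑ k ∈ T, dterm (k + N) s) V := by
  apply DifferentiableOn.fun_sum
  intro k _
  exact (differentiableOn_dterm (k + N)).mono hV

lemma analyticOnNhd_GC : AnalyticOnNhd ℂ GC slitPlane := by
  apply DifferentiableOn.analyticOnNhd _ isOpen_slitPlane
  intro w hw
  suffices h : DifferentiableAt ℂ GC w from h.differentiableWithinAt
  obtain ⟨r, hr0, hball⟩ : ∃ r > 0, Metric.closedBall w r ⊆ slitPlane := by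
    rcases Metric.isOpen_iff.mp isOpen_slitPlane w hw with ⟨ε, hε, hsub⟩
    exact ⟨ε / 2, by linarith, (Metric.closedBall_subset_ball (by linarith)).trans hsub⟩
  set N := ⌈2 * (‖w‖ + r + 1)⌉₊ with hNdef
  have hN : 2 * (‖w‖ + r + 1) ≤ (N : ℝ) := Nat.le_ceil _
  set T : ℂ → ℂ := fun s => ∑' k, dterm (k + N) s with hT
  -- the tail is differentiable on the open ball
  have htail : DifferentiableOn ℂ T (Metric.ball w r) := by
    have huc : TendstoUniformlyOn (fun t : Finset ℕ => fun s => ∑ k ∈ t, dterm (k + N) s) T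
        atTop (Metric.closedBall w r) := by
      apply tendstoUniformlyOn_tsum (summable_inv_sq.mul_left (4 * (‖w‖ + r + 1)))
      intro k s hsmem
      exact dterm_bound N hN k hsmem
    have hlu : TendstoLocallyUniformlyOn
        (fun t : Finset ℕ => fun s => ∑ k ∈ t, dterm (k + N) s) T atTop (Metric.ball w r) :=
      (huc.tendstoLocallyUniformlyOn).mono Metric.ball_subset_closedBall
    apply hlu.differentiableOn _ Metric.isOpen_ball
    filter_upwards with t
    exact differentiableOn_dterm_sum t N ((Metric.ball_subset_closedBall).trans hball)
  have heq : Set.EqOn GC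
      (fun s => (-(γ:ℂ) + ∑ k ∈ Finset.range N, dterm k s) + T s) (Metric.ball w r) := by
    intro s hsmem
    have hsummable := summable_dterm s
    simp only [GC, hT]
    rw [← hsummable.sum_add_tsum_nat_add N]
    ring
  have hdiff : DifferentiableOn ℂ
      (fun s => (-(γ:ℂ) + ∑ k ∈ Finset.range N, dterm k s) + T s) (Metric.ball w r) := by
    apply DifferentiableOn.add _ htail
    apply DifferentiableOn.add (differentiableOn_const _)
    have h2 := differentiableOn_dterm_sum (Finset.range N) 0
      ((Metric.ball_subset_closedBall).trans hball)
    simpa using h2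
  have : DifferentiableOn ℂ GC (Metric.ball w r) := hdiff.congr heq
  exact (this.differentiableAt (Metric.isOpen_ball.mem_nhds (Metric.mem_ball_self hr0)))

lemma analyticOnNhd_psiC : AnalyticOnNhd ℂ psiC slitPlane := by
  have hΓ : DifferentiableOn ℂ Complex.Gamma slitPlane := fun s hs =>
    (Complex.differentiableAt_Gamma s (slit_ne_neg_nat hs)).differentiableWithinAt
  have hA := hΓ.analyticOnNhd isOpen_slitPlane
  exact hA.deriv.div hA fun s hs => Complex.Gamma_ne_zero (slit_ne_neg_nat hs)

/-! ### Real digamma -/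

/-- Real digamma as derivative of `log ∘ Gamma`. -/
def uR : ℝ → ℝ := deriv (Real.log ∘ Real.Gamma)

/-- Real digamma series. -/
def vR (x : ℝ) : ℝ := -γ + ∑' k : ℕ, (1 / ((k : ℝ) + 1) - 1 / ((k : ℝ) + x))

lemma summable_rterm {x : ℝ} (hx : 0 < x) :
    Summable (fun k : ℕ => 1 / ((k : ℝ) + 1) - 1 / ((k : ℝ) + x)) := by
  apply Summable.of_norm_bounded (summable_inv_sq.mul_left (|x - 1| / min 1 x))
  intro k
  have hk1 : (0:ℝ) < (k:ℝ) + 1 := by positivity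
  have hkx : (0:ℝ) < (k:ℝ) + x := by positivity
  have hmin : (0:ℝ) < min 1 x := lt_min one_pos hx
  have heq : 1/((k:ℝ)+1) - 1/((k:ℝ)+x) = (x - 1)/(((k:ℝ)+1)*((k:ℝ)+x)) := by
    field_simp
    ring
  rw [Real.norm_eq_abs, heq, abs_div,
    abs_of_pos (show (0:ℝ) < ((k:ℝ)+1)*((k:ℝ)+x) by positivity)]
  have hden : min 1 x * ((k:ℝ)+1)^2 ≤ ((k:ℝ)+1)*((k:ℝ)+x) := by
    rcases le_total (1:ℝ) x with h | h
    · rw [min_eq_left h]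
      nlinarith
    · rw [min_eq_right h]
      nlinarith [mul_nonneg (mul_nonneg (show (0:ℝ) ≤ (k:ℝ)+1 by positivity)
        (Nat.cast_nonneg (α := ℝ) k)) (sub_nonneg.mpr h)]
  calc |x - 1| / (((k:ℝ)+1)*((k:ℝ)+x)) ≤ |x - 1| / (min 1 x * ((k:ℝ)+1)^2) := by
        rw [div_le_div_iff₀ (by positivity) (mul_pos hmin (by positivity))]
        exact mul_le_mul_of_nonneg_left hden (abs_nonneg _)
    _ = |x - 1| / min 1 x * (1/((k:ℝ)+1)^2) := by
        rw [div_mul_eq_div_mul_one_div]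

lemma summable_rtel {x : ℝ} (hx : 0 < x) :
    Summable (fun k : ℕ => 1 / ((k : ℝ) + x) - 1 / ((k : ℝ) + x + 1)) := by
  apply Summable.of_norm_bounded (summable_inv_sq.mul_left (1 / min 1 x))
  intro k
  have hk1 : (0:ℝ) < (k:ℝ) + 1 := by positivity
  have hkx : (0:ℝ) < (k:ℝ) + x := by positivity
  have hmin : (0:ℝ) < min 1 x := lt_min one_pos hx
  have heq : 1/((k:ℝ)+x) - 1/((k:ℝ)+x+1) = 1/(((k:ℝ)+x)*((k:ℝ)+x+1)) := by
    field_simp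
    ring
  rw [Real.norm_eq_abs, heq, abs_of_pos (show (0:ℝ) < 1/(((k:ℝ)+x)*((k:ℝ)+x+1)) by positivity)]
  have hden : min 1 x * ((k:ℝ)+1)^2 ≤ ((k:ℝ)+x)*((k:ℝ)+x+1) := by
    rcases le_total (1:ℝ) x with h | h
    · rw [min_eq_left h]
      nlinarith
    · rw [min_eq_right h]
      nlinarith [mul_nonneg (mul_nonneg (Nat.cast_nonneg (α := ℝ) k)
        (Nat.cast_nonneg (α := ℝ) k)) (sub_nonneg.mpr h), sq_nonneg x]
  calc 1 / (((k:ℝ)+x)*((k:ℝ)+x+1)) ≤ 1 / (min 1 x * ((k:ℝ)+1)^2) := by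
        rw [div_le_div_iff₀ (by positivity) (mul_pos hmin (by positivity))]
        nlinarith
    _ = 1 / min 1 x * (1/((k:ℝ)+1)^2) := by
        rw [div_mul_eq_div_mul_one_div]

lemma tsum_rtel {x : ℝ} (hx : 0 < x) :
    ∑' k : ℕ, (1 / ((k : ℝ) + x) - 1 / ((k : ℝ) + x + 1)) = 1 / x := by
  have hsum := (summable_rtel hx).hasSum
  have hps : Tendsto (fun n => ∑ k ∈ Finset.range n, (1/((k:ℝ)+x) - 1/((k:ℝ)+x+1)))
      atTop (𝓝 (1/x)) := by
    have hps_eq : ∀ n : ℕ, ∑ k ∈ Finset.range n, (1/((k:ℝ)+x) - 1/((k:ℝ)+x+1))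
        = 1/x - 1/((n:ℝ)+x) := by
      intro n
      have h := Finset.sum_range_sub' (f := fun k : ℕ => 1/((k:ℝ)+x)) n
      have h2 : ∑ k ∈ Finset.range n, (1/((k:ℝ)+x) - 1/((k:ℝ)+x+1))
          = ∑ i ∈ Finset.range n, ((fun k : ℕ => 1/((k:ℝ)+x)) i
            - (fun k : ℕ => 1/((k:ℝ)+x)) (i+1)) := by
        apply Finset.sum_congr rfl
        intro k _
        push_cast
        ring_nf
      rw [h2, h]
      norm_num
    simp only [hps_eq]
    have h2 : Tendsto (fun n : ℕ => 1/((n:ℝ)+x)) atTop (𝓝 0) := by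
      simp only [one_div]
      apply Filter.Tendsto.inv_tendsto_atTop
      exact tendsto_atTop_add_const_right atTop x tendsto_natCast_atTop_atTop
    simpa using tendsto_const_nhds.sub h2
  exact tendsto_nhds_unique hsum.tendsto_sum_nat hps

lemma vR_rec {x : ℝ} (hx : 0 < x) : vR (x + 1) = vR x + 1 / x := by
  have h1 := summable_rterm hx
  have h3 := summable_rtel hx
  have key : ∀ k : ℕ, 1/((k:ℝ)+1) - 1/((k:ℝ)+(x+1))
      = (1/((k:ℝ)+1) - 1/((k:ℝ)+x)) + (1/((k:ℝ)+x) - 1/((k:ℝ)+x+1)) := by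
    intro k
    ring_nf
  rw [vR, vR, tsum_congr key, h1.tsum_add h3, tsum_rtel hx]
  ring

lemma vR_mono : MonotoneOn vR (Set.Ioi (0 : ℝ)) := by
  intro a ha b hb hab
  rw [Set.mem_Ioi] at ha hb
  apply add_le_add_right
  apply Summable.tsum_le_tsum _ (summable_rterm ha) (summable_rterm hb)
  intro k
  have hka : (0:ℝ) < (k:ℝ) + a := by positivity
  have h := one_div_le_one_div_of_le hka (by linarith : (k:ℝ) + a ≤ (k:ℝ) + b)
  linarith

lemma vR_nat (n : ℕ) : vR ((n : ℝ) + 1) = -γ + harmonic n := by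
  induction n with
  | zero =>
    simp only [Nat.cast_zero, zero_add, harmonic_zero, Rat.cast_zero, add_zero]
    rw [vR]
    simp
  | succ n ih =>
    have hrec := vR_rec (show (0:ℝ) < (n:ℝ) + 1 by positivity)
    rw [show ((n+1:ℕ):ℝ) + 1 = ((n:ℝ)+1)+1 by push_cast; ring, hrec, ih, harmonic_succ]
    push_cast
    ring

lemma ne_neg_nat {x : ℝ} (hx : 0 < x) : ∀ m : ℕ, x ≠ -(m : ℝ) := by
  intro m h
  have : (0:ℝ) ≤ (m:ℝ) := Nat.cast_nonneg m
  rw [h] at hx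
  linarith

lemma uR_diff {x : ℝ} (hx : 0 < x) : DifferentiableAt ℝ (Real.log ∘ Real.Gamma) x := by
  rw [Function.comp_def]
  exact (Real.differentiableAt_Gamma (ne_neg_nat hx)).log (Real.Gamma_pos_of_pos hx).ne'

lemma uR_eq {x : ℝ} (hx : 0 < x) : uR x = deriv Real.Gamma x / Real.Gamma x := by
  unfold uR
  rw [Function.comp_def]
  exact deriv.log (Real.differentiableAt_Gamma (ne_neg_nat hx)) (Real.Gamma_pos_of_pos hx).ne'

lemma uR_rec {x : ℝ} (hx : 0 < x) : uR (x + 1) = uR x + 1 / x := by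
  have h_rec : ∀ t : ℝ, 0 < t → (Real.log ∘ Real.Gamma) (t + 1)
      = (Real.log ∘ Real.Gamma) t + Real.log t := by
    intro t ht
    simp only [Function.comp_apply, Real.Gamma_add_one ht.ne',
      Real.log_mul ht.ne' (Real.Gamma_pos_of_pos ht).ne', add_comm]
  unfold uR
  rw [← deriv_comp_add_const, one_div, ← Real.deriv_log,
    ← deriv_add (uR_diff hx) (Real.differentiableAt_log hx.ne')]
  apply Filter.EventuallyEq.deriv_eq
  filter_upwards [eventually_gt_nhds hx] using h_rec

lemma uR_mono : MonotoneOn uR (Set.Ioi (0 : ℝ)) := by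
  exact Real.convexOn_log_Gamma.monotoneOn_deriv fun t ht => uR_diff ht

lemma uR_nat (n : ℕ) : uR ((n : ℝ) + 1) = -γ + harmonic n := by
  have hpos : (0:ℝ) < (n:ℝ) + 1 := by positivity
  rw [uR_eq hpos, Real.deriv_Gamma_nat n, Real.Gamma_nat_eq_factorial n]
  have hfact : ((Nat.factorial n : ℕ) : ℝ) ≠ 0 :=
    Nat.cast_ne_zero.mpr (Nat.factorial_pos n).ne'
  rw [mul_comm, mul_div_assoc, div_self hfact, mul_one]

lemma uR_add_nat {x : ℝ} (hx : 0 < x) (n : ℕ) :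
    uR (x + n) = uR x + ∑ k ∈ Finset.range n, 1 / (x + k) := by
  induction n with
  | zero => simp
  | succ n ih =>
    have hpos : (0:ℝ) < x + n := by positivity
    rw [show x + ((n+1:ℕ):ℝ) = (x + n) + 1 by push_cast; ring, uR_rec hpos, ih,
      Finset.sum_range_succ]
    ring

lemma vR_add_nat {x : ℝ} (hx : 0 < x) (n : ℕ) :
    vR (x + n) = vR x + ∑ k ∈ Finset.range n, 1 / (x + k) := by
  induction n with
  | zero => simp
  | succ n ih =>
    have hpos : (0:ℝ) < x + n := by positivity
    rw [show x + ((n+1:ℕ):ℝ) = (x + n) + 1 by push_cast; ring, vR_rec hpos, ih,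
      Finset.sum_range_succ]
    ring

lemma uR_eq_vR {x : ℝ} (hx : 0 < x) : uR x = vR x := by
  have key : ∀ n : ℕ, 1 ≤ n → |uR x - vR x| ≤ 1 / (n : ℝ) := by
    intro n hn
    obtain ⟨m, hmdef⟩ : ∃ m : ℕ, m = ⌊x⌋₊ + n := ⟨_, rfl⟩
    have hm1 : 1 ≤ m := hmdef ▸ hn.trans (Nat.le_add_left n ⌊x⌋₊)
    have hmpos : (0:ℝ) < (m : ℝ) := by
      have : (1:ℝ) ≤ (m:ℝ) := by exact_mod_cast hm1
      linarith
    have hmx : (m : ℝ) ≤ x + n := by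
      rw [hmdef]
      push_cast
      have := Nat.floor_le hx.le
      linarith
    have hxm : x + n ≤ (m : ℝ) + 1 := by
      rw [hmdef]
      push_cast
      have := Nat.lt_floor_add_one x
      linarith
    have hxn : (0:ℝ) < x + n := by positivity
    have hdiff : uR x - vR x = uR (x + n) - vR (x + n) := by
      rw [uR_add_nat hx n, vR_add_nat hx n]
      ring
    have hu1 : uR m ≤ uR (x + n) := uR_mono (Set.mem_Ioi.mpr hmpos)
      (Set.mem_Ioi.mpr hxn) hmx
    have hu2 : uR (x + n) ≤ uR ((m:ℝ) + 1) := uR_mono (Set.mem_Ioi.mpr hxn)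
      (Set.mem_Ioi.mpr (by linarith)) hxm
    have hv1 : vR m ≤ vR (x + n) := vR_mono (Set.mem_Ioi.mpr hmpos)
      (Set.mem_Ioi.mpr hxn) hmx
    have hv2 : vR (x + n) ≤ vR ((m:ℝ) + 1) := vR_mono (Set.mem_Ioi.mpr hxn)
      (Set.mem_Ioi.mpr (by linarith)) hxm
    have e1 : uR (m:ℝ) = vR (m:ℝ) := by
      obtain ⟨j, rfl⟩ : ∃ j, m = j + 1 := ⟨m - 1, (Nat.succ_pred_eq_of_pos hm1).symm⟩
      rw [show ((j+1:ℕ):ℝ) = (j:ℝ) + 1 by push_cast; ring, uR_nat j, vR_nat j]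
    have e2 : uR ((m:ℝ) + 1) = vR ((m:ℝ) + 1) := by
      rw [uR_nat m, vR_nat m]
    have e3 : vR ((m:ℝ) + 1) = vR (m:ℝ) + 1 / (m:ℝ) := vR_rec hmpos
    have hnpos : (0:ℝ) < (n:ℝ) := by exact_mod_cast hn
    have hnm : (n:ℝ) ≤ (m:ℝ) := by
      rw [hmdef]
      exact_mod_cast Nat.le_add_left n ⌊x⌋₊
    have hmn : 1 / (m:ℝ) ≤ 1 / (n:ℝ) := one_div_le_one_div_of_le hnpos hnm
    rw [hdiff, abs_le]
    constructor
    · linarith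
    · linarith
  have h0 : Tendsto (fun n : ℕ => 1 / (n : ℝ)) atTop (𝓝 0) :=
    tendsto_one_div_atTop_nhds_zero_nat
  have hle : |uR x - vR x| ≤ 0 := by
    apply ge_of_tendsto h0
    filter_upwards [eventually_ge_atTop 1] with n hn
    exact key n hn
  have := abs_nonneg (uR x - vR x)
  have heq : |uR x - vR x| = 0 := le_antisymm hle this
  rw [abs_eq_zero] at heq
  linarith

lemma deriv_Gamma_ofReal {x : ℝ} (hx : 0 < x) :
    deriv Complex.Gamma (x : ℂ) = ((deriv Real.Gamma x : ℝ) : ℂ) := by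
  have hne : ∀ m : ℕ, (x:ℂ) ≠ -(m:ℂ) := slit_ne_neg_nat (Complex.ofReal_mem_slitPlane.mpr hx)
  have hd := (Complex.differentiableAt_Gamma _ hne).hasDerivAt
  have hre := hd.real_of_complex
  have him : (deriv Complex.Gamma (x:ℂ)).im = 0 := by
    have hd2 : HasDerivAt (fun s => -Complex.I * Complex.Gamma s)
        (-Complex.I * deriv Complex.Gamma (x:ℂ)) (x:ℂ) := hd.const_mul _
    have hre2 := hd2.real_of_complex
    have hzero : (fun t : ℝ => (-Complex.I * Complex.Gamma (t:ℂ)).re) = fun _ => (0:ℝ) := by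
      funext t
      rw [Complex.Gamma_ofReal]
      simp
    rw [hzero] at hre2
    have h0 := (hasDerivAt_const x (0:ℝ)).unique hre2
    simpa [Complex.mul_re] using h0.symm
  have hRe : deriv Real.Gamma x = (deriv Complex.Gamma (x:ℂ)).re := by
    have heqf : (fun t : ℝ => (Complex.Gamma (t:ℂ)).re) = Real.Gamma := by
      funext t
      rw [Complex.Gamma_ofReal, Complex.ofReal_re]
    rw [heqf] at hre
    exact hre.deriv.symm.symm
  apply Complex.ext
  · simp [hRe]
  · simp [him]

lemma psiC_eq_GC_ofReal {x : ℝ} (hx : 0 < x) : psiC x = GC x := by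
  have h1 : psiC x = ((uR x : ℝ) : ℂ) := by
    rw [psiC, deriv_Gamma_ofReal hx, Complex.Gamma_ofReal, uR_eq hx, Complex.ofReal_div]
  have h2 : GC x = ((vR x : ℝ) : ℂ) := by
    rw [GC, vR]
    have hterm : ∀ k : ℕ, dterm k (x:ℂ) = ((1/((k:ℝ)+1) - 1/((k:ℝ)+x) : ℝ) : ℂ) := by
      intro k
      rw [dterm]
      push_cast
      ring
    rw [tsum_congr hterm]
    have hmap := Complex.ofRealCLM.map_tsum (summable_rterm hx)
    simp only [Complex.ofRealCLM_apply] at hmap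
    rw [← hmap]
    push_cast
    ring
  rw [h1, h2, uR_eq_vR hx]

lemma psiC_eq_GC : Set.EqOn psiC GC slitPlane := by
  have hpre : IsPreconnected slitPlane := by
    have hpc : IsPathConnected slitPlane := by
      refine ⟨1, one_mem_slitPlane, fun {v} hv => ?_⟩
      exact JoinedIn.of_segment_subset (starConvex_one_slitPlane.segment_subset hv)
    exact hpc.isConnected.isPreconnected
  apply analyticOnNhd_psiC.eqOn_of_preconnected_of_frequently_eq analyticOnNhd_GC hpre
    one_mem_slitPlane
  have hseq : Tendsto (fun n : ℕ => (1 + 1/((n:ℂ)+1))) atTop (𝓝[≠] 1) := by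
    rw [tendsto_nhdsWithin_iff]
    constructor
    · have hr : Tendsto (fun n : ℕ => 1/((n:ℝ)+1)) atTop (𝓝 0) :=
        tendsto_one_div_add_atTop_nhds_zero_nat
      have hc := (Complex.continuous_ofReal.tendsto (0:ℝ)).comp hr
      have hc2 : Tendsto (fun n : ℕ => 1/((n:ℂ)+1)) atTop (𝓝 0) := by
        have heq : (fun n : ℕ => 1/((n:ℂ)+1)) = (Complex.ofReal ∘ fun n : ℕ => 1/((n:ℝ)+1)) := by
          funext n
          simp only [Function.comp_apply]
          push_cast
          rfl
        rw [heq]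
        simpa using hc
      simpa using tendsto_const_nhds.add hc2
    · filter_upwards with n
      simp only [Set.mem_compl_iff, Set.mem_singleton_iff]
      intro h
      have h2 : 1/((n:ℂ)+1) = 0 := by
        have := congrArg (fun w => w - 1) h
        simpa using this
      exact one_div_ne_zero (Nat.cast_add_one_ne_zero n) h2
  apply hseq.frequently
  apply Filter.Frequently.of_forall
  intro n
  have hpt : (1 + 1/((n:ℂ)+1)) = ((1 + 1/((n:ℝ)+1) : ℝ) : ℂ) := by
    push_cast
    rfl
  rw [hpt]
  exact psiC_eq_GC_ofReal (by positivity)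

/-! ### The estimate -/

section Estimate

variable (x : ℝ) {y : ℝ} (hy : y ≠ 0)

/-- `h` function: real part of `1/(z+t)`. -/
def hf (x y t : ℝ) : ℝ := (x + t) / ((x + t) ^ 2 + y ^ 2)

/-- bound function for `|h'|`. -/
def qf (x y t : ℝ) : ℝ := 1 / ((x + t) ^ 2 + y ^ 2)

include hy

lemma denom_pos (t : ℝ) : 0 < (x + t) ^ 2 + y ^ 2 := by
  have h : 0 < y ^ 2 := by positivity
  nlinarith [sq_nonneg (x + t)]

lemma hf_hasDeriv (t : ℝ) :
    HasDerivAt (hf x y) ((y ^ 2 - (x + t) ^ 2) / ((x + t) ^ 2 + y ^ 2) ^ 2) t := by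
  have h1 : HasDerivAt (fun t : ℝ => x + t) 1 t := (hasDerivAt_id t).const_add x
  have h2 : HasDerivAt (fun t : ℝ => (x + t) ^ 2 + y ^ 2) (2 * (x + t)) t := by
    simpa using (h1.pow 2).add_const (y ^ 2)
  have h3 := h1.div h2 (denom_pos x hy t).ne'
  refine h3.congr_deriv (Eq.symm ?_)
  ring

lemma hf_cont : Continuous (hf x y) := by
  apply Continuous.div (by continuity) (by continuity)
  exact fun t => (denom_pos x hy t).ne'

lemma qf_cont : Continuous (qf x y) := by
  apply Continuous.div continuous_const (by continuity)
  exact fun t => (denom_pos x hy t).ne'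

lemma hf_deriv_cont : Continuous (fun t => (y ^ 2 - (x + t) ^ 2) / ((x + t) ^ 2 + y ^ 2) ^ 2) := by
  apply Continuous.div (by continuity) (by continuity)
  exact fun t => pow_ne_zero 2 (denom_pos x hy t).ne'

lemma hf_deriv_abs_le (t : ℝ) :
    |(y ^ 2 - (x + t) ^ 2) / ((x + t) ^ 2 + y ^ 2) ^ 2| ≤ qf x y t := by
  have hD := denom_pos x hy t
  rw [abs_div, abs_of_pos (pow_pos hD 2), qf, div_le_div_iff₀ (pow_pos hD 2) hD]
  have : |y ^ 2 - (x + t) ^ 2| ≤ (x + t) ^ 2 + y ^ 2 := by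
    rw [abs_le]; constructor <;> nlinarith [sq_nonneg (x + t), sq_nonneg y]
  nlinarith [abs_nonneg (y ^ 2 - (x + t) ^ 2)]

lemma trapezoid (a : ℝ) :
    (hf x y a + hf x y (a + 1)) / 2 - ∫ t in a..(a + 1), hf x y t ≤
      (1 / 2) * ∫ t in a..(a + 1), qf x y t := by
  set h' : ℝ → ℝ := fun t => (y ^ 2 - (x + t) ^ 2) / ((x + t) ^ 2 + y ^ 2) ^ 2 with hh'
  have hint_h : ∀ c d : ℝ, IntervalIntegrable (hf x y) MeasureTheory.volume c d :=
    fun c d => (hf_cont x hy).intervalIntegrable c d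
  have hint_q : ∀ c d : ℝ, IntervalIntegrable (qf x y) MeasureTheory.volume c d :=
    fun c d => (qf_cont x hy).intervalIntegrable c d
  have hint_h' : ∀ c d : ℝ, IntervalIntegrable h' MeasureTheory.volume c d :=
    fun c d => (hf_deriv_cont x hy).intervalIntegrable c d
  have hftc : ∀ c d : ℝ, hf x y d - hf x y c = ∫ t in c..d, h' t := by
    intro c d
    rw [intervalIntegral.integral_eq_sub_of_hasDerivAt (fun t _ => hf_hasDeriv x hy t)
      (hint_h' c d)]
  have habs : ∀ c d : ℝ, c ≤ d → |∫ t in c..d, h' t| ≤ ∫ t in c..d, qf x y t := by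
    intro c d hcd
    refine (intervalIntegral.abs_integral_le_integral_abs hcd).trans ?_
    apply intervalIntegral.integral_mono_on hcd
      ((hf_deriv_cont x hy).abs.intervalIntegrable c d) (hint_q c d)
    exact fun t _ => hf_deriv_abs_le x hy t
  -- pointwise bound
  have key : ∀ t ∈ Set.Icc a (a + 1),
      hf x y (a + 1) + hf x y a - 2 * hf x y t ≤ ∫ u in a..(a + 1), qf x y u := by
    intro t ht
    have h1 : hf x y (a + 1) - hf x y t ≤ ∫ u in t..(a + 1), qf x y u := by
      rw [hftc t (a + 1)]
      exact (le_abs_self _).trans (habs t (a + 1) ht.2)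
    have h2 : hf x y a - hf x y t ≤ ∫ u in a..t, qf x y u := by
      rw [show hf x y a - hf x y t = -(hf x y t - hf x y a) by ring, hftc a t]
      exact (neg_le_abs _).trans (habs a t ht.1)
    have h3 : (∫ u in a..t, qf x y u) + ∫ u in t..(a + 1), qf x y u
        = ∫ u in a..(a + 1), qf x y u :=
      intervalIntegral.integral_add_adjacent_intervals (hint_q a t) (hint_q t (a + 1))
    linarith
  have hid : (hf x y a + hf x y (a + 1)) / 2 - (∫ t in a..(a + 1), hf x y t)
      = (1 / 2) * ∫ t in a..(a + 1), (hf x y (a + 1) + hf x y a - 2 * hf x y t) := by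
    rw [intervalIntegral.integral_sub intervalIntegrable_const
      ((hint_h a (a + 1)).const_mul 2), intervalIntegral.integral_const_mul,
      intervalIntegral.integral_const]
    simp only [add_sub_cancel_left, one_smul]
    ring
  rw [hid]
  have hmono : (∫ t in a..(a + 1), (hf x y (a + 1) + hf x y a - 2 * hf x y t))
      ≤ ∫ t in a..(a + 1), (∫ u in a..(a + 1), qf x y u) := by
    apply intervalIntegral.integral_mono_on (by linarith)
      (intervalIntegrable_const.sub ((hint_h a (a + 1)).const_mul 2))
      intervalIntegrable_const key
  have hconst : (∫ t in a..(a + 1), (∫ u in a..(a + 1), qf x y u))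
      = ∫ u in a..(a + 1), qf x y u := by
    rw [intervalIntegral.integral_const]
    simp
  rw [hconst] at hmono
  linarith

lemma sum_hf_le (n : ℕ) :
    ∑ k ∈ Finset.range (n + 1), hf x y k ≤
      (∫ t in (0:ℝ)..(n:ℝ), hf x y t) + (hf x y 0 + hf x y n) / 2
        + (1 / 2) * ∫ t in (0:ℝ)..(n:ℝ), qf x y t := by
  induction n with
  | zero => simp
  | succ n ih =>
    have htrap := trapezoid x hy (n : ℝ)
    have hint_h : ∀ c d : ℝ, IntervalIntegrable (hf x y) MeasureTheory.volume c d :=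
      fun c d => (hf_cont x hy).intervalIntegrable c d
    have hint_q : ∀ c d : ℝ, IntervalIntegrable (qf x y) MeasureTheory.volume c d :=
      fun c d => (qf_cont x hy).intervalIntegrable c d
    have hsplit_h : (∫ t in (0:ℝ)..(n:ℝ), hf x y t) + (∫ t in (n:ℝ)..((n:ℝ)+1), hf x y t)
        = ∫ t in (0:ℝ)..((n:ℝ)+1), hf x y t :=
      intervalIntegral.integral_add_adjacent_intervals (hint_h _ _) (hint_h _ _)
    have hsplit_q : (∫ t in (0:ℝ)..(n:ℝ), qf x y t) + (∫ t in (n:ℝ)..((n:ℝ)+1), qf x y t)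
        = ∫ t in (0:ℝ)..((n:ℝ)+1), qf x y t :=
      intervalIntegral.integral_add_adjacent_intervals (hint_q _ _) (hint_q _ _)
    rw [Finset.sum_range_succ]
    push_cast
    linarith

lemma integral_hf (n : ℕ) :
    ∫ t in (0:ℝ)..(n:ℝ), hf x y t =
      (1 / 2) * Real.log ((x + n) ^ 2 + y ^ 2) - (1 / 2) * Real.log (x ^ 2 + y ^ 2) := by
  have hF : ∀ t : ℝ, HasDerivAt (fun t => (1 / 2) * Real.log ((x + t) ^ 2 + y ^ 2))
      (hf x y t) t := by
    intro t
    have h1 : HasDerivAt (fun t : ℝ => x + t) 1 t := (hasDerivAt_id t).const_add x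
    have h2 : HasDerivAt (fun t : ℝ => (x + t) ^ 2 + y ^ 2) (2 * (x + t)) t := by
      simpa using (h1.pow 2).add_const (y ^ 2)
    have h3 := (h2.log (denom_pos x hy t).ne').const_mul (1 / 2)
    refine h3.congr_deriv (Eq.symm ?_)
    rw [hf]
    field_simp
  rw [intervalIntegral.integral_eq_sub_of_hasDerivAt (fun t _ => hF t)
    ((hf_cont x hy).intervalIntegrable _ _)]
  simp

lemma integral_qf_le (n : ℕ) :
    ∫ t in (0:ℝ)..(n:ℝ), qf x y t ≤ (π / 2 - Real.arctan (x / |y|)) / |y| := by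
  have hb : (0:ℝ) < |y| := abs_pos.mpr hy
  have hF : ∀ t : ℝ, HasDerivAt (fun t => Real.arctan ((x + t) / |y|) / |y|)
      (qf x y t) t := by
    intro t
    have h1 : HasDerivAt (fun t : ℝ => (x + t) / |y|) (1 / |y|) t := by
      simpa using ((hasDerivAt_id t).const_add x).div_const |y|
    have h2 := ((Real.hasDerivAt_arctan ((x + t) / |y|)).comp t h1).div_const |y|
    refine h2.congr_deriv (Eq.symm ?_)
    rw [qf]
    have h3 : (x + t) ^ 2 + y ^ 2 = (1 + ((x + t) / |y|) ^ 2) * (|y| * |y|) := by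
      field_simp [sq_abs]
      rw [sq_abs]
      ring
    rw [h3]
    field_simp
  rw [intervalIntegral.integral_eq_sub_of_hasDerivAt (fun t _ => hF t)
    ((qf_cont x hy).intervalIntegrable _ _)]
  simp only [add_zero]
  rw [div_sub_div_same, div_le_div_iff₀ hb hb]
  have := Real.arctan_lt_pi_div_two ((x + n) / |y|)
  nlinarith

lemma final_elementary :
    hf x y 0 / 2 + ((π / 2 - Real.arctan (x / |y|)) / |y|) / 2 ≤ π / (2 * |y|) := by
  have hb : (0:ℝ) < |y| := abs_pos.mpr hy
  set b := |y| with hbdef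
  set A := Real.arctan (x / b) with hA
  have hD : (0:ℝ) < x ^ 2 + b ^ 2 := by positivity
  have hf0 : hf x y 0 = x / (x ^ 2 + b ^ 2) := by
    rw [hf, add_zero, hbdef, _root_.sq_abs]
  have h1 : x * b / (x ^ 2 + b ^ 2) ≤ π / 2 + A := by
    rcases le_or_gt x 0 with hx | hx
    · have hL : x * b / (x ^ 2 + b ^ 2) ≤ 0 := by
        rw [div_nonpos_iff]
        exact Or.inr ⟨by nlinarith, hD.le⟩
      have hR : -(π / 2) < A := Real.neg_pi_div_two_lt_arctan _
      linarith
    · have hL : x * b / (x ^ 2 + b ^ 2) ≤ 1 / 2 := by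
        rw [div_le_div_iff₀ hD (by norm_num)]
        nlinarith [sq_nonneg (x - b)]
      have hR : 0 ≤ A := by
        rw [hA, ← Real.arctan_zero]
        exact Real.arctan_strictMono.monotone (by positivity)
      have := Real.pi_gt_three
      linarith
  rw [hf0]
  have e1 : x / (x ^ 2 + b ^ 2) = x * b / (x ^ 2 + b ^ 2) / b := by
    field_simp
  rw [e1]
  set L := x * b / (x ^ 2 + b ^ 2) with hL
  have h3 : L / b / 2 + (π / 2 - A) / b / 2 = (L + π / 2 - A) / (2 * b) := by
    field_simp
    ring
  rw [h3]
  have h4 : L + π / 2 - A ≤ π := by linarith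
  exact (div_le_div_iff_of_pos_right (by positivity)).mpr h4

end Estimate

end DigammaAux

end

open DigammaAux in
theorem re_digamma_lower_bound (z : ℂ) (hy : z.im ≠ 0) :
    (deriv Complex.Gamma z / Complex.Gamma z).re ≥
      Real.log ‖z‖ - Real.pi / (2 * |z.im|) := by
  have hz : z ∈ slitPlane := Or.inr hy
  have heq : deriv Complex.Gamma z / Complex.Gamma z = GC z := psiC_eq_GC hz
  rw [heq]
  set x := z.re with hxdef
  set y := z.im with hydef
  have hb : (0:ℝ) < |y| := abs_pos.mpr hy
  -- real parts of the terms
  have hterm_re : ∀ k : ℕ, (dterm k z).re = 1/((k:ℝ)+1) - hf x y k := by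
    intro k
    rw [dterm, Complex.sub_re]
    congr 1
    · rw [show (1/((k:ℂ)+1)) = (((1/((k:ℝ)+1)) : ℝ) : ℂ) by push_cast; rfl,
        Complex.ofReal_re]
    · have hre1 : ((k:ℂ)+z).re = x + (k:ℝ) := by
        simp [add_comm, hxdef]
      have hnsq : Complex.normSq ((k:ℂ)+z) = (x+(k:ℝ))^2 + y^2 := by
        rw [Complex.normSq_apply]
        simp
        ring
      rw [one_div, Complex.inv_re, hre1, hnsq, hf]
  have hsummable := summable_dterm z
  have hre : (GC z).re = -γ + ∑' k : ℕ, (1/((k:ℝ)+1) - hf x y k) := by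
    rw [GC, Complex.add_re]
    have hmap := Complex.reCLM.map_tsum hsummable
    simp only [Complex.reCLM_apply] at hmap
    rw [hmap, tsum_congr hterm_re]
    norm_num
  have hsum_re : Summable (fun k : ℕ => 1/((k:ℝ)+1) - hf x y k) := by
    have h := (hsummable.hasSum.mapL Complex.reCLM).summable
    simp only [Complex.reCLM_apply] at h
    exact h.congr hterm_re
  set L := ∑' k : ℕ, (1/((k:ℝ)+1) - hf x y k) with hL
  have hP : Tendsto (fun n => ∑ k ∈ Finset.range n, (1/((k:ℝ)+1) - hf x y k))
      atTop (𝓝 L) := hsum_re.hasSum.tendsto_sum_nat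
  have hP1 : Tendsto (fun n : ℕ => ∑ k ∈ Finset.range (n+1), (1/((k:ℝ)+1) - hf x y k))
      atTop (𝓝 L) := hP.comp (tendsto_add_atTop_nat 1)
  have hharm : ∀ n : ℕ, ((harmonic n : ℚ) : ℝ) = ∑ k ∈ Finset.range n, 1/((k:ℝ)+1) := by
    intro n
    rw [harmonic]
    push_cast
    apply Finset.sum_congr rfl
    intro k _
    rw [one_div]
  -- the lower bound for the partial sums
  have hlow : ∀ n : ℕ,
      ((harmonic (n+1) : ℚ):ℝ) - (1/2)*Real.log ((x+(n:ℝ))^2+y^2)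
        + (1/2)*Real.log (x^2+y^2) - (hf x y 0 + hf x y n)/2
        - ((π / 2 - Real.arctan (x / |y|)) / |y|)/2
      ≤ ∑ k ∈ Finset.range (n+1), (1/((k:ℝ)+1) - hf x y k) := by
    intro n
    have h1 := sum_hf_le x hy n
    have h2 := integral_hf x hy n
    have h3 := integral_qf_le x hy n
    rw [Finset.sum_sub_distrib, ← hharm (n+1)]
    rw [h2] at h1
    linarith
  -- limits of the pieces
  have h1n : Tendsto (fun n : ℕ => 1/((n:ℝ)+1)) atTop (𝓝 0) :=
    tendsto_one_div_add_atTop_nhds_zero_nat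
  have hA : Tendsto (fun n : ℕ => ((harmonic (n+1) : ℚ):ℝ) - Real.log (((n+1:ℕ):ℝ)))
      atTop (𝓝 γ) := Real.tendsto_harmonic_sub_log.comp (tendsto_add_atTop_nat 1)
  have hu1 : Tendsto (fun n : ℕ => (x+(n:ℝ))/((n:ℝ)+1)) atTop (𝓝 1) := by
    have heq1 : ∀ n : ℕ, 1 + (x-1) * (1/((n:ℝ)+1)) = (x+(n:ℝ))/((n:ℝ)+1) := by
      intro n
      have hn0 : ((n:ℝ)+1) ≠ 0 := by positivity
      field_simp
      ring
    have h := (tendsto_const_nhds (x := (1:ℝ))).add (h1n.const_mul (x-1))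
    simp only [mul_zero, add_zero] at h
    exact Tendsto.congr heq1 (by simpa using h)
  have hu2 : Tendsto (fun n : ℕ => y/((n:ℝ)+1)) atTop (𝓝 0) := by
    have h := h1n.const_mul y
    simp only [mul_zero] at h
    exact Tendsto.congr (fun n => by rw [mul_one_div]) h
  have hu : Tendsto (fun n : ℕ => ((x+(n:ℝ))/((n:ℝ)+1))^2 + (y/((n:ℝ)+1))^2)
      atTop (𝓝 1) := by
    have h := (hu1.pow 2).add (hu2.pow 2)
    simpa using h
  have hlogu : Tendsto (fun n : ℕ =>
      Real.log (((x+(n:ℝ))/((n:ℝ)+1))^2 + (y/((n:ℝ)+1))^2)) atTop (𝓝 0) := by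
    have hcont := (Real.continuousAt_log one_ne_zero).tendsto
    have h := hcont.comp hu
    simpa [Function.comp_def] using h
  have hBeq : ∀ n : ℕ, -(1/2) * Real.log (((x+(n:ℝ))/((n:ℝ)+1))^2 + (y/((n:ℝ)+1))^2)
      = Real.log (((n+1:ℕ):ℝ)) - (1/2)*Real.log ((x+(n:ℝ))^2+y^2) := by
    intro n
    have hn1 : (0:ℝ) < (n:ℝ)+1 := by positivity
    have hden : (0:ℝ) < (x+(n:ℝ))^2 + y^2 := denom_pos x hy (n:ℝ)
    have hrw : ((x+(n:ℝ))/((n:ℝ)+1))^2 + (y/((n:ℝ)+1))^2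
        = ((x+(n:ℝ))^2+y^2)/((n:ℝ)+1)^2 := by
      field_simp
    rw [hrw, Real.log_div hden.ne' (by positivity), Real.log_pow]
    push_cast
    ring
  have hB : Tendsto (fun n : ℕ =>
      Real.log (((n+1:ℕ):ℝ)) - (1/2)*Real.log ((x+(n:ℝ))^2+y^2)) atTop (𝓝 0) := by
    have h := hlogu.const_mul (-(1/2))
    simp only [mul_zero] at h
    exact Tendsto.congr hBeq h
  have hC : Tendsto (fun n : ℕ => hf x y n) atTop (𝓝 0) := by
    have hub : Tendsto (fun n : ℕ => 1/((n:ℝ) - |x|)) atTop (𝓝 0) := by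
      simp only [one_div]
      apply Filter.Tendsto.inv_tendsto_atTop
      have h := tendsto_atTop_add_const_right atTop (-|x|) tendsto_natCast_atTop_atTop
      exact h.congr fun n => by rw [sub_eq_add_neg]
    apply tendsto_of_tendsto_of_tendsto_of_le_of_le' tendsto_const_nhds hub
    · filter_upwards [eventually_ge_atTop ⌈|x|+1⌉₊] with n hn
      have hnx : |x| + 1 ≤ (n:ℝ) := le_trans (Nat.le_ceil _) (Nat.cast_le.mpr hn)
      have h1 : (0:ℝ) < x + n := by
        have := neg_abs_le x
        linarith
      exact div_nonneg h1.le (denom_pos x hy (n:ℝ)).le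
    · filter_upwards [eventually_ge_atTop ⌈|x|+1⌉₊] with n hn
      have hnx : |x| + 1 ≤ (n:ℝ) := le_trans (Nat.le_ceil _) (Nat.cast_le.mpr hn)
      have h1 : (0:ℝ) < x + n := by
        have := neg_abs_le x
        linarith
      have hD := denom_pos x hy (n:ℝ)
      have hstep : hf x y n ≤ 1/(x+(n:ℝ)) := by
        rw [hf, div_le_div_iff₀ hD h1]
        nlinarith [sq_nonneg y]
      have hstep2 : 1/(x+(n:ℝ)) ≤ 1/((n:ℝ) - |x|) := by
        apply one_div_le_one_div_of_le
        · linarith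
        · have := neg_abs_le x
          linarith
      exact hstep.trans hstep2
  -- combine the limits
  have hlim : Tendsto (fun n : ℕ =>
      ((harmonic (n+1) : ℚ):ℝ) - (1/2)*Real.log ((x+(n:ℝ))^2+y^2)
        + (1/2)*Real.log (x^2+y^2) - (hf x y 0 + hf x y n)/2
        - ((π / 2 - Real.arctan (x / |y|)) / |y|)/2) atTop
      (𝓝 (γ + (1/2)*Real.log (x^2+y^2) - hf x y 0/2
        - ((π / 2 - Real.arctan (x / |y|)) / |y|)/2)) := by
    have hsum := (((hA.add hB).add (tendsto_const_nhds
        (x := (1/2)*Real.log (x^2+y^2)))).sub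
        (((tendsto_const_nhds (x := hf x y 0)).add hC).div_const 2)).sub
        (tendsto_const_nhds (x := ((π / 2 - Real.arctan (x / |y|)) / |y|)/2))
    have hval : γ + 0 + (1/2)*Real.log (x^2+y^2) - (hf x y 0 + 0)/2
        - ((π / 2 - Real.arctan (x / |y|)) / |y|)/2
        = γ + (1/2)*Real.log (x^2+y^2) - hf x y 0/2
        - ((π / 2 - Real.arctan (x / |y|)) / |y|)/2 := by ring
    rw [hval] at hsum
    exact Tendsto.congr (fun n => by push_cast; ring) hsum
  have hge : γ + (1/2)*Real.log (x^2+y^2) - hf x y 0/2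
      - ((π / 2 - Real.arctan (x / |y|)) / |y|)/2 ≤ L :=
    le_of_tendsto_of_tendsto' hlim hP1 hlow
  have hfin := final_elementary x hy
  have hlogabs : Real.log ‖z‖ = (1/2)*Real.log (x^2+y^2) := by
    rw [Complex.norm_def, Real.log_sqrt (Complex.normSq_nonneg z), Complex.normSq_apply]
    rw [show z.re*z.re + z.im*z.im = x^2+y^2 by rw [← hxdef, ← hydef]; ring]
    ring
  rw [ge_iff_le, hre, hlogabs]
  linarith
end

section
/- For every real σ > 1 and every integer N ≥ 3, the sum over primes p > N of (log p)/(p^σ − 1) is at most N/(N^σ − 1) · ( (log N)/(σ − 1) + 1/(σ − 1)² ). -/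
open Real Set

noncomputable def Faux (σ x : ℝ) : ℝ := x ^ (1-σ) * (Real.log x / (σ-1) + 1/(σ-1)^2)

noncomputable def Gaux (σ x : ℝ) : ℝ := Real.log x * x ^ (-σ)

lemma hasDerivAt_Faux (σ : ℝ) (hσ : 1 < σ) {x : ℝ} (hx : 0 < x) :
    HasDerivAt (Faux σ) (-(Gaux σ x)) x := by
  have hσ1 : σ - 1 ≠ 0 := sub_ne_zero.mpr (ne_of_gt hσ)
  have h1 : HasDerivAt (fun x : ℝ => x ^ (1-σ)) ((1-σ) * x ^ (1-σ-1)) x :=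
    Real.hasDerivAt_rpow_const (Or.inl hx.ne')
  have h2 : HasDerivAt (fun x : ℝ => Real.log x / (σ-1) + 1/(σ-1)^2)
      (x⁻¹ / (σ - 1)) x := ((Real.hasDerivAt_log hx.ne').div_const _).add_const _
  have h3 : HasDerivAt (fun y : ℝ => y ^ (1-σ) * (Real.log y / (σ-1) + 1/(σ-1)^2)) _ x := h1.mul h2
  convert h3 using 1
  · rfl
  have e1 : x ^ (1-σ-1) = x ^ (-σ) := by ring_nf
  have e2 : x ^ (1-σ) = x ^ (-σ) * x := by
    rw [show (1-σ) = -σ + 1 by ring, Real.rpow_add hx, Real.rpow_one]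
  rw [Gaux, e1, e2]
  field_simp
  ring

lemma hasDerivAt_Gaux (σ : ℝ) {x : ℝ} (hx : 0 < x) :
    HasDerivAt (Gaux σ) (x⁻¹ * x ^ (-σ) + Real.log x * (-σ * x ^ (-σ-1))) x :=
  (Real.hasDerivAt_log hx.ne').mul (Real.hasDerivAt_rpow_const (Or.inl hx.ne'))

lemma gaux_anti (σ : ℝ) (hσ : 1 < σ) : AntitoneOn (Gaux σ) (Set.Ici 3) := by
  have hcont : ContinuousOn (Gaux σ) (Set.Ici 3) := by
    intro x hx
    have hx0 : (0:ℝ) < x := lt_of_lt_of_le (by norm_num) hx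
    exact ((hasDerivAt_Gaux σ hx0).differentiableAt.continuousAt).continuousWithinAt
  have hdiff : DifferentiableOn ℝ (Gaux σ) (interior (Set.Ici 3)) := by
    intro x hx
    rw [interior_Ici] at hx
    have hx0 : (0:ℝ) < x := lt_trans (by norm_num) hx
    exact (hasDerivAt_Gaux σ hx0).differentiableAt.differentiableWithinAt
  apply antitoneOn_of_deriv_nonpos (convex_Ici 3) hcont hdiff
  intro x hx
  rw [interior_Ici] at hx
  have hx3 : (3:ℝ) < x := hx
  have hx0 : (0:ℝ) < x := by linarith
  rw [(hasDerivAt_Gaux σ hx0).deriv]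
  have e1 : x ^ (-σ-1) = x ^ (-σ) * x⁻¹ := by
    rw [show (-σ-1) = -σ + (-1) by ring, Real.rpow_add hx0, Real.rpow_neg_one]
  have hlog : 1 ≤ Real.log x := by
    rw [Real.le_log_iff_exp_le hx0]
    calc Real.exp 1 ≤ 2.7182818286 := Real.exp_one_lt_d9.le
    _ ≤ x := by linarith
  have hσlog : 1 ≤ σ * Real.log x := by nlinarith
  have hp : 0 < x ^ (-σ) := Real.rpow_pos_of_pos hx0 _
  rw [e1]
  have : x⁻¹ * x ^ (-σ) + Real.log x * (-σ * (x ^ (-σ) * x⁻¹))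
      = (x ^ (-σ) * x⁻¹) * (1 - σ * Real.log x) := by ring
  rw [this]
  apply mul_nonpos_of_nonneg_of_nonpos
  · positivity
  · linarith

lemma gaux_nonneg (σ : ℝ) {x : ℝ} (hx : (1:ℝ) ≤ x) : 0 ≤ Gaux σ x := by
  have : 0 ≤ Real.log x := Real.log_nonneg hx
  have : 0 ≤ x ^ (-σ) := Real.rpow_nonneg (by linarith) _
  unfold Gaux; positivity

lemma faux_nonneg (σ : ℝ) (hσ : 1 < σ) {x : ℝ} (hx : (1:ℝ) ≤ x) : 0 ≤ Faux σ x := by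
  have h0 : (0:ℝ) < x := by linarith
  have h1 : 0 ≤ Real.log x := Real.log_nonneg hx
  have h2 : 0 ≤ x ^ (1-σ) := Real.rpow_nonneg (by linarith) _
  have h3 : (0:ℝ) < σ - 1 := by linarith
  unfold Faux
  have : 0 ≤ Real.log x / (σ-1) + 1/(σ-1)^2 := by positivity
  positivity

/-- step: for x ≥ 3 (x natural-like real), Gaux σ (x+1) ≤ Faux σ x - Faux σ (x+1) -/
lemma faux_step (σ : ℝ) (hσ : 1 < σ) {x : ℝ} (hx : (3:ℝ) ≤ x) :
    Gaux σ (x+1) ≤ Faux σ x - Faux σ (x+1) := by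
  have hx0 : (0:ℝ) < x := by linarith
  have hlt : x < x + 1 := by linarith
  have hcont : ContinuousOn (Faux σ) (Set.Icc x (x+1)) := by
    intro y hy
    have hy0 : (0:ℝ) < y := by have := hy.1; linarith
    exact ((hasDerivAt_Faux σ hσ hy0).differentiableAt.continuousAt).continuousWithinAt
  have hderiv : ∀ y ∈ Set.Ioo x (x+1), HasDerivAt (Faux σ) (-(Gaux σ y)) y := by
    intro y hy
    have hy0 : (0:ℝ) < y := by have := hy.1; linarith
    exact hasDerivAt_Faux σ hσ hy0
  obtain ⟨c, hc, hceq⟩ := exists_hasDerivAt_eq_slope (Faux σ) (fun y => -(Gaux σ y)) hlt hcont hderiv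
  have hslope : -(Gaux σ c) = Faux σ (x+1) - Faux σ x := by
    rw [hceq]; field_simp; ring
  have hanti := gaux_anti σ hσ (show c ∈ Set.Ici (3:ℝ) from le_of_lt (lt_of_le_of_lt hx hc.1))
    (show x + 1 ∈ Set.Ici (3:ℝ) by simp; linarith) hc.2.le
  linarith

lemma faux_partial (σ : ℝ) (hσ : 1 < σ) (N : ℕ) (hN : 3 ≤ N) (m : ℕ) :
    ∑ k ∈ Finset.range m, Gaux σ ((N+1+k : ℕ) : ℝ) ≤ Faux σ N := by
  have key : ∑ k ∈ Finset.range m, Gaux σ ((N+1+k : ℕ) : ℝ)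
      ≤ ∑ k ∈ Finset.range m, (Faux σ ((N+k : ℕ) : ℝ) - Faux σ ((N+k+1 : ℕ) : ℝ)) := by
    apply Finset.sum_le_sum
    intro k _
    have h3 : (3:ℝ) ≤ ((N+k : ℕ) : ℝ) := by
      push_cast
      have : (3:ℝ) ≤ (N:ℝ) := by exact_mod_cast hN
      have : (0:ℝ) ≤ (k:ℝ) := Nat.cast_nonneg k
      linarith
    have := faux_step σ hσ h3
    have e1 : ((N+1+k : ℕ) : ℝ) = ((N+k : ℕ) : ℝ) + 1 := by push_cast; ring
    have e2 : ((N+k+1 : ℕ) : ℝ) = ((N+k : ℕ) : ℝ) + 1 := by push_cast; ring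
    rw [e1, e2]
    exact this
  have tel : ∑ k ∈ Finset.range m, (Faux σ ((N+k : ℕ) : ℝ) - Faux σ ((N+k+1 : ℕ) : ℝ))
      = Faux σ ((N+0 : ℕ) : ℝ) - Faux σ ((N+m : ℕ) : ℝ) := by
    exact Finset.sum_range_sub' (fun i => Faux σ ((N+i : ℕ) : ℝ)) m
  have hnn : 0 ≤ Faux σ ((N+m : ℕ) : ℝ) := by
    apply faux_nonneg σ hσ
    push_cast
    have : (3:ℝ) ≤ (N:ℝ) := by exact_mod_cast hN
    have : (0:ℝ) ≤ (m:ℝ) := Nat.cast_nonneg m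
    linarith
  have : ((N+0 : ℕ) : ℝ) = (N:ℝ) := by norm_num
  rw [tel, this] at key
  linarith

theorem prime_tail_sum_bound (σ : ℝ) (hσ : 1 < σ) (N : ℕ) (hN : 3 ≤ N) :
    ∑' p : {p : ℕ // p.Prime ∧ N < p}, Real.log p / ((p : ℝ) ^ σ - 1) ≤
      (N : ℝ) / ((N : ℝ) ^ σ - 1) *
        (Real.log N / (σ - 1) + 1 / (σ - 1) ^ 2) := by
  have hN3 : (3:ℝ) ≤ (N:ℝ) := by exact_mod_cast hN
  have hN1 : (1:ℝ) < (N:ℝ) := by linarith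
  have hNσ : (1:ℝ) < (N:ℝ) ^ σ := Real.one_lt_rpow_iff_of_pos (by linarith) |>.mpr
    (Or.inl ⟨hN1, by linarith⟩)
  have hNσ0 : (0:ℝ) < (N:ℝ) ^ σ - 1 := by linarith
  set C : ℝ := (N:ℝ) ^ σ / ((N:ℝ) ^ σ - 1) with hC
  have hC0 : 0 < C := by positivity
  -- the majorant sequence
  set h : ℕ → ℝ := fun k => C * Gaux σ ((N+1+k : ℕ) : ℝ) with hh
  have hnn : ∀ k, 0 ≤ h k := by
    intro k
    apply mul_nonneg hC0.le
    apply gaux_nonneg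
    push_cast
    linarith [Nat.cast_nonneg (k : ℕ) (α := ℝ)]
  have hpartial : ∀ m, ∑ k ∈ Finset.range m, h k ≤ C * Faux σ N := by
    intro m
    rw [hh, ← Finset.mul_sum]
    exact mul_le_mul_of_nonneg_left (faux_partial σ hσ N hN m) hC0.le
  have hsum : Summable h := summable_of_sum_range_le hnn hpartial
  have htsum : ∑' k, h k ≤ C * Faux σ N := Real.tsum_le_of_sum_range_le hnn hpartial
  -- injection from primes > N
  set e : {p : ℕ // p.Prime ∧ N < p} → ℕ := fun p => p.1 - (N+1) with he
  have hinj : Function.Injective e := by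
    intro p q hpq
    have hp : N + 1 ≤ p.1 := p.2.2
    have hq : N + 1 ≤ q.1 := q.2.2
    simp only [he] at hpq
    ext
    omega
  have hterm : ∀ p : {p : ℕ // p.Prime ∧ N < p},
      Real.log p / ((p : ℝ) ^ σ - 1) ≤ h (e p) := by
    intro p
    have hpN : N + 1 ≤ p.1 := p.2.2
    have hpe : (N + 1 + e p : ℕ) = p.1 := by simp [he]; omega
    have hpR : (N:ℝ) ≤ (p.1:ℝ) := by exact_mod_cast le_of_lt p.2.2
    have hp1 : (1:ℝ) < (p.1:ℝ) := by linarith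
    have hpσ : (N:ℝ) ^ σ ≤ (p.1:ℝ) ^ σ :=
      Real.rpow_le_rpow (by linarith) hpR (by linarith)
    have hpσ1 : (1:ℝ) < (p.1:ℝ) ^ σ := lt_of_lt_of_le hNσ hpσ
    have hpσ0 : (0:ℝ) < (p.1:ℝ) ^ σ := by linarith
    have hlogp : 0 ≤ Real.log (p.1:ℝ) := Real.log_nonneg hp1.le
    rw [hh]
    simp only [hpe]
    rw [Gaux]
    have hrneg : (p.1:ℝ) ^ (-σ) = ((p.1:ℝ) ^ σ)⁻¹ := by
      rw [Real.rpow_neg (by linarith)]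
    rw [hrneg]
    rw [div_eq_mul_inv]
    have key : ((p.1:ℝ) ^ σ - 1)⁻¹ ≤ C * ((p.1:ℝ) ^ σ)⁻¹ := by
      have h1 : C * ((p.1:ℝ) ^ σ)⁻¹ = (N:ℝ)^σ / (((N:ℝ)^σ - 1) * (p.1:ℝ)^σ) := by
        rw [hC]; field_simp
      rw [h1, inv_eq_one_div, div_le_div_iff₀ (by linarith) (by positivity)]
      nlinarith [hpσ]
    calc Real.log (p.1:ℝ) * ((p.1:ℝ) ^ σ - 1)⁻¹
        ≤ Real.log (p.1:ℝ) * (C * ((p.1:ℝ) ^ σ)⁻¹) := by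
          apply mul_le_mul_of_nonneg_left key hlogp
      _ = C * (Real.log (p.1:ℝ) * ((p.1:ℝ) ^ σ)⁻¹) := by ring
  have hfs : Summable (fun p : {p : ℕ // p.Prime ∧ N < p} =>
      Real.log p / ((p : ℝ) ^ σ - 1)) := by
    apply Summable.of_nonneg_of_le _ hterm (hsum.comp_injective hinj)
    intro p
    have hpR : (1:ℝ) < (p.1:ℝ) := by
      have : N + 1 ≤ p.1 := p.2.2
      have : (N:ℝ) < (p.1:ℝ) := by exact_mod_cast p.2.2
      linarith
    have hpσ1 : (1:ℝ) < (p.1:ℝ) ^ σ :=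
      Real.one_lt_rpow_iff_of_pos (by linarith) |>.mpr (Or.inl ⟨hpR, by linarith⟩)
    have h2 : (0:ℝ) < (p.1:ℝ) ^ σ - 1 := by linarith
    exact div_nonneg (Real.log_nonneg hpR.le) h2.le
  have main : ∑' p : {p : ℕ // p.Prime ∧ N < p}, Real.log p / ((p : ℝ) ^ σ - 1)
      ≤ ∑' k, h k := by
    apply Summable.tsum_le_tsum_of_inj e hinj (fun c _ => hnn c) hterm hfs hsum
  have final : C * Faux σ N = (N : ℝ) / ((N : ℝ) ^ σ - 1) *
      (Real.log N / (σ - 1) + 1 / (σ - 1) ^ 2) := by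
    have hNN : (N:ℝ) ^ σ * (N:ℝ) ^ (1-σ) = (N:ℝ) := by
      rw [← Real.rpow_add (by linarith), show σ + (1-σ) = 1 by ring, Real.rpow_one]
    calc C * Faux σ (N:ℝ)
        = ((N:ℝ)^σ * (N:ℝ)^(1-σ)) / ((N:ℝ)^σ - 1) *
            (Real.log N / (σ-1) + 1/(σ-1)^2) := by rw [Faux, hC]; ring
      _ = _ := by rw [hNN]
  linarith [le_trans main htsum, final.ge]
end

section
/- For all positive reals a and b, (1/(2π)) ∫₀^{2π} log|a + b·cos θ| dθ equals log((a + √(a² − b²))/2) if a > b, and equals log(b/2) if a ≤ b. -/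
open Real intervalIntegral

open MeasureTheory Set

/-- `log` is interval integrable on `[0,1]` (improper at 0). -/
lemma II_log01 : IntervalIntegrable Real.log volume 0 1 := by
  have hrpow : IntervalIntegrable (fun x : ℝ => 2 * x ^ (-(1/2) : ℝ)) volume 0 1 :=
    (intervalIntegral.intervalIntegrable_rpow' (by norm_num)).const_mul 2
  refine hrpow.mono_fun' Real.measurable_log.aestronglyMeasurable ?_
  rw [Filter.EventuallyLE, ae_restrict_iff' measurableSet_uIoc]
  refine Filter.Eventually.of_forall (fun x hx => ?_)
  rw [Set.uIoc_of_le (by norm_num : (0:ℝ) ≤ 1)] at hx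
  obtain ⟨hx0, hx1⟩ := hx
  have hlog : Real.log x ≤ 0 := Real.log_nonpos (le_of_lt hx0) hx1
  have h1 : -Real.log x ≤ 2 * x ^ (-(1/2) : ℝ) := by
    have h2 : Real.log (x ^ (-(1/2) : ℝ)) ≤ x ^ (-(1/2) : ℝ) - 1 :=
      Real.log_le_sub_one_of_pos (Real.rpow_pos_of_pos hx0 _)
    rw [Real.log_rpow hx0] at h2
    nlinarith [Real.rpow_pos_of_pos hx0 (-(1/2) : ℝ)]
  simp only [Real.norm_eq_abs, abs_of_nonpos hlog]
  exact h1

/-- `log` is interval integrable on every interval. -/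
lemma II_log : ∀ u v : ℝ, IntervalIntegrable Real.log volume u v := by
  have hneg : IntervalIntegrable Real.log volume (-1) 0 := by
    have h := II_log01.comp_mul_left (c := -1)
    have : (fun x : ℝ => Real.log (-1 * x)) = Real.log := by
      funext x; rw [neg_one_mul, Real.log_neg_eq_log]
    rw [this] at h
    simpa using h.symm
  intro u v
  rcases exists_nat_gt (max (max |u| |v|) 1) with ⟨n, hn⟩
  have hn1 : (1:ℝ) < n := lt_of_le_of_lt (le_max_right _ _) hn
  have hu : |u| ≤ n := le_of_lt (lt_of_le_of_lt (le_trans (le_max_left _ _) (le_max_left _ _)) hn)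
  have hv : |v| ≤ n := le_of_lt (lt_of_le_of_lt (le_trans (le_max_right _ _) (le_max_left _ _)) hn)
  have hbig : IntervalIntegrable Real.log volume (-(n:ℝ)) n := by
    have h1 : IntervalIntegrable Real.log volume 1 n :=
      intervalIntegrable_log (by
        intro h
        rw [Set.uIcc_of_le (le_of_lt hn1)] at h
        exact absurd h.1 (by norm_num))
    have h2 : IntervalIntegrable Real.log volume (-(n:ℝ)) 0 := by
      have h := (II_log01.trans h1).comp_mul_left (c := -1)
      have heq : (fun x : ℝ => Real.log (-1 * x)) = Real.log := by
        funext x; rw [neg_one_mul, Real.log_neg_eq_log]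
      rw [heq] at h
      have hd : (n:ℝ) / -1 = -n := by ring
      rw [hd] at h
      simpa using h.symm
    exact h2.trans (II_log01.trans h1)
  refine hbig.mono_set ?_
  rw [Set.uIcc_of_le (by linarith : -(n:ℝ) ≤ n)]
  intro x hx
  have := Set.mem_uIcc.mp hx
  constructor
  · rcases this with ⟨h1,_⟩|⟨h1,_⟩ <;> [skip; skip]
    · have := abs_le.mp hu; linarith
    · have := abs_le.mp hv; linarith
  · rcases this with ⟨_,h2⟩|⟨_,h2⟩
    · have := abs_le.mp hv; linarith
    · have := abs_le.mp hu; linarith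

noncomputable def LS : ℝ → ℝ := fun x => Real.log (Real.sin x)

lemma LS_per : Function.Periodic LS π := by
  intro x; simp only [LS, Real.sin_add_pi, Real.log_neg_eq_log]

lemma LS_even : ∀ x : ℝ, LS (-x) = LS x := by
  intro x; simp only [LS, Real.sin_neg, Real.log_neg_eq_log]

lemma LS_base : IntervalIntegrable LS volume (-(π/2)) (π/2) := by
  have hmaj : IntervalIntegrable (fun x : ℝ => |Real.log x| + Real.log 2) volume (-(π/2)) (π/2) :=
    ((II_log _ _).abs).add intervalIntegrable_const
  refine hmaj.mono_fun' ?_ ?_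
  · exact (Real.measurable_log.comp Real.measurable_sin).aestronglyMeasurable
  · rw [Filter.EventuallyLE, ae_restrict_iff' measurableSet_uIoc]
    have hne : ∀ᵐ x : ℝ ∂volume, x ≠ 0 := by
      have := Set.countable_singleton (0:ℝ)
      have h := this.ae_notMem (μ := volume)
      filter_upwards [h] with x hx
      simpa using hx
    filter_upwards [hne] with x hx0 hx
    rw [Set.uIoc_of_le (by linarith [Real.pi_pos] : -(π/2) ≤ (π/2))] at hx
    have hxabs : |x| ≤ π / 2 := abs_le.mpr ⟨le_of_lt hx.1, hx.2⟩
    have hax : 0 < |x| := abs_pos.mpr hx0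
    have hs1 : |Real.sin x| ≤ |x| := Real.abs_sin_le_abs
    have hs2 : 2 / π * |x| ≤ |Real.sin x| := Real.mul_abs_le_abs_sin hxabs
    have hspos : 0 < |Real.sin x| := lt_of_lt_of_le (by positivity) hs2
    have hhalf : |x| / 2 ≤ |Real.sin x| := by
      refine le_trans ?_ hs2
      have h24 : (1:ℝ)/2 ≤ 2/π := by
        rw [div_le_div_iff₀ (by norm_num) Real.pi_pos]
        nlinarith [Real.pi_le_four]
      calc |x|/2 = 1/2 * |x| := by ring
      _ ≤ 2/π * |x| := mul_le_mul_of_nonneg_right h24 (abs_nonneg x)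
    -- LS x = log |sin x|
    have hLS : LS x = Real.log |Real.sin x| := by rw [LS, Real.log_abs]
    have hup : Real.log |Real.sin x| ≤ Real.log |x| := Real.log_le_log hspos hs1
    have hlow : Real.log |x| - Real.log 2 ≤ Real.log |Real.sin x| := by
      have := Real.log_le_log (by positivity : (0:ℝ) < |x|/2) hhalf
      rwa [Real.log_div (ne_of_gt hax) (by norm_num)] at this
    simp only [Real.norm_eq_abs, hLS]
    rw [abs_le]
    constructor
    · have : -(|Real.log x| + Real.log 2) ≤ Real.log |x| - Real.log 2 := by
        rw [← Real.log_abs x]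
        have := neg_abs_le (Real.log |x|)
        linarith
      linarith
    · have : Real.log |x| ≤ |Real.log x| := by
        rw [← Real.log_abs x]; exact le_abs_self _
      have h2 : (0:ℝ) ≤ Real.log 2 := Real.log_nonneg (by norm_num)
      linarith

lemma LS_shift : ∀ (k : ℤ) (u v : ℝ), u = -(π/2) + k*π → v = u + π →
    IntervalIntegrable LS volume u v := by
  rintro k u v rfl rfl
  have h := LS_base.comp_sub_right ((k:ℝ)*π)
  have heq : (fun x => LS (x - (k:ℝ)*π)) = LS := by
    funext x
    have := (LS_per.int_mul k).sub_eq (x := x)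
    simpa [mul_comm] using this
  rw [heq] at h
  rw [show -(π/2) + (k:ℝ)*π = -(π/2) + (k:ℝ)*π + π - π by ring] at h
  convert h using 1 <;> ring

lemma LS_int : ∀ u v : ℝ, IntervalIntegrable LS volume u v := by
  have claim2 : ∀ n : ℕ, IntervalIntegrable LS volume (-(π/2) - n*π) (-(π/2) + n*π) := by
    intro n
    induction n with
    | zero => simp
    | succ n ih =>
      have l : IntervalIntegrable LS volume (-(π/2) - (n+1:ℕ)*π) (-(π/2) - n*π) :=
        LS_shift (-(n+1:ℤ)) _ _ (by push_cast; ring) (by push_cast; ring)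
      have r : IntervalIntegrable LS volume (-(π/2) + n*π) (-(π/2) + (n+1:ℕ)*π) :=
        LS_shift (n:ℤ) _ _ (by push_cast; ring) (by push_cast; ring)
      exact (l.trans ih).trans r
  intro u v
  obtain ⟨n, hn⟩ := exists_nat_gt (max |u| |v|)
  have hpi : (1:ℝ) ≤ π := by linarith [Real.pi_gt_three]
  have hnπ : max |u| |v| ≤ n*π := by
    calc max |u| |v| ≤ (n:ℝ) := le_of_lt hn
    _ = n * 1 := by ring
    _ ≤ n * π := by
        apply mul_le_mul_of_nonneg_left hpi (Nat.cast_nonneg n)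
  have hbig := claim2 (n+1)
  push_cast at hbig
  refine hbig.mono_set ?_
  have hu := abs_le.mp (le_trans (le_max_left |u| |v|) hnπ)
  have hv := abs_le.mp (le_trans (le_max_right |u| |v|) hnπ)
  have hpi2 : 0 < π/2 := by linarith [Real.pi_pos]
  rw [Set.uIcc_of_le (by linarith [mul_nonneg (Nat.cast_nonneg (α := ℝ) n) (le_of_lt Real.pi_pos)] : -(π/2) - ((n:ℝ)+1)*π ≤ -(π/2) + ((n:ℝ)+1)*π)]
  intro x hx
  have hx' := Set.mem_uIcc.mp hx
  constructor
  · rcases hx' with ⟨h1,_⟩|⟨h1,_⟩ <;> [nlinarith [hu.1]; nlinarith [hv.1]]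
  · rcases hx' with ⟨_,h2⟩|⟨_,h2⟩ <;> [nlinarith [hv.2]; nlinarith [hu.2]]

lemma LS_comp (c d : ℝ) (hc : c ≠ 0) (u v : ℝ) :
    IntervalIntegrable (fun x => LS (c*x + d)) volume u v := by
  have h1 := (LS_int (c*u+d) (c*v+d)).comp_add_right d
  rw [show c*u+d-d = c*u by ring, show c*v+d-d = c*v by ring] at h1
  have h2 := h1.comp_mul_left (c := c)
  rw [show c*u/c = u by field_simp, show c*v/c = v by field_simp] at h2
  exact h2

lemma LS_val : ∫ x in (0:ℝ)..π, LS x = -(π * Real.log 2) := by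
  set A := ∫ x in (0:ℝ)..(π/2), LS x with hA
  have hrefl : ∫ x in (π/2:ℝ)..π, LS x = A := by
    have h := intervalIntegral.integral_comp_sub_left (a := (0:ℝ)) (b := π/2) LS π
    have heq : (fun x => LS (π - x)) = LS := by
      funext x; simp only [LS, Real.sin_pi_sub]
    rw [heq] at h
    rw [show π - π/2 = π/2 by ring, sub_zero] at h
    exact h.symm
  have hsplit : ∫ x in (0:ℝ)..π, LS x = 2 * A := by
    rw [← intervalIntegral.integral_add_adjacent_intervals (LS_int 0 (π/2)) (LS_int (π/2) π),
      hrefl]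
    ring
  have hcos : ∫ x in (0:ℝ)..(π/2), LS (-1*x + π/2) = A := by
    have h := intervalIntegral.integral_comp_sub_left (a := (0:ℝ)) (b := π/2) LS (π/2)
    rw [show π/2 - π/2 = 0 by ring, sub_zero] at h
    rw [hA, ← h]
    apply intervalIntegral.integral_congr
    intro x _
    show LS (-1*x + π/2) = LS (π/2 - x)
    rw [show -1*x + π/2 = π/2 - x by ring]
  have hdouble : (2:ℝ) * ∫ x in (0:ℝ)..(π/2), LS (2*x) = ∫ x in (0:ℝ)..π, LS x := by
    have h := intervalIntegral.mul_integral_comp_mul_left (a := (0:ℝ)) (b := π/2) (f := LS) 2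
    rwa [show (2:ℝ) * (π/2) = π by ring, mul_zero] at h
  have hkey : ∫ x in (0:ℝ)..(π/2), LS (2*x)
      = ∫ x in (0:ℝ)..(π/2), (Real.log 2 + LS x + LS (-1*x + π/2)) := by
    apply intervalIntegral.integral_congr_ae
    have hne : ∀ᵐ x : ℝ ∂volume, x ≠ π/2 := by
      have h := (Set.countable_singleton (π/2:ℝ)).ae_notMem (μ := volume)
      filter_upwards [h] with x hx
      simpa using hx
    filter_upwards [hne] with x hx2 hx
    rw [Set.uIoc_of_le (by linarith [Real.pi_pos] : (0:ℝ) ≤ π/2)] at hx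
    have hx0 : 0 < x := hx.1
    have hxlt : x < π/2 := lt_of_le_of_ne hx.2 hx2
    have hsin : 0 < Real.sin x :=
      Real.sin_pos_of_pos_of_lt_pi hx0 (by linarith [Real.pi_pos])
    have hcosx : 0 < Real.cos x := Real.cos_pos_of_mem_Ioo ⟨by linarith [Real.pi_pos], hxlt⟩
    have h3 : LS (-1*x + π/2) = Real.log (Real.cos x) := by
      rw [show -1*x + π/2 = π/2 - x by ring]
      simp only [LS, Real.sin_pi_div_two_sub]
    rw [h3]
    show Real.log (Real.sin (2*x)) = Real.log 2 + Real.log (Real.sin x) + Real.log (Real.cos x)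
    rw [Real.sin_two_mul, Real.log_mul (by positivity) (ne_of_gt hcosx),
      Real.log_mul (by norm_num) (ne_of_gt hsin)]
  have hint3 : IntervalIntegrable (fun x => LS (-1*x + π/2)) volume 0 (π/2) :=
    LS_comp (-1) (π/2) (by norm_num) 0 (π/2)
  have hsum : ∫ x in (0:ℝ)..(π/2), (Real.log 2 + LS x + LS (-1*x + π/2))
      = (π/2) * Real.log 2 + A + A := by
    rw [intervalIntegral.integral_add (intervalIntegrable_const.add (LS_int 0 (π/2))) hint3,
      intervalIntegral.integral_add intervalIntegrable_const (LS_int 0 (π/2)),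
      intervalIntegral.integral_const, hcos]
    rw [smul_eq_mul, sub_zero, ← hA]
  have : (2:ℝ) * A = π * Real.log 2 + 4 * A := by
    have := hdouble
    rw [hkey, hsum, hsplit] at this
    linarith
  have hAval : A = -(π/2 * Real.log 2) := by linarith
  rw [hsplit, hAval]; ring

lemma LS_period_int (t : ℝ) : ∫ x in t..(t+π), LS x = -(π * Real.log 2) := by
  rw [LS_per.intervalIntegral_add_eq t 0]
  simpa using LS_val

lemma LS_half (d : ℝ) :
    ∫ θ in (0:ℝ)..(2*π), LS ((1/2)*θ + d) = -(2 * π * Real.log 2) := by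
  have h := intervalIntegral.mul_integral_comp_mul_add (a := (0:ℝ)) (b := 2*π) (f := LS) (1/2) d
  rw [show (1/2:ℝ)*0 + d = d by ring, show (1/2:ℝ)*(2*π) + d = d + π by ring,
    LS_period_int d] at h
  linarith

noncomputable def Gg (r : ℝ) : ℝ := ∫ θ in (0:ℝ)..(2*π), Real.log (1 + 2*r*Real.cos θ + r^2)

lemma Q_pos {r : ℝ} (hr : |r| < 1) (θ : ℝ) : 0 < 1 + 2*r*Real.cos θ + r^2 := by
  have hrc : |r * Real.cos θ| ≤ |r| := by
    rw [abs_mul]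
    exact mul_le_of_le_one_right (abs_nonneg r) (Real.abs_cos_le_one θ)
  have h1 := (abs_le.mp hrc).1
  have h5 : 0 < (1 - |r|)^2 := pow_pos (by linarith) 2
  nlinarith [sq_abs r]

lemma G_cont {r : ℝ} (hr : |r| < 1) :
    Continuous (fun θ => Real.log (1 + 2*r*Real.cos θ + r^2)) := by
  apply Continuous.log
  · exact (continuous_const.add ((continuous_const.mul Real.continuous_cos))).add continuous_const
  · exact fun θ => ne_of_gt (Q_pos hr θ)

lemma G_per (r : ℝ) : Function.Periodic (fun θ => Real.log (1 + 2*r*Real.cos θ + r^2)) (2*π) := by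
  intro x; simp only [Real.cos_periodic x]

lemma G_neg {r : ℝ} (hr : |r| < 1) : Gg (-r) = Gg r := by
  have hr' : |(-r)| < 1 := by rwa [abs_neg]
  have hcomp : (fun θ => Real.log (1 + 2*r*Real.cos (θ + π) + r^2))
      = (fun θ => Real.log (1 + 2*(-r)*Real.cos θ + (-r)^2)) := by
    funext θ; rw [Real.cos_add_pi]; ring_nf
  have h := intervalIntegral.integral_comp_add_right (a := (0:ℝ)) (b := 2*π)
    (fun θ => Real.log (1 + 2*r*Real.cos θ + r^2)) π
  rw [show (0:ℝ) + π = π by ring] at h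
  calc Gg (-r) = ∫ θ in (0:ℝ)..(2*π), Real.log (1 + 2*r*Real.cos (θ + π) + r^2) := by
        rw [Gg, ← hcomp]
  _ = ∫ θ in π..(2*π + π), Real.log (1 + 2*r*Real.cos θ + r^2) := h
  _ = ∫ θ in (0:ℝ)..(2*π), Real.log (1 + 2*r*Real.cos θ + r^2) := by
        have := (G_per r).intervalIntegral_add_eq π 0
        rw [show (2:ℝ)*π + π = π + 2*π by ring, this, zero_add]
  _ = Gg r := rfl

lemma G_sq {r : ℝ} (hr : |r| < 1) : 2 * Gg r = Gg (r^2) := by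
  have hr2 : |(-(r^2))| < 1 := by
    rw [abs_neg, abs_of_nonneg (sq_nonneg r)]
    nlinarith [abs_nonneg r, sq_abs r]
  have hrn : |(-r)| < 1 := by rwa [abs_neg]
  set g : ℝ → ℝ := fun θ => Real.log (1 + 2*(-(r^2))*Real.cos θ + (-(r^2))^2) with hg
  have hsum : Gg r + Gg (-r) = ∫ θ in (0:ℝ)..(2*π), g (2*θ) := by
    rw [Gg, Gg, ← intervalIntegral.integral_add
      ((G_cont hr).intervalIntegrable 0 (2*π)) ((G_cont hrn).intervalIntegrable 0 (2*π))]
    apply intervalIntegral.integral_congr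
    intro θ _
    show Real.log (1 + 2*r*Real.cos θ + r^2) + Real.log (1 + 2*(-r)*Real.cos θ + (-r)^2)
      = g (2*θ)
    rw [hg]
    show _ = Real.log (1 + 2*(-(r^2))*Real.cos (2*θ) + (-(r^2))^2)
    rw [← Real.log_mul (ne_of_gt (Q_pos hr θ)) (ne_of_gt (Q_pos hrn θ))]
    congr 1
    rw [Real.cos_two_mul]
    ring
  have hdouble : 2 * ∫ θ in (0:ℝ)..(2*π), g (2*θ) = ∫ θ in (0:ℝ)..(2*(2*π)), g θ := by
    have h := intervalIntegral.mul_integral_comp_mul_left (a := (0:ℝ)) (b := 2*π) (f := g) 2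
    rwa [mul_zero] at h
  have hsplit : ∫ θ in (0:ℝ)..(2*(2*π)), g θ = 2 * Gg (-(r^2)) := by
    rw [← intervalIntegral.integral_add_adjacent_intervals (a := (0:ℝ)) (b := 2*π) (c := 2*(2*π))
      ((G_cont hr2).intervalIntegrable _ _) ((G_cont hr2).intervalIntegrable _ _)]
    have h2 : ∫ θ in (2*π:ℝ)..(2*(2*π)), g θ = Gg (-(r^2)) := by
      have := (G_per (-(r^2))).intervalIntegral_add_eq (2*π) 0
      rw [show (2:ℝ)*(2*π) = 2*π + 2*π by ring]
      rw [show ((2:ℝ)*π + 2*π) = 2*π + 2*π by ring] at this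
      rw [this, zero_add]
      rfl
    rw [h2]
    have h1 : ∫ θ in (0:ℝ)..(2*π), g θ = Gg (-(r^2)) := rfl
    rw [h1]; ring
  have hGneg : Gg (-r) = Gg r := G_neg hr
  have hGneg2 : Gg (-(r^2)) = Gg (r^2) := G_neg (by rwa [abs_neg] at hr2)
  rw [hGneg] at hsum
  linarith [hsum, hdouble, hsplit, hGneg2]

lemma G_bound {r : ℝ} (hr : |r| ≤ 1/2) : |Gg r| ≤ 2*π*Real.log 4 := by
  have hr1 : |r| < 1 := lt_of_le_of_lt hr (by norm_num)
  have h := intervalIntegral.norm_integral_le_of_norm_le_const (C := Real.log 4)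
    (f := fun θ => Real.log (1 + 2*r*Real.cos θ + r^2)) (a := 0) (b := 2*π) ?_
  · rw [Real.norm_eq_abs] at h
    have : |2*π - 0| = 2*π := by
      rw [sub_zero, abs_of_pos (by positivity)]
    rw [this] at h
    calc |Gg r| ≤ Real.log 4 * (2*π) := h
    _ = 2*π*Real.log 4 := by ring
  · intro θ _
    have hQ := Q_pos hr1 θ
    have hrc : |r * Real.cos θ| ≤ |r| := by
      rw [abs_mul]
      exact mul_le_of_le_one_right (abs_nonneg r) (Real.abs_cos_le_one θ)
    have h1 := (abs_le.mp hrc).1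
    have h2 := (abs_le.mp hrc).2
    have hQu : 1 + 2*r*Real.cos θ + r^2 ≤ 4 := by nlinarith [sq_abs r]
    have hQl : (1:ℝ)/4 ≤ 1 + 2*r*Real.cos θ + r^2 := by nlinarith [sq_abs r, sq_nonneg (1 - |r|)]
    rw [Real.norm_eq_abs, abs_le]
    constructor
    · have := Real.log_le_log (by norm_num : (0:ℝ) < 1/4) hQl
      rw [show (1:ℝ)/4 = 4⁻¹ by norm_num, Real.log_inv] at this
      linarith
    · exact Real.log_le_log hQ hQu

lemma G_small : ∀ r : ℝ, |r| ≤ 1/2 → Gg r = 0 := by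
  have key : ∀ n : ℕ, ∀ r : ℝ, |r| ≤ 1/2 → |Gg r| ≤ 2*π*Real.log 4 / 2^n := by
    intro n
    induction n with
    | zero => intro r hr; simpa using G_bound hr
    | succ n ih =>
      intro r hr
      have hr1 : |r| < 1 := lt_of_le_of_lt hr (by norm_num)
      have hsq := G_sq hr1
      have hr2 : |r^2| ≤ 1/2 := by
        rw [abs_of_nonneg (sq_nonneg r), ← sq_abs]
        nlinarith [abs_nonneg r]
      have := ih (r^2) hr2
      rw [← hsq] at this
      rw [abs_mul, abs_two] at this
      rw [pow_succ]
      calc |Gg r| = 2 * |Gg r| / 2 := by ring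
      _ ≤ (2*π*Real.log 4 / 2^n) / 2 := by linarith
      _ = 2*π*Real.log 4 / (2^n * 2) := by ring
  intro r hr
  by_contra hne
  have hpos : 0 < |Gg r| := abs_pos.mpr hne
  have hC : (0:ℝ) < 2*π*Real.log 4 := by
    have : (0:ℝ) < Real.log 4 := Real.log_pos (by norm_num)
    positivity
  obtain ⟨n, hn⟩ := exists_pow_lt_of_lt_one (div_pos hpos hC) (by norm_num : (1:ℝ)/2 < 1)
  have h1 := key n r hr
  have h2 : ((1:ℝ)/2)^n = 1/2^n := by
    rw [div_pow, one_pow]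
  rw [h2, div_lt_div_iff₀ (by positivity) hC] at hn
  rw [le_div_iff₀ (by positivity : (0:ℝ) < 2^n)] at h1
  linarith

lemma G_zero {r : ℝ} (hr : |r| < 1) : Gg r = 0 := by
  have iter : ∀ n : ℕ, Gg r = Gg (r^(2^n)) / 2^n := by
    intro n
    induction n with
    | zero => simp
    | succ n ih =>
      have habs : |r^(2^n)| < 1 := by
        rw [abs_pow]
        exact pow_lt_one₀ (abs_nonneg r) hr (by positivity)
      have hsq := G_sq habs
      rw [← pow_mul, show 2^n * 2 = 2^(n+1) by rw [pow_succ]] at hsq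
      rw [ih, ← hsq]
      rw [pow_succ]
      ring
  obtain ⟨n, hn⟩ := exists_pow_lt_of_lt_one (by norm_num : (0:ℝ) < 1/2) hr
  rcases le_or_gt (1/2 : ℝ) (|r|) with hhalf | hhalf
  · -- |r| ≥ 1/2 : use iterate
    have hsmall : |r^(2^n)| ≤ 1/2 := by
      rw [abs_pow]
      have h1 : |r|^(2^n) ≤ |r|^n :=
        pow_le_pow_of_le_one (abs_nonneg r) (le_of_lt hr) (Nat.le_of_lt (Nat.lt_two_pow_self (n := n)))
      exact le_trans h1 (le_of_lt hn)
    rw [iter n, G_small _ hsmall, zero_div]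
  · exact G_small r (le_of_lt hhalf)

theorem integral_log_abs_add_cos (a b : ℝ) (ha : 0 < a) (hb : 0 < b) :
    (1 / (2 * Real.pi)) * ∫ θ in (0 : ℝ)..(2 * Real.pi), Real.log |a + b * Real.cos θ| =
      if b < a then Real.log ((a + Real.sqrt (a ^ 2 - b ^ 2)) / 2)
      else Real.log (b / 2) := by
  have hpi : (0:ℝ) < π := Real.pi_pos
  simp only [Real.log_abs]
  by_cases hab : b < a
  · -- case b < a
    rw [if_pos hab]
    set s := Real.sqrt (a^2 - b^2) with hs
    have hs0 : 0 ≤ s := Real.sqrt_nonneg _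
    have hs2 : s^2 = a^2 - b^2 := Real.sq_sqrt (by nlinarith)
    have hden : 0 < a + s := by linarith
    set r := b / (a + s) with hrdef
    have hr : |r| < 1 := by
      rw [abs_of_pos (by positivity), hrdef, div_lt_one hden]
      linarith
    have hkey : ∀ θ : ℝ, Real.log (a + b*Real.cos θ)
        = Real.log ((a+s)/2) + Real.log (1 + 2*r*Real.cos θ + r^2) := by
      intro θ
      have hfact : a + b*Real.cos θ = ((a+s)/2) * (1 + 2*r*Real.cos θ + r^2) := by
        rw [hrdef]
        field_simp
        linear_combination (-1) * hs2
      rw [hfact, Real.log_mul (by positivity) (ne_of_gt (Q_pos hr θ))]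
    have hI : ∫ θ in (0:ℝ)..(2*π), Real.log (a + b*Real.cos θ)
        = 2*π*Real.log ((a+s)/2) + Gg r := by
      rw [show (∫ θ in (0:ℝ)..(2*π), Real.log (a + b*Real.cos θ))
          = ∫ θ in (0:ℝ)..(2*π),
            (Real.log ((a+s)/2) + Real.log (1 + 2*r*Real.cos θ + r^2)) from
        intervalIntegral.integral_congr (fun θ _ => hkey θ)]
      rw [intervalIntegral.integral_add intervalIntegrable_const
        ((G_cont hr).intervalIntegrable _ _)]
      rw [intervalIntegral.integral_const, smul_eq_mul, sub_zero]
      rfl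
    rw [hI, G_zero hr]
    field_simp
    ring
  · -- case a ≤ b
    rw [if_neg hab]
    push_neg at hab
    set α := Real.arccos (a/b) with hα
    have hcosα : Real.cos α = a/b :=
      Real.cos_arccos (le_trans (by norm_num : (-1:ℝ) ≤ 0) (by positivity))
        (by rw [div_le_one hb]; exact hab)
    -- countable bad set
    have hZcount : {x : ℝ | Real.cos x = 0}.Countable := by
      have : {x : ℝ | Real.cos x = 0} ⊆ Set.range (fun k : ℤ => ((2*k+1)*π/2 : ℝ)) := by
        intro x hx
        obtain ⟨k, hk⟩ := Real.cos_eq_zero_iff.mp hx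
        exact ⟨k, hk.symm⟩
      exact Set.Countable.mono this (Set.countable_range _)
    have hB : {θ : ℝ | Real.cos ((α+θ)/2) = 0 ∨ Real.cos ((α-θ)/2) = 0}.Countable := by
      apply Set.Countable.union
      · exact (hZcount.preimage (f := fun θ : ℝ => (α+θ)/2)
          (fun x y h => by dsimp at h; linarith)).mono (fun θ hθ => hθ)
      · exact (hZcount.preimage (f := fun θ : ℝ => (α-θ)/2)
          (fun x y h => by dsimp at h; linarith)).mono (fun θ hθ => hθ)
    have hae : ∀ᵐ θ : ℝ ∂MeasureTheory.volume, θ ∈ Set.uIoc (0:ℝ) (2*π) →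
        Real.log (a + b*Real.cos θ)
        = Real.log (2*b) + LS ((1/2)*θ + (α+π)/2) + LS ((1/2)*θ + -((α+π)/2)) := by
      filter_upwards [hB.ae_notMem (μ := MeasureTheory.volume)] with θ hθ _
      push_neg at hθ
      obtain ⟨hc1, hc2⟩ := hθ
      have hid : a + b*Real.cos θ
          = (2*b) * (Real.cos ((α+θ)/2) * Real.cos ((α-θ)/2)) := by
        have h1 : a + b*Real.cos θ = b * (Real.cos α + Real.cos θ) := by
          rw [hcosα]; field_simp
        rw [h1, Real.cos_add_cos]
        ring
      have hL1 : LS ((1/2)*θ + (α+π)/2) = Real.log (Real.cos ((α+θ)/2)) := by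
        rw [show (1/2)*θ + (α+π)/2 = (α+θ)/2 + π/2 by ring]
        simp only [LS, Real.sin_add_pi_div_two]
      have hL2 : LS ((1/2)*θ + -((α+π)/2)) = Real.log (Real.cos ((α-θ)/2)) := by
        rw [show (1/2)*θ + -((α+π)/2) = -((α-θ)/2 + π/2) by ring, LS_even]
        simp only [LS, Real.sin_add_pi_div_two]
      rw [hid, Real.log_mul (by positivity) (mul_ne_zero hc1 hc2),
        Real.log_mul hc1 hc2, hL1, hL2]
      ring
    have hI : ∫ θ in (0:ℝ)..(2*π), Real.log (a + b*Real.cos θ)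
        = 2*π*Real.log (2*b) + -(2*π*Real.log 2) + -(2*π*Real.log 2) := by
      rw [intervalIntegral.integral_congr_ae hae]
      rw [intervalIntegral.integral_add
        (intervalIntegrable_const.add (LS_comp (1/2) ((α+π)/2) (by norm_num) _ _))
        (LS_comp (1/2) (-((α+π)/2)) (by norm_num) _ _),
        intervalIntegral.integral_add intervalIntegrable_const
        (LS_comp (1/2) ((α+π)/2) (by norm_num) _ _),
        intervalIntegral.integral_const, smul_eq_mul, sub_zero,
        LS_half ((α+π)/2), LS_half (-((α+π)/2))]
    rw [hI]
    have h2b : Real.log (2*b) = Real.log 2 + Real.log b :=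
      Real.log_mul (by norm_num) (ne_of_gt hb)
    have hdiv : Real.log (b/2) = Real.log b - Real.log 2 :=
      Real.log_div (ne_of_gt hb) (by norm_num)
    rw [h2b, hdiv]
    field_simp
    ring
end

section
/- Let χ be a primitive Dirichlet character modulo q > 1 and let m = min{n ≥ 2 : χ(n) ≠ 0}. Define G(s, χ) = −(m^s / (χ(m) · log m)) · L'(s, χ). Then for every s = σ + it with σ ≥ 2, |G(s, χ) − 1| ≤ 2·(1 + 8m/σ)·exp(−σ/(2m)). -/
open DirichletCharacter

open LSeries Real in
private noncomputable def auxF (c σ x : ℝ) : ℝ := (Real.log x + c) * x ^ (1 - σ)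

private lemma auxF_hasDeriv {c σ x : ℝ} (hx : 0 < x) :
    HasDerivAt (auxF c σ)
      (x⁻¹ * x ^ (1 - σ) + (Real.log x + c) * ((1 - σ) * x ^ (1 - σ - 1))) x :=
  ((Real.hasDerivAt_log hx.ne').add_const c).mul
    (Real.hasDerivAt_rpow_const (Or.inl hx.ne'))

private lemma auxF_nonneg {c σ x : ℝ} (hc : 0 ≤ c) (hx : 1 ≤ x) : 0 ≤ auxF c σ x := by
  have h1 : 0 ≤ Real.log x := Real.log_nonneg hx
  have h2 : (0:ℝ) ≤ x ^ (1 - σ) := Real.rpow_nonneg (by linarith) _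
  exact mul_nonneg (by linarith) h2

private lemma auxF_step {σ : ℝ} (hσ : 2 ≤ σ) {a : ℝ} (ha : 1 ≤ a) :
    Real.log (a + 1) * (a + 1) ^ (-σ) * (σ - 1) ≤
      auxF (1 + 1/(σ-1)) σ a - auxF (1 + 1/(σ-1)) σ (a + 1) := by
  set c : ℝ := 1 + 1/(σ-1) with hc
  have hσ1 : (0:ℝ) < σ - 1 := by linarith
  have hpos : ∀ x ∈ Set.Icc a (a+1), (0:ℝ) < x := fun x hx => by
    have := hx.1; linarith
  obtain ⟨ξ, hξmem, hξeq⟩ := exists_hasDerivAt_eq_slope (auxF c σ)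
    (fun x => x⁻¹ * x ^ (1 - σ) + (Real.log x + c) * ((1 - σ) * x ^ (1 - σ - 1)))
    (by linarith : a < a + 1)
    (fun x hx => (auxF_hasDeriv (hpos x hx)).continuousAt.continuousWithinAt)
    (fun x hx => auxF_hasDeriv (hpos x (Set.mem_Icc_of_Ioo hx)))
  have hξa : a < ξ := hξmem.1
  have hξb : ξ < a + 1 := hξmem.2
  have hξpos : 0 < ξ := by linarith
  -- simplify powers of ξ
  have e1 : ξ ^ (1 - σ - 1) = ξ ^ (-σ) := by norm_num
  have e2 : ξ⁻¹ * ξ ^ (1 - σ) = ξ ^ (-σ) := by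
    rw [← Real.rpow_neg_one ξ, ← Real.rpow_add hξpos]
    congr 1; ring
  have hdiff : auxF c σ a - auxF c σ (a+1)
      = ((σ - 1) * (Real.log ξ + c) - 1) * ξ ^ (-σ) := by
    have h1 : auxF c σ (a+1) - auxF c σ a =
        ξ⁻¹ * ξ ^ (1 - σ) + (Real.log ξ + c) * ((1 - σ) * ξ ^ (1 - σ - 1)) := by
      have := hξeq
      rw [show a + 1 - a = 1 by ring, div_one] at this
      linarith [this]
    rw [e1, e2] at h1
    linarith [h1]
  have hcc : (σ - 1) * (Real.log ξ + c) - 1 = (σ - 1) * (Real.log ξ + 1) := by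
    have e : (σ-1)*(1/(σ-1)) = 1 := by field_simp
    rw [hc]; nlinarith [e]
  rw [hdiff, hcc]
  -- now the estimate
  have l1 : Real.log (a + 1) ≤ Real.log ξ + 1 := by
    have h2a : Real.log (a+1) ≤ Real.log (2*a) := by
      rw [Real.log_le_log_iff (by linarith) (by linarith)]
      linarith
    have h2b : Real.log (2*a) = Real.log 2 + Real.log a :=
      Real.log_mul (by norm_num) (by linarith)
    have h2c : Real.log 2 ≤ 1 := by
      have := Real.log_le_sub_one_of_pos (by norm_num : (0:ℝ) < 2)
      linarith
    have h2d : Real.log a ≤ Real.log ξ := by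
      rw [Real.log_le_log_iff (by linarith) hξpos]
      linarith
    linarith
  have l2 : (a + 1) ^ (-σ) ≤ ξ ^ (-σ) :=
    Real.rpow_le_rpow_of_nonpos hξpos (by linarith) (by linarith)
  have l3 : 0 ≤ Real.log (a + 1) := Real.log_nonneg (by linarith)
  have l4 : (0:ℝ) ≤ (a + 1) ^ (-σ) := Real.rpow_nonneg (by linarith) _
  have l5 : Real.log (a+1) * (a+1) ^ (-σ) ≤ (Real.log ξ + 1) * ξ ^ (-σ) :=
    mul_le_mul l1 l2 l4 (by linarith)
  calc Real.log (a + 1) * (a + 1) ^ (-σ) * (σ - 1)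
      ≤ (Real.log ξ + 1) * ξ ^ (-σ) * (σ - 1) := by
        exact mul_le_mul_of_nonneg_right l5 (by linarith)
    _ = (σ - 1) * (Real.log ξ + 1) * ξ ^ (-σ) := by ring

private lemma tail_sum_le {σ : ℝ} (hσ : 2 ≤ σ) {N : ℕ} (hN : 2 ≤ N) {g : ℕ → ℝ}
    (hg0 : ∀ n, 0 ≤ g n) (hgz : ∀ n ≤ N, g n = 0)
    (hgle : ∀ n, N + 1 ≤ n → g n ≤ Real.log n * (n : ℝ) ^ (-σ)) :
    ∑' n, g n ≤ Real.log ((N:ℝ)+1) * ((N:ℝ)+1) ^ (-σ)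
      + auxF (1 + 1/(σ-1)) σ ((N:ℝ)+1) / (σ-1) := by
  set c : ℝ := 1 + 1/(σ-1) with hc
  have hσ1 : (0:ℝ) < σ - 1 := by linarith
  have hc0 : 0 ≤ c := by
    have : 0 < 1/(σ-1) := by positivity
    rw [hc]; linarith
  set A : ℝ := Real.log ((N:ℝ)+1) * ((N:ℝ)+1) ^ (-σ) with hA
  have key : ∀ j : ℕ, ∑ i ∈ Finset.range (N+2+j), g i ≤
      A + (auxF c σ ((N:ℝ)+1) - auxF c σ ((N:ℝ)+1+j)) / (σ-1) := by
    intro j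
    induction j with
    | zero =>
      have h0 : ∑ i ∈ Finset.range (N+1), g i = 0 :=
        Finset.sum_eq_zero fun i hi => hgz i (by
          have := Finset.mem_range.mp hi; omega)
      have h1 : ∑ i ∈ Finset.range (N+2), g i = g (N+1) := by
        rw [show N+2 = (N+1)+1 by ring, Finset.sum_range_succ, h0, zero_add]
      have h2 : g (N+1) ≤ A := by
        have := hgle (N+1) le_rfl
        rw [hA]
        have hcast : ((N+1 : ℕ) : ℝ) = (N:ℝ)+1 := by push_cast; ring
        rwa [hcast] at this
      simpa [h1] using h2
    | succ j ih =>
      have hstep : g (N+2+j) ≤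
          (auxF c σ ((N:ℝ)+1+j) - auxF c σ ((N:ℝ)+1+j+1)) / (σ-1) := by
        have ha : (1:ℝ) ≤ (N:ℝ)+1+j := by
          have h1 : (0:ℝ) ≤ (N:ℝ) := by positivity
          have h2 : (0:ℝ) ≤ (j:ℝ) := by positivity
          linarith
        have := auxF_step hσ ha
        have hcast : ((N+2+j : ℕ) : ℝ) = (N:ℝ)+1+j+1 := by push_cast; ring
        have hb := hgle (N+2+j) (by omega)
        rw [hcast] at hb
        rw [le_div_iff₀ hσ1]
        exact le_trans (mul_le_mul_of_nonneg_right hb (by linarith)) this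
      have hsum : ∑ i ∈ Finset.range (N+2+(j+1)), g i
          = ∑ i ∈ Finset.range (N+2+j), g i + g (N+2+j) := by
        rw [show N+2+(j+1) = (N+2+j)+1 by ring, Finset.sum_range_succ]
      rw [hsum]
      have hcast2 : (N:ℝ)+1+((j:ℕ)+1 : ℕ) = (N:ℝ)+1+j+1 := by push_cast; ring
      rw [hcast2]
      calc ∑ i ∈ Finset.range (N+2+j), g i + g (N+2+j)
          ≤ (A + (auxF c σ ((N:ℝ)+1) - auxF c σ ((N:ℝ)+1+j)) / (σ-1))
            + (auxF c σ ((N:ℝ)+1+j) - auxF c σ ((N:ℝ)+1+j+1)) / (σ-1) :=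
            add_le_add ih hstep
        _ = A + (auxF c σ ((N:ℝ)+1) - auxF c σ ((N:ℝ)+1+j+1)) / (σ-1) := by ring
  refine Real.tsum_le_of_sum_range_le hg0 fun K => ?_
  calc ∑ i ∈ Finset.range K, g i
      ≤ ∑ i ∈ Finset.range (N+2+K), g i := by
        apply Finset.sum_le_sum_of_subset_of_nonneg
          (Finset.range_subset_range.mpr (by omega)) (fun i _ _ => hg0 i)
    _ ≤ A + (auxF c σ ((N:ℝ)+1) - auxF c σ ((N:ℝ)+1+K)) / (σ-1) := key K
    _ ≤ A + auxF c σ ((N:ℝ)+1) / (σ-1) := by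
        have h0 : 0 ≤ auxF c σ ((N:ℝ)+1+K) := auxF_nonneg hc0 (by
          have h1 : (0:ℝ) ≤ (N:ℝ) := by positivity
          have h2 : (0:ℝ) ≤ (K:ℝ) := by positivity
          linarith)
        gcongr
        linarith

set_option maxHeartbeats 2000000 in
theorem G_close_to_one {q : ℕ} [NeZero q] (hq : 1 < q)
    (χ : DirichletCharacter ℂ q) (hχ : χ.IsPrimitive)
    (m : ℕ) (hm : m = sInf {n : ℕ | 2 ≤ n ∧ χ n ≠ 0})
    (G : ℂ → ℂ)
    (hG : ∀ s : ℂ, G s = -((m : ℂ) ^ s / (χ m * Real.log m)) * deriv (LFunction χ) s)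
    (s : ℂ) (hs : 2 ≤ s.re) :
    ‖G s - 1‖ ≤ 2 * (1 + 8 * m / s.re) * Real.exp (-(s.re / (2 * m))) := by
  classical
  set σ : ℝ := s.re with hσdef
  have hs1 : 1 < s.re := by linarith
  -- facts about m
  have hmmem : m ∈ {n : ℕ | 2 ≤ n ∧ χ n ≠ 0} := by
    rw [hm]
    apply Nat.sInf_mem
    refine ⟨q + 1, by omega, ?_⟩
    have : ((q + 1 : ℕ) : ZMod q) = 1 := by
      push_cast
      simp [ZMod.natCast_self]
    rw [this, map_one]
    exact one_ne_zero
  have hm2 : 2 ≤ m := hmmem.1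
  have hχm : χ (m : ZMod q) ≠ 0 := hmmem.2
  have hvan : ∀ n : ℕ, 2 ≤ n → n < m → χ (n : ZMod q) = 0 := by
    intro n h2 hlt
    by_contra hne
    have : m ≤ n := hm ▸ Nat.sInf_le ⟨h2, hne⟩
    omega
  have hM2 : (2:ℝ) ≤ (m:ℝ) := by exact_mod_cast hm2
  have hlogM : 0 < Real.log (m:ℝ) := Real.log_pos (by linarith)
  -- derivative of L-function
  have habs : LSeries.abscissaOfAbsConv (fun n : ℕ => (χ n : ℂ)) < (s.re : EReal) := by
    have := absicssaOfAbsConv_eq_one (NeZero.ne q) χ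
    rw [this]
    exact_mod_cast hs1
  have hF : Summable (LSeries.term (LSeries.logMul (fun n : ℕ => (χ n : ℂ))) s) :=
    LSeriesSummable_logMul_of_lt_re habs
  have hderiv : deriv (LFunction χ) s = -LSeries (LSeries.logMul (fun n : ℕ => (χ n : ℂ))) s := by
    rw [deriv_LFunction_eq_deriv_LSeries χ hs1]
    exact LSeries_deriv habs
  set F : ℕ → ℂ := LSeries.term (LSeries.logMul (fun n : ℕ => (χ n : ℂ))) s with hFdef
  set c : ℂ := (m : ℂ) ^ s / (χ m * Real.log m) with hcdef
  have hmne : (m : ℂ) ≠ 0 := Nat.cast_ne_zero.mpr (by omega)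
  have hcpowne : (m : ℂ) ^ s ≠ 0 := by
    rw [Complex.cpow_def_of_ne_zero hmne]
    exact Complex.exp_ne_zero _
  have hlogCne : ((Real.log m : ℝ) : ℂ) ≠ 0 := by
    exact_mod_cast hlogM.ne'
  -- value of the term at m
  have hFm : F m = (Real.log m : ℂ) * χ m / (m : ℂ) ^ s := by
    rw [hFdef, LSeries.term_of_ne_zero (by omega : m ≠ 0)]
    congr 1
    rw [LSeries.logMul, Complex.natCast_log]
  have hcFm : c * F m = 1 := by
    rw [hFm, hcdef, div_mul_div_comm, div_eq_one_iff_eq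
      (mul_ne_zero (mul_ne_zero hχm hlogCne) hcpowne)]
    ring
  -- split the sum
  have hsplit : LSeries (LSeries.logMul (fun n : ℕ => (χ n : ℂ))) s
      = F m + ∑' n, (if n = m then 0 else F n) := Summable.tsum_eq_add_tsum_ite hF m
  have hG1 : G s - 1 = c * ∑' n, (if n = m then 0 else F n) := by
    have h1 : G s = c * F m + c * ∑' n, (if n = m then 0 else F n) := by
      rw [hG s, hderiv, hsplit, hcdef]
      ring
    rw [h1, hcFm]
    ring
  -- norms
  have hMpos : (0:ℝ) < (m:ℝ) := by linarith
  have habs_pow : ‖(m:ℂ) ^ s‖ = (m:ℝ) ^ σ := by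
    rw [show ((m:ℕ):ℂ) = ((m:ℝ):ℂ) by norm_cast]
    exact Complex.norm_cpow_eq_rpow_re_of_pos hMpos s
  have hunit : IsUnit ((m : ℕ) : ZMod q) := by
    by_contra h
    exact hχm (χ.map_nonunit h)
  have habschim : ‖χ (m : ZMod q)‖ = 1 := by
    rw [← hunit.unit_spec]
    exact χ.unit_norm_eq_one hunit.unit
  have habsc : ‖c‖ = (m:ℝ) ^ σ / Real.log m := by
    rw [hcdef, norm_div, norm_mul, habs_pow, habschim, one_mul, Complex.norm_real, Real.norm_eq_abs,
      abs_of_pos hlogM]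
  -- term bounds
  have hgle : ∀ n, m + 1 ≤ n →
      ‖(if n = m then 0 else F n)‖ ≤ Real.log n * (n:ℝ) ^ (-σ) := by
    intro n hn
    have hnpos : (0:ℝ) < (n:ℝ) := by
      have : 0 < n := by omega
      exact_mod_cast this
    have hn1 : (1:ℝ) ≤ (n:ℝ) := by
      have : 1 ≤ n := by omega
      exact_mod_cast this
    rw [if_neg (by omega), hFdef, LSeries.term_of_ne_zero (by omega : n ≠ 0),
      norm_div]
    have h1 : ‖Complex.log (n:ℂ)‖ = Real.log n := by
      rw [← Complex.natCast_log, Complex.norm_real]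
      exact abs_of_nonneg (Real.log_nonneg hn1)
    have h2 : ‖((n:ℕ):ℂ) ^ s‖ = (n:ℝ) ^ σ := by
      rw [show ((n:ℕ):ℂ) = ((n:ℝ):ℂ) by norm_cast]
      exact Complex.norm_cpow_eq_rpow_re_of_pos hnpos s
    simp only [LSeries.logMul]
    rw [norm_mul, h1, h2, Real.rpow_neg hnpos.le]
    have h3 : Real.log n * ‖χ (n : ZMod q)‖ ≤ Real.log n :=
      mul_le_mul_of_nonneg_left (DirichletCharacter.norm_le_one χ _)
        (Real.log_nonneg hn1) |>.trans_eq (mul_one _)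
    rw [div_eq_mul_inv]
    exact mul_le_mul_of_nonneg_right h3 (by positivity)
  have hgz : ∀ n ≤ m, ‖(if n = m then 0 else F n)‖ = 0 := by
    intro n hn
    rcases eq_or_lt_of_le hn with h | h
    · rw [if_pos h, norm_zero]
    rw [if_neg (by omega)]
    match n, h with
    | 0, _ => rw [hFdef, LSeries.term_zero, norm_zero]
    | 1, _ =>
      rw [hFdef, LSeries.term_of_ne_zero one_ne_zero, LSeries.logMul]
      simp
    | (k+2), h =>
      rw [hFdef, LSeries.term_of_ne_zero (by omega), LSeries.logMul,
        hvan (k+2) (by omega) (by omega)]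
      simp
  have hsumnorm : Summable (fun n => ‖(if n = m then 0 else F n)‖) := by
    apply Summable.of_nonneg_of_le (fun n => norm_nonneg _)
      (fun n => ?_) (summable_norm_iff.mpr hF)
    split_ifs with h
    · simp
    · exact le_rfl
  have htail := tail_sum_le hs hm2 (g := fun n => ‖(if n = m then 0 else F n)‖)
    (fun n => norm_nonneg _) hgz hgle
  have hbound1 : ‖G s - 1‖ ≤
      ((m:ℝ) ^ σ / Real.log m) * ∑' n, ‖(if n = m then 0 else F n)‖ := by
    rw [hG1, norm_mul, habsc]
    exact mul_le_mul_of_nonneg_left (norm_tsum_le_tsum_norm hsumnorm)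
      (by positivity)
  -- numeric estimates
  set M : ℝ := (m:ℝ) with hMdef
  have hσ0 : (0:ℝ) < σ := by linarith
  have hσ1 : (0:ℝ) < σ - 1 := by linarith
  set L1 : ℝ := Real.log (M + 1) with hL1
  set E : ℝ := M ^ σ * (M + 1) ^ (-σ) with hE
  have hM1pos : (0:ℝ) < M + 1 := by linarith
  have hEbound : E ≤ Real.exp (-(σ / (2 * M))) := by
    have e1 : E = (M / (M + 1)) ^ σ := by
      rw [hE, Real.div_rpow (by linarith) (by linarith), Real.rpow_neg hM1pos.le,
        div_eq_mul_inv]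
    have e2 : (M / (M + 1)) ^ σ = Real.exp (Real.log (M / (M + 1)) * σ) :=
      Real.rpow_def_of_pos (by positivity) σ
    have e3 : Real.log (M / (M + 1)) ≤ -(1 / (2 * M)) := by
      have h := Real.log_le_sub_one_of_pos (show (0:ℝ) < M / (M + 1) by positivity)
      have h4 : M / (M + 1) - 1 = -(1 / (M + 1)) := by field_simp; ring
      have h5 : 1 / (2 * M) ≤ 1 / (M + 1) :=
        one_div_le_one_div_of_le hM1pos (by linarith)
      linarith
    have e4 : Real.log (M / (M + 1)) * σ ≤ -(σ / (2 * M)) := by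
      have h6 := mul_le_mul_of_nonneg_right e3 hσ0.le
      have h7 : -(1 / (2 * M)) * σ = -(σ / (2 * M)) := by ring
      linarith
    rw [e1, e2]
    exact Real.exp_le_exp.mpr e4
  have hlogL1nonneg : 0 ≤ L1 := Real.log_nonneg (by linarith)
  have hbr : L1 / Real.log M + ((L1 + (1 + 1/(σ-1))) / Real.log M) * ((M+1)/(σ-1))
      ≤ 2 + 16 * M / σ := by
    have h1 : L1 ≤ 2 * Real.log M := by
      have ha : Real.log (M + 1) ≤ Real.log (M * M) := by
        rw [Real.log_le_log_iff (by linarith) (by nlinarith)]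
        nlinarith
      rw [Real.log_mul (by linarith) (by linarith)] at ha
      rw [hL1]; linarith
    have h2 : Real.log 2 ≤ Real.log M := by
      rw [Real.log_le_log_iff (by norm_num) (by linarith)]; exact hM2
    have hl2 : (0.6931471803 : ℝ) < Real.log 2 := Real.log_two_gt_d9
    have t0 : 1/(σ-1) ≤ 1 := by rw [div_le_one hσ1]; linarith
    have t0' : 0 ≤ 1/(σ-1) := div_nonneg zero_le_one hσ1.le
    have t1 : L1 / Real.log M ≤ 2 := by rw [div_le_iff₀ hlogM]; linarith
    have t2 : (L1 + (1 + 1/(σ-1))) / Real.log M ≤ 5 := by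
      rw [div_le_iff₀ hlogM]; linarith
    have t3 : (M+1)/(σ-1) ≤ 3 * M / σ := by
      rw [div_le_div_iff₀ hσ1 hσ0]
      have hprod : 0 ≤ M * σ - 2 * M - 2 * σ + 4 := by
        calc (0:ℝ) ≤ (M - 2) * (σ - 2) :=
              mul_nonneg (by linarith) (by linarith)
          _ = M * σ - 2 * M - 2 * σ + 4 := by ring
      linarith [hprod]
    have t4 : 0 ≤ (M+1)/(σ-1) := div_nonneg (by linarith) hσ1.le
    have t5 : ((L1 + (1 + 1/(σ-1))) / Real.log M) * ((M+1)/(σ-1)) ≤ 5 * (3 * M / σ) :=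
      mul_le_mul t2 t3 t4 (by norm_num)
    have t6 : 0 ≤ M / σ := by positivity
    have t7 : 5 * (3 * M / σ) = 15 * (M / σ) := by ring
    have t8 : 16 * M / σ = 16 * (M / σ) := by ring
    rw [t8]
    rw [t7] at t5
    linarith
  have hbrnonneg : 0 ≤ L1 / Real.log M
      + ((L1 + (1 + 1/(σ-1))) / Real.log M) * ((M+1)/(σ-1)) := by
    have t0' : 0 ≤ 1/(σ-1) := div_nonneg zero_le_one hσ1.le
    have u1 : 0 ≤ L1 / Real.log M := div_nonneg hlogL1nonneg hlogM.le
    have u2 : 0 ≤ (L1 + (1 + 1/(σ-1))) / Real.log M :=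
      div_nonneg (by linarith) hlogM.le
    have u3 : 0 ≤ (M+1)/(σ-1) := div_nonneg (by linarith) hσ1.le
    exact add_nonneg u1 (mul_nonneg u2 u3)
  have hpowsplit : (M + 1) ^ (1 - σ) = (M + 1) * (M + 1) ^ (-σ) := by
    rw [show (1 - σ) = 1 + -σ by ring, Real.rpow_add hM1pos, Real.rpow_one]
  have hident : ((m:ℝ) ^ σ / Real.log m) *
      (Real.log ((m:ℝ)+1) * ((m:ℝ)+1) ^ (-σ)
        + auxF (1 + 1/(σ-1)) σ ((m:ℝ)+1) / (σ-1))
      = E * (L1 / Real.log M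
        + ((L1 + (1 + 1/(σ-1))) / Real.log M) * ((M+1)/(σ-1))) := by
    rw [auxF, hpowsplit]
    rw [hE, hL1, hMdef]
    field_simp
  calc ‖G s - 1‖
      ≤ ((m:ℝ) ^ σ / Real.log m) *
        (Real.log ((m:ℝ)+1) * ((m:ℝ)+1) ^ (-σ)
          + auxF (1 + 1/(σ-1)) σ ((m:ℝ)+1) / (σ-1)) := by
        refine hbound1.trans (mul_le_mul_of_nonneg_left htail ?_)
        positivity
    _ = E * (L1 / Real.log M
        + ((L1 + (1 + 1/(σ-1))) / Real.log M) * ((M+1)/(σ-1))) := hident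
    _ ≤ Real.exp (-(σ / (2 * M))) * (2 + 16 * M / σ) :=
        mul_le_mul hEbound hbr hbrnonneg (Real.exp_nonneg _)
    _ = 2 * (1 + 8 * M / σ) * Real.exp (-(σ / (2 * M))) := by ring
    _ = 2 * (1 + 8 * ↑m / s.re) * Real.exp (-(s.re / (2 * ↑m))) := by
        rw [hMdef, hσdef]
end

section
/- Let χ be a primitive Dirichlet character modulo q > 1 and m = min{n ≥ 2 : χ(n) ≠ 0}, and set G(s, χ) = −(m^s / (χ(m) log m)) L'(s, χ). Then G(s, χ) has no zeros in the half-plane Re(s) ≥ 8m; more precisely, |G(s, χ) − 1| ≤ 4·exp(−σ/(2m)) < 1 for σ = Re(s) ≥ 8m. -/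
open Real in
lemma aux_log_one_add {x : ℝ} (h0 : 0 ≤ x) (h1 : x ≤ 1) : x / 2 ≤ Real.log (1 + x) := by
  rw [Real.le_log_iff_exp_le (by linarith)]
  have h2 := Real.add_one_le_exp (-(x/2))
  have h3 : Real.exp (-(x/2)) * Real.exp (x/2) = 1 := by
    rw [← Real.exp_add]; simp
  have h4 : (0:ℝ) < Real.exp (x/2) := Real.exp_pos _
  nlinarith [h2, h3, h4]

lemma aux_near {m n : ℕ} (hm2 : 2 ≤ m) (hn : m < n) (hn2 : n ≤ 2*m) {σ : ℝ} (hσ : 0 ≤ σ) :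
    Real.log n * ((m:ℝ)/n)^σ ≤
      2 * Real.log m * Real.exp (-(σ/(2*m)))^(n - m) := by
  have hm0 : (0:ℝ) < m := by positivity
  have hn0 : (0:ℝ) < n := by exact_mod_cast Nat.pos_of_ne_zero (by omega)
  have hlogn : Real.log n ≤ 2 * Real.log m := by
    calc Real.log n ≤ Real.log (2*m) := by
          apply Real.log_le_log hn0; exact_mod_cast hn2
    _ = Real.log 2 + Real.log m := Real.log_mul two_ne_zero (by positivity)
    _ ≤ Real.log m + Real.log m := by
          have : Real.log 2 ≤ Real.log m := Real.log_le_log two_pos (by exact_mod_cast hm2)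
          linarith
    _ = 2 * Real.log m := by ring
  have hpow : ((m:ℝ)/n)^σ ≤ Real.exp (-(σ/(2*m)))^(n - m) := by
    have hk : (0:ℝ) < (n:ℝ) - m := by
      have : (m:ℝ) < n := by exact_mod_cast hn
      linarith
    have hx0 : 0 ≤ ((n:ℝ) - m)/m := by positivity
    have hx1 : ((n:ℝ) - m)/m ≤ 1 := by
      rw [div_le_one hm0]
      have : (n:ℝ) ≤ 2*m := by exact_mod_cast hn2
      linarith
    have hlog : ((n:ℝ) - m)/m / 2 ≤ Real.log ((n:ℝ)/m) := by
      have := aux_log_one_add hx0 hx1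
      have heq : 1 + ((n:ℝ) - m)/m = (n:ℝ)/m := by field_simp; ring
      rwa [heq] at this
    rw [← Real.exp_nat_mul]
    rw [Real.rpow_def_of_pos (by positivity)]
    apply Real.exp_le_exp.mpr
    have hlogdiv : Real.log ((m:ℝ)/n) = - Real.log ((n:ℝ)/m) := by
      rw [← Real.log_inv]; congr 1; field_simp
    rw [hlogdiv]
    have hnm : ((n - m : ℕ) : ℝ) = (n:ℝ) - m := by
      push_cast [Nat.cast_sub hn.le]; ring
    rw [hnm]
    have h1 : ((n:ℝ) - m) * (σ/(2*m)) ≤ σ * Real.log ((n:ℝ)/m) := by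
      have := mul_le_mul_of_nonneg_left hlog hσ
      calc ((n:ℝ) - m) * (σ/(2*m)) = σ * (((n:ℝ) - m)/m / 2) := by field_simp
      _ ≤ σ * Real.log ((n:ℝ)/m) := this
    nlinarith [h1]
  calc Real.log n * ((m:ℝ)/n)^σ ≤ (2 * Real.log m) * (((m:ℝ)/n)^σ) := by
        apply mul_le_mul_of_nonneg_right hlogn (by positivity)
  _ ≤ 2 * Real.log m * Real.exp (-(σ/(2*m)))^(n - m) := by
        apply mul_le_mul_of_nonneg_left hpow
        have : (0:ℝ) ≤ Real.log m := Real.log_nonneg (by exact_mod_cast Nat.one_le_of_lt hm2)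
        linarith


lemma aux_far {m n : ℕ} (hm2 : 2 ≤ m) (hn : 2*m < n) {σ : ℝ} (hσ : 3 ≤ σ) :
    Real.log n * ((m:ℝ)/n)^σ ≤ 8 * (2:ℝ)^(-σ) * (m:ℝ)^3 * (1/(n:ℝ)^2) := by
  have hm0 : (0:ℝ) < m := by positivity
  have hn0 : (0:ℝ) < n := by
    have : 0 < n := by omega
    exact_mod_cast this
  have hmn : (2:ℝ)*m < n := by exact_mod_cast hn
  have hlogn : Real.log n ≤ (n:ℝ) := by
    have := Real.log_le_sub_one_of_pos hn0
    linarith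
  have hbase : (m:ℝ)/n ≤ 1/2 := by
    rw [div_le_div_iff₀ hn0 two_pos]
    linarith
  have hbase0 : (0:ℝ) < (m:ℝ)/n := by positivity
  have hsplit : ((m:ℝ)/n)^σ = ((m:ℝ)/n)^(σ-3) * ((m:ℝ)/n)^(3:ℕ) := by
    rw [← Real.rpow_natCast ((m:ℝ)/n) 3, ← Real.rpow_add hbase0]
    norm_num
  have h1 : ((m:ℝ)/n)^(σ-3) ≤ ((1:ℝ)/2)^(σ-3) :=
    Real.rpow_le_rpow hbase0.le hbase (by linarith)
  have h2 : ((1:ℝ)/2)^(σ-3) = 8 * (2:ℝ)^(-σ) := by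
    rw [Real.div_rpow zero_le_one two_pos.le, Real.one_rpow, one_div,
      ← Real.rpow_neg two_pos.le, neg_sub,
      show (3:ℝ) - σ = 3 + (-σ) by ring, Real.rpow_add two_pos,
      show ((3:ℝ) = ((3:ℕ):ℝ)) by norm_num, Real.rpow_natCast]
    norm_num
  have h3 : ((m:ℝ)/n)^(3:ℕ) = (m:ℝ)^3 / (n:ℝ)^3 := by
    rw [div_pow]
  have key : Real.log n * ((m:ℝ)/n)^σ ≤ (n:ℝ) * (8 * (2:ℝ)^(-σ)) * ((m:ℝ)^3 / (n:ℝ)^3) := by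
    rw [hsplit, h3]
    have hA : (0:ℝ) ≤ (m:ℝ)^3/(n:ℝ)^3 := by positivity
    have hB : ((m:ℝ)/n)^(σ-3) ≤ 8 * (2:ℝ)^(-σ) := h2 ▸ h1
    have hC : (0:ℝ) ≤ Real.log n := Real.log_nonneg (by
      have : (1:ℝ) ≤ (n:ℝ) := by exact_mod_cast (by omega : 1 ≤ n)
      linarith)
    calc Real.log n * (((m:ℝ)/n)^(σ-3) * ((m:ℝ)^3/(n:ℝ)^3))
        ≤ (n:ℝ) * (((m:ℝ)/n)^(σ-3) * ((m:ℝ)^3/(n:ℝ)^3)) := by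
          apply mul_le_mul_of_nonneg_right hlogn
          positivity
      _ ≤ (n:ℝ) * ((8 * (2:ℝ)^(-σ)) * ((m:ℝ)^3/(n:ℝ)^3)) := by
          apply mul_le_mul_of_nonneg_left _ hn0.le
          exact mul_le_mul_of_nonneg_right hB hA
      _ = (n:ℝ) * (8 * (2:ℝ)^(-σ)) * ((m:ℝ)^3/(n:ℝ)^3) := by ring
  calc Real.log n * ((m:ℝ)/n)^σ ≤ (n:ℝ) * (8 * (2:ℝ)^(-σ)) * ((m:ℝ)^3 / (n:ℝ)^3) := key
  _ = 8 * (2:ℝ)^(-σ) * (m:ℝ)^3 * (1/(n:ℝ)^2) := by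
      field_simp


set_option maxHeartbeats 1600000 in
lemma aux_key (m : ℕ) (hm2 : 2 ≤ m) {σ : ℝ} (hσ : 8*(m:ℝ) ≤ σ) :
    Summable (fun n : ℕ => if n ≤ m then (0:ℝ) else Real.log n * ((m:ℝ)/n)^σ) ∧
    ∑' n : ℕ, (if n ≤ m then (0:ℝ) else Real.log n * ((m:ℝ)/n)^σ)
      ≤ 4 * Real.log m * Real.exp (-(σ/(2*(m:ℝ)))) := by
  have hm0 : (0:ℝ) < m := by positivity
  have hm2' : (2:ℝ) ≤ m := by exact_mod_cast hm2
  have hσ16 : (16:ℝ) ≤ σ := by linarith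
  set L := Real.log m with hLdef
  set r := Real.exp (-(σ/(2*(m:ℝ)))) with hrdef
  have hL2 : Real.log 2 ≤ L := Real.log_le_log two_pos hm2'
  have hlog2 : (0.6931:ℝ) ≤ Real.log 2 := by
    linarith [Real.log_two_gt_d9]
  have hL0 : (0:ℝ) ≤ L := by linarith
  have hr0 : (0:ℝ) < r := Real.exp_pos _
  have hσ2m : (4:ℝ) ≤ σ/(2*m) := by
    rw [le_div_iff₀ (by positivity)]; linarith
  have hexp4 : Real.exp (4:ℝ) ≤ 55 := by
    have h1 : Real.exp 1 ≤ 2.7182818286 := Real.exp_one_lt_d9.le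
    have h4 : Real.exp (4:ℝ) = Real.exp 1 ^ (4:ℕ) := by
      rw [← Real.exp_nat_mul]; norm_num
    rw [h4]
    calc Real.exp 1 ^ (4:ℕ) ≤ 2.7182818286 ^ (4:ℕ) := by
          apply pow_le_pow_left₀ (Real.exp_pos 1).le h1
    _ ≤ 55 := by norm_num
  have hr54 : r ≤ 1/54 := by
    have : r ≤ Real.exp (-(4:ℝ)) := by
      rw [hrdef, Real.exp_le_exp]; linarith
    have h54 : Real.exp (-(4:ℝ)) ≤ 1/54 := by
      have h1 : (2.7182818283:ℝ) ≤ Real.exp 1 := Real.exp_one_gt_d9.le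
      have h4 : Real.exp (4:ℝ) = Real.exp 1 ^ (4:ℕ) := by
        rw [← Real.exp_nat_mul]; norm_num
      have h54 : (54:ℝ) ≤ Real.exp (4:ℝ) := by
        rw [h4]
        calc (54:ℝ) ≤ 2.7182818283 ^ (4:ℕ) := by norm_num
        _ ≤ Real.exp 1 ^ (4:ℕ) := by
            apply pow_le_pow_left₀ (by norm_num) h1
      rw [Real.exp_neg, show (1:ℝ)/54 = (54:ℝ)⁻¹ by norm_num]
      exact inv_anti₀ (by norm_num) h54
    linarith
  have hr1 : r < 1 := by linarith
  -- the bounding functions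
  set d1 : ℕ → ℝ := fun n => if n ≤ m then (0:ℝ) else 2*L*r^(n-m) with hd1def
  set d2 : ℕ → ℝ := fun n => 8*(2:ℝ)^(-σ)*(m:ℝ)^3*(1/(n:ℝ)^2) with hd2def
  have hd1nn : ∀ n, 0 ≤ d1 n := by
    intro n; simp only [hd1def]
    split
    · exact le_refl 0
    · positivity
  have hd2nn : ∀ n, 0 ≤ d2 n := by
    intro n; simp only [hd2def]; positivity
  -- summability of d1
  have hd1geom : ∀ k : ℕ, d1 (k + (m+1)) = (2*L*r) * r^k := by
    intro k
    simp only [hd1def]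
    rw [if_neg (by omega)]
    have : k + (m+1) - m = k + 1 := by omega
    rw [this, pow_succ]
    ring
  have hgs : Summable (fun k : ℕ => (2*L*r) * r^k) :=
    (summable_geometric_of_lt_one hr0.le hr1).mul_left _
  have hd1sum : Summable d1 := by
    rw [← summable_nat_add_iff (m+1)]
    exact hgs.congr fun k => (hd1geom k).symm
  -- sum of d1
  have hd1tsum : ∑' n, d1 n ≤ (108/53) * L * r := by
    have hsplit := hd1sum.sum_add_tsum_nat_add (m+1)
    have hzero : ∑ i ∈ Finset.range (m+1), d1 i = 0 := by
      apply Finset.sum_eq_zero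
      intro i hi
      simp only [hd1def]
      rw [if_pos (by simp at hi; omega)]
    have htail : ∑' k, d1 (k + (m+1)) = (2*L*r) * (1-r)⁻¹ := by
      rw [tsum_congr hd1geom, tsum_mul_left, tsum_geometric_of_lt_one hr0.le hr1]
    rw [← hsplit, hzero, zero_add, htail]
    have hinv : (1-r)⁻¹ ≤ 54/53 := by
      rw [inv_le_iff_one_le_mul₀ (by linarith)]
      nlinarith
    calc 2*L*r * (1-r)⁻¹ ≤ 2*L*r * (54/53) := by
          apply mul_le_mul_of_nonneg_left hinv (by positivity)
    _ = (108/53) * L * r := by ring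
  -- summability and sum of d2
  have hzeta : ∑' n : ℕ, (1:ℝ)/(n:ℝ)^2 = (Real.pi)^2/6 := hasSum_zeta_two.tsum_eq
  have hzsum : Summable (fun n : ℕ => (1:ℝ)/(n:ℝ)^2) := hasSum_zeta_two.summable
  have hd2sum : Summable d2 := by
    rw [hd2def]; exact hzsum.mul_left (8*(2:ℝ)^(-σ)*(m:ℝ)^3)
  have hd2tsum : ∑' n, d2 n ≤ (1.32:ℝ) * r := by
    have h1 : ∑' n, d2 n = 8*(2:ℝ)^(-σ)*(m:ℝ)^3 * ((Real.pi)^2/6) := by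
      rw [hd2def, tsum_mul_left, hzeta]
    have hpi : (Real.pi)^2 ≤ 10 := by
      nlinarith [Real.pi_lt_d2, Real.pi_pos]
    have h2pow : (0:ℝ) ≤ (2:ℝ)^(-σ) := (Real.rpow_pos_of_pos two_pos _).le
    have h2 : ∑' n, d2 n ≤ (40/3)*(2:ℝ)^(-σ)*(m:ℝ)^3 := by
      rw [h1]
      have : (8:ℝ)*(2:ℝ)^(-σ)*(m:ℝ)^3 * ((Real.pi)^2/6) ≤ 8*(2:ℝ)^(-σ)*(m:ℝ)^3 * (10/6) := by
        apply mul_le_mul_of_nonneg_left (by linarith) (by positivity)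
      calc (8:ℝ)*(2:ℝ)^(-σ)*(m:ℝ)^3 * ((Real.pi)^2/6) ≤ 8*(2:ℝ)^(-σ)*(m:ℝ)^3 * (10/6) := this
      _ = (40/3)*(2:ℝ)^(-σ)*(m:ℝ)^3 := by ring
    -- numeric estimate: (40/3) * 2^(-σ) * m^3 ≤ 1.32 * r
    have hfar : (40/3)*(2:ℝ)^(-σ)*(m:ℝ)^3 ≤ (1.32:ℝ) * r := by
      have hexpform : (2:ℝ)^(-σ) = Real.exp (Real.log 2 * (-σ)) :=
        Real.rpow_def_of_pos two_pos _
      -- key: (40/3) * m^3 ≤ 1.32 * exp(σ * log 2 - σ/(2m))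
      have hE : Real.exp ((8*(m:ℝ)) * Real.log 2 - 4) ≤ Real.exp (σ * Real.log 2 - σ/(2*(m:ℝ))) := by
        rw [Real.exp_le_exp]
        have hpos : (0:ℝ) ≤ Real.log 2 - 1/(2*(m:ℝ)) := by
          have : 1/(2*(m:ℝ)) ≤ 1/4 := by
            rw [div_le_div_iff₀ (by positivity) (by norm_num)]
            linarith
          linarith
        have := mul_le_mul_of_nonneg_right hσ hpos
        have hrw1 : 8*(m:ℝ) * (Real.log 2 - 1/(2*(m:ℝ))) = 8*(m:ℝ)*Real.log 2 - 4 := by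
          field_simp
          ring
        have hrw2 : σ * (Real.log 2 - 1/(2*(m:ℝ))) = σ * Real.log 2 - σ/(2*(m:ℝ)) := by
          field_simp
        rw [hrw1, hrw2] at this
        linarith
      have hE2 : (2:ℝ)^(8*m) * Real.exp (-(4:ℝ)) = Real.exp ((8*(m:ℝ)) * Real.log 2 - 4) := by
        rw [Real.exp_sub]
        congr 1
        · rw [show (8*(m:ℝ)) * Real.log 2 = ((8*m : ℕ):ℝ) * Real.log 2 by push_cast; ring,
            Real.exp_nat_mul, Real.exp_log two_pos]
        · rw [Real.exp_neg]
      have hm3 : (m:ℝ)^3 ≤ (2:ℝ)^(3*m) := by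
        have h1 : (m:ℝ) ≤ (2:ℝ)^m := by
          exact_mod_cast (Nat.lt_two_pow_self (n := m)).le
        calc (m:ℝ)^3 ≤ ((2:ℝ)^m)^3 := by
              apply pow_le_pow_left₀ (by positivity) h1
        _ = (2:ℝ)^(3*m) := by rw [← pow_mul]; ring_nf
      have hexp4' : (1:ℝ)/55 ≤ Real.exp (-(4:ℝ)) := by
        rw [Real.exp_neg, div_le_iff₀ (by norm_num), inv_mul_eq_div, le_div_iff₀ (Real.exp_pos _)]
        linarith
      have h1024 : (1024:ℝ) ≤ (2:ℝ)^(5*m) := by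
        calc (1024:ℝ) = (2:ℝ)^(10:ℕ) := by norm_num
        _ ≤ (2:ℝ)^(5*m) := by
            apply pow_le_pow_right₀ one_le_two
            omega
      -- combine
      rw [hexpform, show Real.log 2 * (-σ) = -(σ * Real.log 2) by ring]
      have hgoal : (40/3)*(m:ℝ)^3 ≤ (1.32:ℝ) * Real.exp (σ * Real.log 2 - σ/(2*(m:ℝ))) := by
        have hchain : (1.32:ℝ) * ((2:ℝ)^(8*m) * Real.exp (-(4:ℝ)))
            ≤ (1.32:ℝ) * Real.exp (σ * Real.log 2 - σ/(2*(m:ℝ))) := by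
          apply mul_le_mul_of_nonneg_left (hE2 ▸ hE) (by norm_num)
        have hlow : (40/3)*(m:ℝ)^3 ≤ (1.32:ℝ) * ((2:ℝ)^(8*m) * Real.exp (-(4:ℝ))) := by
          have s1 : (40/3)*(m:ℝ)^3 ≤ (40/3)*(2:ℝ)^(3*m) := by
            apply mul_le_mul_of_nonneg_left hm3 (by norm_num)
          have s2 : (1.32:ℝ)/55 * (2:ℝ)^(8*m) ≤ (1.32:ℝ) * ((2:ℝ)^(8*m) * Real.exp (-(4:ℝ))) := by
            have := mul_le_mul_of_nonneg_left hexp4' (mul_nonneg (by norm_num : (0:ℝ) ≤ 1.32) (by positivity : (0:ℝ) ≤ (2:ℝ)^(8*m)))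
            calc (1.32:ℝ)/55 * (2:ℝ)^(8*m) = (1.32:ℝ) * (2:ℝ)^(8*m) * (1/55) := by ring
            _ ≤ (1.32:ℝ) * (2:ℝ)^(8*m) * Real.exp (-(4:ℝ)) := this
            _ = (1.32:ℝ) * ((2:ℝ)^(8*m) * Real.exp (-(4:ℝ))) := by ring
          have s3 : (40/3)*(2:ℝ)^(3*m) ≤ (1.32:ℝ)/55 * (2:ℝ)^(8*m) := by
            have hsplitpow : (2:ℝ)^(8*m) = (2:ℝ)^(3*m) * (2:ℝ)^(5*m) := by
              rw [← pow_add]; ring_nf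
            rw [hsplitpow]
            have : (40/3 : ℝ) ≤ (1.32:ℝ)/55 * (2:ℝ)^(5*m) := by
              calc (40/3 : ℝ) ≤ (1.32:ℝ)/55 * 1024 := by norm_num
              _ ≤ (1.32:ℝ)/55 * (2:ℝ)^(5*m) := by
                  apply mul_le_mul_of_nonneg_left h1024 (by norm_num)
            calc (40/3)*(2:ℝ)^(3*m) ≤ ((1.32:ℝ)/55 * (2:ℝ)^(5*m)) * (2:ℝ)^(3*m) := by
                  apply mul_le_mul_of_nonneg_right this (by positivity)
            _ = (1.32:ℝ)/55 * ((2:ℝ)^(3*m) * (2:ℝ)^(5*m)) := by ring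
          linarith
        linarith
      -- from hgoal conclude
      have hrform : r = Real.exp (-(σ * Real.log 2)) * Real.exp (σ * Real.log 2 - σ/(2*(m:ℝ))) := by
        rw [hrdef, ← Real.exp_add]
        congr 1
        ring
      calc (40/3)*Real.exp (-(σ * Real.log 2))*(m:ℝ)^3
          = Real.exp (-(σ * Real.log 2)) * ((40/3)*(m:ℝ)^3) := by ring
      _ ≤ Real.exp (-(σ * Real.log 2)) * ((1.32:ℝ) * Real.exp (σ * Real.log 2 - σ/(2*(m:ℝ)))) := by
          apply mul_le_mul_of_nonneg_left hgoal (Real.exp_pos _).le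
      _ = (1.32:ℝ) * r := by rw [hrform]; ring
    linarith
  -- pointwise bound c ≤ d1 + d2
  set c : ℕ → ℝ := fun n => if n ≤ m then (0:ℝ) else Real.log n * ((m:ℝ)/n)^σ with hcdef
  have hcnn : ∀ n, 0 ≤ c n := by
    intro n
    simp only [hcdef]
    split
    · exact le_refl 0
    · rename_i h
      have hn1 : (1:ℝ) ≤ (n:ℝ) := by exact_mod_cast (by omega : 1 ≤ n)
      have := Real.log_nonneg hn1
      positivity
  have hptwise : ∀ n, c n ≤ d1 n + d2 n := by
    intro n
    simp only [hcdef, hd1def]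
    by_cases h1 : n ≤ m
    · rw [if_pos h1, if_pos h1]
      simpa using hd2nn n
    · rw [if_neg h1, if_neg h1]
      push_neg at h1
      by_cases h2 : n ≤ 2*m
      · have hnear := aux_near hm2 h1 h2 (by linarith : (0:ℝ) ≤ σ)
        rw [← hrdef, ← hLdef] at hnear
        have hd2n := hd2nn n
        simp only [hd2def] at hd2n ⊢
        linarith
      · push_neg at h2
        have hfarb := aux_far hm2 h2 (by linarith : (3:ℝ) ≤ σ)
        have hd1n : (0:ℝ) ≤ 2*L*r^(n-m) := by positivity
        simp only [hd2def]
        linarith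
  have hdsum : Summable (fun n => d1 n + d2 n) := hd1sum.add hd2sum
  have hcsum : Summable c := hdsum.of_nonneg_of_le hcnn hptwise
  refine ⟨hcsum, ?_⟩
  calc ∑' n, c n ≤ ∑' n, (d1 n + d2 n) := Summable.tsum_le_tsum hptwise hcsum hdsum
  _ = ∑' n, d1 n + ∑' n, d2 n := Summable.tsum_add hd1sum hd2sum
  _ ≤ (108/53) * L * r + (1.32:ℝ) * r := by linarith
  _ ≤ 4 * L * r := by
      have h132 : (1.32:ℝ) ≤ (104/53)*L := by linarith
      nlinarith [mul_le_mul_of_nonneg_left h132 hr0.le]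


open DirichletCharacter

set_option maxHeartbeats 2000000 in
theorem G_nonzero_right {q : ℕ} [NeZero q] (hq : 1 < q)
    (χ : DirichletCharacter ℂ q) (hχ : χ.IsPrimitive)
    (m : ℕ) (hm : m = sInf {n : ℕ | 2 ≤ n ∧ χ n ≠ 0})
    (G : ℂ → ℂ)
    (hG : ∀ s : ℂ, G s = -((m : ℂ) ^ s / (χ m * Real.log m)) * deriv (LFunction χ) s)
    (s : ℂ) (hs : (8 * m : ℝ) ≤ s.re) :
    ‖G s - 1‖ ≤ 4 * Real.exp (-(s.re / (2 * m))) ∧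
      4 * Real.exp (-(s.re / (2 * m))) < 1 ∧ G s ≠ 0 := by
  -- basic facts about m
  have hset : (q+1) ∈ {n : ℕ | 2 ≤ n ∧ χ n ≠ 0} := by
    constructor
    · omega
    · have : ((q+1 : ℕ) : ZMod q) = 1 := by
        push_cast
        simp [ZMod.natCast_self]
      rw [this, map_one]
      exact one_ne_zero
  have hmem : m ∈ {n : ℕ | 2 ≤ n ∧ χ n ≠ 0} := hm ▸ Nat.sInf_mem ⟨_, hset⟩
  obtain ⟨hm2, hχm⟩ := hmem
  have hmin : ∀ k : ℕ, 2 ≤ k → k < m → χ (k : ZMod q) = 0 := by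
    intro k h2 hk
    by_contra hne
    have : m ≤ k := hm ▸ Nat.sInf_le ⟨h2, hne⟩
    omega
  have hm0 : (0:ℝ) < (m:ℝ) := by positivity
  have hm2' : (2:ℝ) ≤ (m:ℝ) := by exact_mod_cast hm2
  have hσ1 : 1 < s.re := by linarith
  have hL0 : 0 < Real.log m := Real.log_pos (by linarith)
  -- derivative of the L-function as an L-series
  have habs : LSeries.abscissaOfAbsConv (fun n : ℕ => χ n) < s.re := by
    rw [DirichletCharacter.absicssaOfAbsConv_eq_one (NeZero.ne q) χ]
    exact_mod_cast hσ1
  have hd : deriv (LFunction χ) s = - LSeries (LSeries.logMul fun n : ℕ => χ n) s := by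
    rw [deriv_LFunction_eq_deriv_LSeries χ hσ1, LSeries_deriv habs]
  have hsum : LSeriesSummable (LSeries.logMul fun n : ℕ => χ n) s :=
    LSeriesSummable_logMul_of_lt_re habs
  set f' : ℕ → ℂ := LSeries.logMul fun n : ℕ => χ n with hf'def
  -- splitting off the first term
  have hLS : LSeries f' s
      = LSeries.term f' s m + ∑' n, if n = m then 0 else LSeries.term f' s n :=
    Summable.tsum_eq_add_tsum_ite hsum m
  have hterm : LSeries.term f' s m = (Real.log m : ℂ) * χ m / (m:ℂ)^s := by
    rw [LSeries.term_of_ne_zero (by omega : m ≠ 0)]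
    congr 1
    simp only [hf'def, LSeries.logMul]
    rw [Complex.natCast_log]
  set B : ℂ := (m:ℂ)^s / (χ m * (Real.log m : ℂ)) with hBdef
  have hms : ((m:ℂ))^s ≠ 0 := by
    intro h
    rw [Complex.cpow_eq_zero_iff] at h
    have : ((m:ℂ)) ≠ 0 := by exact_mod_cast (by omega : m ≠ 0)
    exact this h.1
  have hlogC : (Real.log m : ℂ) ≠ 0 := by exact_mod_cast hL0.ne'
  have hB1 : B * LSeries.term f' s m = 1 := by
    rw [hterm, hBdef]
    have hlogC' : Complex.log ((m:ℕ):ℂ) ≠ 0 := by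
      rw [← Complex.natCast_log]; exact hlogC
    field_simp
  set R : ℂ := ∑' n, if n = m then 0 else LSeries.term f' s n with hRdef
  have hGs : G s - 1 = B * R := by
    rw [hG s, hd]
    have : -((m : ℂ) ^ s / (χ m * Real.log m)) * (- LSeries f' s) = B * LSeries f' s := by
      rw [hBdef]; ring
    rw [this, hLS, mul_add, hB1]
    ring
  -- norms
  have hBnorm : ‖B‖ = (m:ℝ)^(s.re) / Real.log m := by
    have hu : IsUnit ((m : ℕ) : ZMod q) := by
      by_contra hnu
      exact hχm (χ.map_nonunit hnu)
    have hχnorm : ‖χ ((m : ℕ) : ZMod q)‖ = 1 := by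
      rw [← hu.unit_spec]
      exact χ.unit_norm_eq_one hu.unit
    rw [hBdef, norm_div, norm_mul]
    rw [show ((m:ℂ)) = (((m:ℝ)):ℂ) by push_cast; rfl]
    rw [Complex.norm_cpow_eq_rpow_re_of_pos hm0]
    rw [Complex.norm_real, Real.norm_eq_abs, abs_of_pos hL0]
    rw [show ‖χ ((m : ℕ) : ZMod q)‖ = 1 from hχnorm]
    rw [one_mul]
  -- real comparison
  have hσ8 : 8*(m:ℝ) ≤ s.re := by exact_mod_cast hs
  obtain ⟨hcsum, hcbound⟩ := aux_key m hm2 hσ8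
  set c : ℕ → ℝ := fun n => if n ≤ m then (0:ℝ) else Real.log n * ((m:ℝ)/n)^(s.re) with hcdef
  set r : ℝ := Real.exp (-(s.re/(2*(m:ℝ)))) with hrdef
  -- summability of the complex ite function
  have hsingle : Summable (fun n : ℕ => if n = m then -(LSeries.term f' s m) else (0:ℂ)) := by
    apply summable_of_ne_finset_zero (s := {m})
    intro b hb
    simp only [Finset.mem_singleton] at hb
    rw [if_neg hb]
  have hsummR : Summable (fun n : ℕ => if n = m then (0:ℂ) else LSeries.term f' s n) := by
    have heq : (fun n : ℕ => if n = m then (0:ℂ) else LSeries.term f' s n)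
        = fun n => LSeries.term f' s n + (if n = m then -(LSeries.term f' s m) else 0) := by
      funext n
      by_cases hn : n = m
      · subst hn; simp
      · simp [hn]
    rw [heq]
    exact Summable.add hsum hsingle
  have hcnn : ∀ n, 0 ≤ c n := by
    intro n
    simp only [hcdef]
    split
    · exact le_refl 0
    · rename_i h
      have hn1 : (1:ℝ) ≤ (n:ℝ) := by exact_mod_cast (by omega : 1 ≤ n)
      have := Real.log_nonneg hn1
      positivity
  -- pointwise norm bound
  have hptR : ∀ n : ℕ, ‖if n = m then (0:ℂ) else LSeries.term f' s n‖
      ≤ c n * (m:ℝ)^(-(s.re)) := by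
    intro n
    have hrhs0 : 0 ≤ c n * (m:ℝ)^(-(s.re)) := by
      have := hcnn n
      positivity
    by_cases hnm : n = m
    · rw [if_pos hnm]
      simpa using hrhs0
    · rw [if_neg hnm, LSeries.norm_term_eq]
      by_cases hn0 : n = 0
      · rw [if_pos hn0]
        exact hrhs0
      · rw [if_neg hn0]
        have hn0' : (0:ℝ) < (n:ℝ) := by
          have : 0 < n := Nat.pos_of_ne_zero hn0
          exact_mod_cast this
        have hfn : ‖f' n‖ = ‖Complex.log n‖ * ‖χ (n : ZMod q)‖ := by
          simp only [hf'def, LSeries.logMul, norm_mul]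
        by_cases hnm2 : n ≤ m
        · -- n < m : the term vanishes
          have hlt : n < m := lt_of_le_of_ne hnm2 hnm
          have hzero : ‖f' n‖ = 0 := by
            rcases Nat.lt_or_ge n 2 with h2 | h2
            · -- n = 1
              have : n = 1 := by omega
              subst this
              rw [hfn]
              simp
            · rw [hfn, hmin n h2 hlt]
              simp
          rw [hzero]
          simpa using hrhs0
        · -- n > m : main bound
          push_neg at hnm2
          have hcval : c n * (m:ℝ)^(-(s.re)) = Real.log n / (n:ℝ)^(s.re) := by
            simp only [hcdef]
            rw [if_neg (by omega)]
            rw [Real.div_rpow hm0.le hn0'.le, Real.rpow_neg hm0.le]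
            have hMσ : (0:ℝ) < (m:ℝ)^(s.re) := Real.rpow_pos_of_pos hm0 _
            field_simp
          rw [hcval, hfn]
          have hlogn : ‖Complex.log n‖ = Real.log n := by
            rw [← Complex.natCast_log, Complex.norm_real]
            exact abs_of_nonneg (Real.log_nonneg (by exact_mod_cast (by omega : 1 ≤ n)))
          rw [hlogn]
          have hχn : ‖χ ((n:ℕ) : ZMod q)‖ ≤ 1 := χ.norm_le_one _
          have hlognn : (0:ℝ) ≤ Real.log n :=
            Real.log_nonneg (by exact_mod_cast (by omega : 1 ≤ n))
          gcongr
          exact mul_le_of_le_one_right hlognn hχn |>.trans (le_refl _)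
  -- bound on R
  have hRbound : ‖R‖ ≤ (∑' n, c n) * (m:ℝ)^(-(s.re)) := by
    rw [hRdef]
    have hnormsum : Summable (fun n : ℕ => ‖if n = m then (0:ℂ) else LSeries.term f' s n‖) :=
      hsummR.norm
    calc ‖∑' n, if n = m then (0:ℂ) else LSeries.term f' s n‖
        ≤ ∑' n, ‖if n = m then (0:ℂ) else LSeries.term f' s n‖ :=
          norm_tsum_le_tsum_norm hnormsum
    _ ≤ ∑' n, c n * (m:ℝ)^(-(s.re)) :=
          Summable.tsum_le_tsum hptR hnormsum (hcsum.mul_right _)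
    _ = (∑' n, c n) * (m:ℝ)^(-(s.re)) := tsum_mul_right
  -- main estimate
  have hmain : ‖G s - 1‖ ≤ 4 * r := by
    rw [hGs, norm_mul, hBnorm]
    have hMpow : (m:ℝ)^(s.re) * (m:ℝ)^(-(s.re)) = 1 := by
      rw [← Real.rpow_add hm0]
      simp
    calc (m:ℝ)^(s.re) / Real.log m * ‖R‖
        ≤ (m:ℝ)^(s.re) / Real.log m * ((∑' n, c n) * (m:ℝ)^(-(s.re))) := by
          apply mul_le_mul_of_nonneg_left hRbound (by positivity)
    _ ≤ (m:ℝ)^(s.re) / Real.log m * ((4 * Real.log m * r) * (m:ℝ)^(-(s.re))) := by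
          apply mul_le_mul_of_nonneg_left _ (by positivity)
          apply mul_le_mul_of_nonneg_right hcbound (Real.rpow_pos_of_pos hm0 _).le
    _ = 4 * r * ((m:ℝ)^(s.re) * (m:ℝ)^(-(s.re))) := by
          field_simp
    _ = 4 * r := by rw [hMpow, mul_one]
  have hexp5 : (5:ℝ) ≤ Real.exp 4 := by
    have := Real.add_one_le_exp (4:ℝ)
    linarith
  have hrle : r ≤ Real.exp (-(4:ℝ)) := by
    rw [hrdef, Real.exp_le_exp, neg_le_neg_iff]
    rw [le_div_iff₀ (by positivity)]
    linarith
  have hlt1 : 4 * r < 1 := by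
    have h4 : 4 * Real.exp (-(4:ℝ)) < 1 := by
      rw [Real.exp_neg]
      have := Real.exp_pos (4:ℝ)
      rw [show (4:ℝ) * (Real.exp 4)⁻¹ = 4 / Real.exp 4 by ring, div_lt_one this]
      linarith
    linarith
  refine ⟨hmain, hlt1, ?_⟩
  intro h0
  rw [h0] at hmain
  simp only [zero_sub, norm_neg, norm_one] at hmain
  linarith
end

section
/- Let χ be an odd primitive Dirichlet character of conductor q > 4π·exp(c_E) (in particular q ≥ 23). If L'(1/2 + it, χ) = 0 for some real t, then s = 1/2 + it is a multiple zero of L(s, χ). -/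
open Complex

local notation "conj'" => starRingEnd ℂ

lemma hasDerivAt_conj_conj {f : ℂ → ℂ} {d w : ℂ} (hf : HasDerivAt f d (conj' w)) :
    HasDerivAt (fun s => conj' (f (conj' s))) (conj' d) w := by
  rw [hasDerivAt_iff_tendsto] at hf ⊢
  have hc : Filter.Tendsto conj' (nhds w) (nhds (conj' w)) := (continuous_conj).tendsto w
  refine (hf.comp hc).congr fun x => ?_
  simp only [Function.comp_apply]
  congr 1
  · rw [show conj' x - conj' w = conj' (x - w) by rw [map_sub], Complex.norm_conj]
  · rw [show f (conj' x) - f (conj' w) - (conj' x - conj' w) • d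
        = conj' (conj' (f (conj' x)) - conj' (f (conj' w)) - (x - w) • conj' d) by
        simp only [map_sub, RingHomCompTriple.comp_apply, RingHom.id_apply, smul_eq_mul, map_mul,
          Complex.conj_conj]]
    rw [Complex.norm_conj]

open DirichletCharacter

variable {q : ℕ} [NeZero q]

lemma inv_apply_eq_conj (χ : DirichletCharacter ℂ q) (m : ZMod q) :
    χ⁻¹ m = conj' (χ m) := by
  rw [MulChar.inv_apply_eq_inv']
  rcases eq_or_ne (χ m) 0 with h | h
  · rw [h, inv_zero, map_zero]
  · have hu : IsUnit m := by
      by_contra hm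
      exact h (χ.map_nonunit hm)
    have hn : ‖χ m‖ = 1 := by
      have := χ.unit_norm_eq_one hu.unit
      rwa [IsUnit.unit_spec] at this
    have : conj' (χ m) * χ m = 1 := by
      rw [mul_comm, Complex.mul_conj, Complex.normSq_eq_norm_sq, hn]
      norm_num
    exact inv_eq_of_mul_eq_one_left this

lemma Gammaℝ_conj' (z : ℂ) : Gammaℝ (conj' z) = conj' (Gammaℝ z) := by
  rw [Gammaℝ_def, Gammaℝ_def, map_mul, ← Complex.Gamma_conj]
  congr 1
  · rw [show -conj' z / 2 = conj' (-z / 2) by rw [map_div₀, map_neg, Complex.conj_ofNat]]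
    rw [Complex.cpow_conj, Complex.conj_ofReal]
    rw [Complex.arg_ofReal_of_nonneg Real.pi_pos.le]
    exact Real.pi_ne_zero.symm
  · congr 1
    rw [map_div₀, Complex.conj_ofNat]

lemma conj_LSeries (χ : DirichletCharacter ℂ q) (s : ℂ) :
    conj' (LSeries (fun n => χ n) (conj' s)) = LSeries (fun n => χ⁻¹ n) s := by
  rw [LSeries, LSeries, show conj' (∑' (n : ℕ), LSeries.term (fun n => χ n) (conj' s) n)
      = ∑' (n : ℕ), conj' (LSeries.term (fun n => χ n) (conj' s) n) from tsum_star]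
  congr 1
  ext n
  rw [LSeries.term_def, LSeries.term_def]
  split_ifs with h
  · simp
  · rw [map_div₀]
    congr 1
    · exact (inv_apply_eq_conj χ n).symm
    · show conj' (_ ^ conj' s) = _
      rw [← Complex.conj_cpow _ _ (by rw [show ((n:ℂ)) = ((n:ℝ):ℂ) by norm_num, Complex.arg_ofReal_of_nonneg (Nat.cast_nonneg n)]; exact Real.pi_ne_zero.symm),
        Complex.conj_natCast]

lemma odd_ne_one {χ : DirichletCharacter ℂ q} (hodd : χ.Odd) : χ ≠ 1 := by
  intro h
  have := hodd
  rw [h, DirichletCharacter.Odd, MulChar.one_apply (isUnit_one.neg)] at this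
  norm_num at this

lemma inv_odd {χ : DirichletCharacter ℂ q} (hodd : χ.Odd) : χ⁻¹.Odd := by
  rw [DirichletCharacter.Odd, inv_apply_eq_conj, hodd, map_neg, map_one]

lemma completedLFunction_inv_conj {χ : DirichletCharacter ℂ q} (hodd : χ.Odd) (s : ℂ) :
    completedLFunction χ⁻¹ s = conj' (completedLFunction χ (conj' s)) := by
  have hχ1 : χ ≠ 1 := odd_ne_one hodd
  have hinv1 : χ⁻¹ ≠ 1 := fun h => hχ1 (inv_eq_one.mp h)
  have hd1 : Differentiable ℂ (completedLFunction χ⁻¹) := differentiable_completedLFunction hinv1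
  have hd2 : Differentiable ℂ (fun s => conj' (completedLFunction χ (conj' s))) := by
    intro w
    exact (hasDerivAt_conj_conj ((differentiable_completedLFunction hχ1 _).hasDerivAt)).differentiableAt
  have heq : Set.EqOn (completedLFunction χ⁻¹)
      (fun s => conj' (completedLFunction χ (conj' s))) {s : ℂ | 1 < s.re} := by
    intro s hs
    have hs' : 1 < s.re := hs
    have hcs : 1 < (conj' s).re := by rwa [Complex.conj_re]
    have key : ∀ (ψ : DirichletCharacter ℂ q), ψ.Odd → ∀ (w : ℂ), 1 < w.re →
        completedLFunction ψ w = Gammaℝ (w + 1) * LSeries (fun n => ψ n) w := by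
      intro ψ hψ w hw
      have h0 : Gammaℝ (w + 1) ≠ 0 := Complex.Gammaℝ_ne_zero_of_re_pos (by simp; linarith)
      have := LFunction_eq_completed_div_gammaFactor ψ w (Or.inl (by intro h; rw [h] at hw; simp at hw; linarith))
      rw [hψ.gammaFactor_def] at this
      rw [LFunction_eq_LSeries ψ hw] at this
      field_simp [h0] at this
      rw [← this]; ring
    rw [key χ⁻¹ (inv_odd hodd) s hs', show (fun s => conj' (completedLFunction χ (conj' s))) s
        = conj' (completedLFunction χ (conj' s)) from rfl,
      key χ hodd (conj' s) hcs, map_mul, ← conj_LSeries]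
    congr 1
    rw [← Gammaℝ_conj', map_add, map_one, Complex.conj_conj]
  have h2 : (2:ℂ) ∈ {s : ℂ | 1 < s.re} := by norm_num
  have hopen : IsOpen {s : ℂ | 1 < s.re} := continuous_re.isOpen_preimage _ isOpen_Ioi
  have := AnalyticOnNhd.eqOn_of_preconnected_of_eventuallyEq
    (𝕜 := ℂ) (f := completedLFunction χ⁻¹) (g := fun s => conj' (completedLFunction χ (conj' s)))
    ((analyticOnNhd_univ_iff_differentiable.mpr hd1).mono (Set.subset_univ _))
    ((analyticOnNhd_univ_iff_differentiable.mpr hd2).mono (Set.subset_univ _))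
    (isPreconnected_univ (α := ℂ))
    (Set.mem_univ (2:ℂ))
    (heq.eventuallyEq_of_mem (hopen.mem_nhds h2))
  exact this (Set.mem_univ s)

lemma isPrimitive_inv {χ : DirichletCharacter ℂ q} (h : χ.IsPrimitive) : χ⁻¹.IsPrimitive := by
  have hsub : ∀ (ψ : DirichletCharacter ℂ q) (d : ℕ), ψ.FactorsThrough d → ψ⁻¹.FactorsThrough d := by
    rintro ψ d ⟨hd, ψ₀, rfl⟩
    exact ⟨hd, ψ₀⁻¹, by rw [map_inv]⟩
  have hset : conductorSet χ⁻¹ = conductorSet χ := by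
    ext d
    constructor
    · intro hd
      have := hsub χ⁻¹ d hd
      rwa [inv_inv] at this
    · exact fun hd => hsub χ d hd
  rw [IsPrimitive, DirichletCharacter.conductor, hset]
  exact h

lemma re_completed_logDeriv {χ : DirichletCharacter ℂ q} (hχ : χ.IsPrimitive) (hodd : χ.Odd)
    (t : ℝ) :
    (deriv (completedLFunction χ) (1/2 + t*Complex.I)
        * conj' (completedLFunction χ (1/2 + t*Complex.I))).re
      = -(Real.log q) / 2 * Complex.normSq (completedLFunction χ (1/2 + t*Complex.I)) := by
  set s₀ : ℂ := 1/2 + t*Complex.I with hs₀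
  set f := completedLFunction χ with hf
  have hχ1 : χ ≠ 1 := odd_ne_one hodd
  have hq0 : (q:ℂ) ≠ 0 := Nat.cast_ne_zero.mpr (NeZero.ne q)
  set W : ℂ := rootNumber χ⁻¹ with hW
  -- global identity
  have hglob : ∀ s : ℂ, conj' (f (conj' (1 - s))) = (q:ℂ)^(s - 1/2) * W * f s := by
    intro s
    have h1 := (isPrimitive_inv hχ).completedLFunction_one_sub s
    rw [inv_inv] at h1
    rw [← h1, completedLFunction_inv_conj hodd]
  have hconj_s₀ : conj' (1 - s₀) = s₀ := by
    rw [hs₀]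
    simp [Complex.ext_iff]
    norm_num
  -- derivative of LHS
  have hfd : HasDerivAt f (deriv f s₀) s₀ := (differentiable_completedLFunction hχ1 s₀).hasDerivAt
  set f' := deriv f s₀ with hf'
  have hg : HasDerivAt (fun s => conj' (f (conj' s))) (conj' f') (1 - s₀) := by
    apply hasDerivAt_conj_conj
    rwa [hconj_s₀]
  have hL : HasDerivAt (fun s => conj' (f (conj' (1 - s)))) (-(conj' f')) s₀ := by
    have hi : HasDerivAt (fun s : ℂ => 1 - s) (-1) s₀ := by
      simpa using (hasDerivAt_id s₀).const_sub 1
    have h := hg.comp s₀ hi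
    rw [show conj' f' * -1 = -(conj' f') by ring] at h
    exact h
  -- derivative of RHS
  have hR : HasDerivAt (fun s => (q:ℂ)^(s - 1/2) * W * f s)
      ((Complex.log q * ((q:ℂ)^(s₀ - 1/2) * W)) * f s₀ + ((q:ℂ)^(s₀ - 1/2) * W) * f') s₀ := by
    have h1 : HasDerivAt (fun s : ℂ => (q:ℂ)^(s - 1/2)) ((q:ℂ)^(s₀ - 1/2) * Complex.log q) s₀ := by
      exact (((hasDerivAt_id s₀).sub_const (1/2)).const_cpow (Or.inl hq0)).congr_deriv (by simp)
    have h2 : HasDerivAt (fun s : ℂ => (q:ℂ)^(s - 1/2) * W) ((q:ℂ)^(s₀ - 1/2) * Complex.log q * W) s₀ :=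
      h1.mul_const W
    have := h2.mul hfd
    refine this.congr_deriv ?_
    ring
  -- the two functions are equal
  have hLR : HasDerivAt (fun s => (q:ℂ)^(s - 1/2) * W * f s) (-(conj' f')) s₀ := by
    have : (fun s => conj' (f (conj' (1 - s)))) = fun s => (q:ℂ)^(s - 1/2) * W * f s :=
      funext hglob
    rwa [this] at hL
  have hder : -(conj' f') = (Complex.log q * ((q:ℂ)^(s₀ - 1/2) * W)) * f s₀
      + ((q:ℂ)^(s₀ - 1/2) * W) * f' := hLR.unique hR
  -- value identity at s₀
  have hval : conj' (f s₀) = (q:ℂ)^(s₀ - 1/2) * W * f s₀ := by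
    have := hglob s₀
    rwa [hconj_s₀] at this
  -- algebra
  set C : ℂ := (q:ℂ)^(s₀ - 1/2) * W with hC
  have key : f' * conj' (f s₀) + conj' f' * f s₀ = -(Complex.log q) * (f s₀ * conj' (f s₀)) := by
    linear_combination (-(f s₀)) * hder + (f' + Complex.log (q:ℂ) * f s₀) * hval
  -- take real parts
  have hre : (f' * conj' (f s₀)).re + (conj' f' * f s₀).re
      = -(Real.log q) * Complex.normSq (f s₀) := by
    have := congrArg Complex.re key
    rwa [Complex.add_re, ← Complex.natCast_log, show (-(Real.log q : ℂ) * (f s₀ * conj' (f s₀)))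
        = ((-(Real.log q) * Complex.normSq (f s₀) : ℝ) : ℂ) by
        rw [Complex.mul_conj]; push_cast; ring,
      Complex.ofReal_re] at this
  have hsym : (conj' f' * f s₀).re = (f' * conj' (f s₀)).re := by
    rw [show conj' f' * f s₀ = conj' (f' * conj' (f s₀)) by rw [map_mul, Complex.conj_conj],
      Complex.conj_re]
  rw [hsym] at hre
  linarith

open Finset in
lemma normSq_gammaSeq_ratio {a y : ℝ} (ha : 0 < a) {n : ℕ} (hn : n ≠ 0) :
    Complex.normSq (Complex.GammaSeq (a + y*Complex.I) n)
      / Complex.normSq (Complex.GammaSeq ((a:ℝ):ℂ) n)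
      = ∏ k ∈ range (n+1), ((a+k)^2 / ((a+k)^2 + y^2)) := by
  have hn' : (0:ℝ) < n := by positivity
  have h1 : Complex.normSq (Complex.GammaSeq (a + y*Complex.I) n)
      = (n:ℝ)^a * (n:ℝ)^a * ((n.factorial : ℝ) * n.factorial)
        / ∏ k ∈ range (n+1), ((a+k)^2 + y^2) := by
    rw [Complex.GammaSeq, map_div₀, map_mul,
      map_prod Complex.normSq (fun j : ℕ => (a + y*Complex.I + (j:ℂ))) (range (n+1))]
    congr 1
    congr 1
    · rw [Complex.normSq_eq_norm_sq, show ((n:ℂ)) = (((n:ℝ)):ℂ) by norm_num,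
        Complex.norm_cpow_eq_rpow_re_of_pos hn']
      simp [sq]
    · rw [Complex.normSq_natCast]
    refine Finset.prod_congr rfl fun k _ => ?_
    rw [Complex.normSq_apply]
    simp
    ring
  have h2 : Complex.normSq (Complex.GammaSeq ((a:ℝ):ℂ) n)
      = (n:ℝ)^a * (n:ℝ)^a * ((n.factorial : ℝ) * n.factorial)
        / ∏ k ∈ range (n+1), ((a+k)^2) := by
    rw [Complex.GammaSeq, map_div₀, map_mul,
      map_prod Complex.normSq (fun j : ℕ => (((a:ℝ):ℂ) + (j:ℂ))) (range (n+1))]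
    congr 1
    congr 1
    · rw [Complex.normSq_eq_norm_sq, show ((n:ℂ)) = (((n:ℝ)):ℂ) by norm_num,
        Complex.norm_cpow_eq_rpow_re_of_pos hn']
      simp [sq]
    · rw [Complex.normSq_natCast]
    refine Finset.prod_congr rfl fun k _ => ?_
    rw [Complex.normSq_apply]
    simp
    ring
  rw [h1, h2, Finset.prod_div_distrib]
  have hP1 : (0:ℝ) < ∏ k ∈ range (n+1), ((a+k)^2 + y^2) :=
    Finset.prod_pos fun k _ => by positivity
  have hP2 : (0:ℝ) < ∏ k ∈ range (n+1), ((a+k)^2) :=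
    Finset.prod_pos fun k _ => by positivity
  have hN : (0:ℝ) < (n:ℝ)^a * (n:ℝ)^a * ((n.factorial : ℝ) * n.factorial) := by
    have := Nat.factorial_pos n
    positivity
  field_simp

lemma q_monotoneOn (y : ℝ) :
    MonotoneOn (fun a : ℝ => Complex.normSq (Complex.Gamma (a + y*Complex.I))
      / (Real.Gamma a)^2) (Set.Ioi 0) := by
  have hlim : ∀ a : ℝ, 0 < a → Filter.Tendsto
      (fun n => Complex.normSq (Complex.GammaSeq (a + y*Complex.I) n)
        / Complex.normSq (Complex.GammaSeq ((a:ℝ):ℂ) n)) Filter.atTop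
      (nhds (Complex.normSq (Complex.Gamma (a + y*Complex.I)) / (Real.Gamma a)^2)) := by
    intro a ha
    have h1 : Filter.Tendsto (fun n => Complex.normSq (Complex.GammaSeq (a + y*Complex.I) n))
        Filter.atTop (nhds (Complex.normSq (Complex.Gamma (a + y*Complex.I)))) :=
      (Complex.continuous_normSq.tendsto _).comp (Complex.GammaSeq_tendsto_Gamma _)
    have h2 : Filter.Tendsto (fun n => Complex.normSq (Complex.GammaSeq ((a:ℝ):ℂ) n))
        Filter.atTop (nhds (Complex.normSq (Complex.Gamma ((a:ℝ):ℂ)))) :=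
      (Complex.continuous_normSq.tendsto _).comp (Complex.GammaSeq_tendsto_Gamma _)
    have hG : Complex.normSq (Complex.Gamma ((a:ℝ):ℂ)) = (Real.Gamma a)^2 := by
      rw [Complex.Gamma_ofReal, Complex.normSq_ofReal, sq]
    have hne : Complex.normSq (Complex.Gamma ((a:ℝ):ℂ)) ≠ 0 := by
      rw [hG]
      have := Real.Gamma_pos_of_pos ha
      positivity
    have := h1.div h2 hne
    rwa [hG] at this
  intro a₁ h₁ a₂ h₂ h12
  have h₁' : (0:ℝ) < a₁ := h₁
  have h₂' : (0:ℝ) < a₂ := h₂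
  refine le_of_tendsto_of_tendsto (hlim a₁ h₁) (hlim a₂ h₂) ?_
  filter_upwards [Filter.eventually_ne_atTop 0] with n hn
  rw [normSq_gammaSeq_ratio h₁' hn, normSq_gammaSeq_ratio h₂' hn]
  refine Finset.prod_le_prod (fun k _ => by positivity) (fun k _ => ?_)
  have hsq : (a₁ + k)^2 ≤ (a₂ + k)^2 := by
    have hk : (0:ℝ) ≤ k := Nat.cast_nonneg k
    refine pow_le_pow_left₀ (by linarith) (by linarith) 2
  rw [div_le_div_iff₀ (by positivity) (by positivity)]
  nlinarith [sq_nonneg y]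

lemma re_logDeriv_Gamma_ge (y : ℝ) :
    deriv Real.Gamma (3/4) / Real.Gamma (3/4)
      ≤ (deriv Complex.Gamma ((3/4:ℝ) + y*Complex.I)
          * conj' (Complex.Gamma ((3/4:ℝ) + y*Complex.I))).re
        / Complex.normSq (Complex.Gamma ((3/4:ℝ) + y*Complex.I)) := by
  set z₀ : ℂ := (3/4:ℝ) + y*Complex.I with hz₀
  have hz : ∀ m : ℕ, z₀ ≠ -m := by
    intro m h
    have := congrArg Complex.re h
    simp [hz₀] at this
    have hm : (0:ℝ) ≤ m := Nat.cast_nonneg m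
    linarith
  have hΓne : Complex.Gamma z₀ ≠ 0 := Complex.Gamma_ne_zero hz
  have hN : 0 < Complex.normSq (Complex.Gamma z₀) := by
    rcases (Complex.normSq_pos).mpr hΓne with h
    exact h
  set d := deriv Complex.Gamma z₀ with hd
  have hΓd : HasDerivAt Complex.Gamma d z₀ := (Complex.differentiableAt_Gamma _ hz).hasDerivAt
  have hfc : HasDerivAt (fun w : ℂ => Complex.Gamma (w + y*Complex.I)) d (((3/4:ℝ)):ℂ) := by
    have hi : HasDerivAt (fun w : ℂ => w + y*Complex.I) 1 (((3/4:ℝ)):ℂ) :=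
      (hasDerivAt_id _).add_const _
    have := hΓd.comp (((3/4:ℝ)):ℂ) hi
    exact this.congr_deriv (mul_one d)
  have hfr : HasDerivAt (fun a : ℝ => Complex.Gamma ((a:ℂ) + y*Complex.I)) d (3/4:ℝ) :=
    hfc.comp_ofReal
  have hre : HasDerivAt (fun a : ℝ => (Complex.Gamma ((a:ℂ) + y*Complex.I)).re) d.re (3/4:ℝ) :=
    Complex.reCLM.hasFDerivAt.comp_hasDerivAt _ hfr
  have him : HasDerivAt (fun a : ℝ => (Complex.Gamma ((a:ℂ) + y*Complex.I)).im) d.im (3/4:ℝ) :=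
    Complex.imCLM.hasFDerivAt.comp_hasDerivAt _ hfr
  set R : ℝ := (d * conj' (Complex.Gamma z₀)).re with hR
  have hF : HasDerivAt (fun a : ℝ => Complex.normSq (Complex.Gamma ((a:ℂ) + y*Complex.I)))
      (2 * R) (3/4:ℝ) := by
    have h1 := (hre.mul hre).add (him.mul him)
    have hfun : (fun a : ℝ => Complex.normSq (Complex.Gamma ((a:ℂ) + y*Complex.I)))
        = fun a : ℝ => (Complex.Gamma ((a:ℂ) + y*Complex.I)).re
            * (Complex.Gamma ((a:ℂ) + y*Complex.I)).re
          + (Complex.Gamma ((a:ℂ) + y*Complex.I)).im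
            * (Complex.Gamma ((a:ℂ) + y*Complex.I)).im := by
      funext a
      rw [Complex.normSq_apply]
    rw [hfun]
    refine h1.congr_deriv ?_
    rw [hR, Complex.mul_re, Complex.conj_re, Complex.conj_im]
    ring
  set dR : ℝ := deriv Real.Gamma (3/4) with hdR'
  have hdR : HasDerivAt Real.Gamma dR (3/4:ℝ) := by
    refine (Real.differentiableAt_Gamma ?_).hasDerivAt
    intro m h
    have hm : (0:ℝ) ≤ m := Nat.cast_nonneg m
    have h2 : (0:ℝ) < 3/4 := by norm_num
    rw [h] at h2
    linarith
  have hGpos : 0 < Real.Gamma (3/4) := Real.Gamma_pos_of_pos (by norm_num)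
  have hg : HasDerivAt (fun a : ℝ => (Real.Gamma a)^2)
      (2 * Real.Gamma (3/4) * dR) (3/4:ℝ) := by
    have := hdR.mul hdR
    have hfun : (fun a : ℝ => (Real.Gamma a)^2) = fun a : ℝ => Real.Gamma a * Real.Gamma a := by
      funext a; ring
    rw [hfun]
    refine this.congr_deriv ?_
    ring
  have hq : HasDerivAt (fun a : ℝ => Complex.normSq (Complex.Gamma ((a:ℂ) + y*Complex.I))
        / (Real.Gamma a)^2)
      ((2 * R * (Real.Gamma (3/4))^2
        - Complex.normSq (Complex.Gamma z₀) * (2 * Real.Gamma (3/4) * dR))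
        / ((Real.Gamma (3/4))^2)^2) (3/4:ℝ) := by
    have := hF.div hg (by positivity)
    exact this
  have hq' : 0 ≤ (2 * R * (Real.Gamma (3/4))^2
      - Complex.normSq (Complex.Gamma z₀) * (2 * Real.Gamma (3/4) * dR))
      / ((Real.Gamma (3/4))^2)^2 := by
    rw [hasDerivAt_iff_tendsto_slope] at hq
    have hmono' := hq.mono_left (nhdsWithin_mono _ (fun x (hx : x ∈ Set.Ioi (3/4:ℝ)) => ne_of_gt hx))
    refine ge_of_tendsto hmono' ?_
    filter_upwards [eventually_mem_nhdsWithin] with x hx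
    have hx' : (3/4:ℝ) < x := hx
    rw [slope_def_field]
    apply div_nonneg _ (by linarith)
    have := q_monotoneOn y (Set.mem_Ioi.mpr (by norm_num : (0:ℝ) < 3/4))
      (Set.mem_Ioi.mpr (by linarith : (0:ℝ) < x)) (le_of_lt hx')
    simpa using sub_nonneg.mpr this
  have hnum : 0 ≤ 2 * R * (Real.Gamma (3/4))^2
      - Complex.normSq (Complex.Gamma z₀) * (2 * Real.Gamma (3/4) * dR) := by
    have hc : (0:ℝ) < ((Real.Gamma (3/4))^2)^2 := by positivity
    have := mul_nonneg hq' (le_of_lt hc)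
    rwa [div_mul_cancel₀] at this
    exact ne_of_gt hc
  rw [div_le_div_iff₀ hGpos hN]
  nlinarith [hGpos, hN]

lemma gamma_quarter_upper : Real.Gamma (1/4) ≤ 2 + Real.sqrt Real.pi := by
  have h32 : Real.Gamma (3/2) = Real.sqrt Real.pi / 2 := by
    have h := Real.Gamma_add_one (s := 1/2) (by norm_num)
    rw [Real.Gamma_one_half_eq] at h
    norm_num at h
    rw [h]
    ring
  have hmid : Real.Gamma (5/4) ≤ 1/2 * Real.Gamma 1 + 1/2 * Real.Gamma (3/2) := by
    have h := Real.convexOn_Gamma.2 (Set.mem_Ioi.mpr (by norm_num : (0:ℝ) < 1))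
      (Set.mem_Ioi.mpr (by norm_num : (0:ℝ) < 3/2))
      (by norm_num : (0:ℝ) ≤ 1/2) (by norm_num : (0:ℝ) ≤ 1/2) (by norm_num)
    simp only [smul_eq_mul] at h
    rw [show (1/2:ℝ) * 1 + 1/2 * (3/2) = 5/4 by norm_num] at h
    linarith
  have h14 : Real.Gamma (5/4) = 1/4 * Real.Gamma (1/4) := by
    have h := Real.Gamma_add_one (s := 1/4) (by norm_num)
    rw [show (5/4 : ℝ) = 1/4 + 1 by norm_num, h]
  rw [Real.Gamma_one, h32] at hmid
  rw [h14] at hmid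
  linarith

lemma gamma_three_quarter_lower :
    Real.pi * Real.sqrt 2 / (2 + Real.sqrt Real.pi) ≤ Real.Gamma (3/4) := by
  have hrefl := Real.Gamma_mul_Gamma_one_sub (1/4)
  rw [show (1 - 1/4 : ℝ) = 3/4 by norm_num, show Real.pi * (1/4) = Real.pi/4 by ring,
    Real.sin_pi_div_four] at hrefl
  have hs2 : Real.sqrt 2 > 0 := Real.sqrt_pos.mpr (by norm_num)
  have hs2' : Real.sqrt 2 * Real.sqrt 2 = 2 := Real.mul_self_sqrt (by norm_num)
  have hval : Real.Gamma (1/4) * Real.Gamma (3/4) = Real.pi * Real.sqrt 2 := by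
    rw [hrefl]
    field_simp
    nlinarith [Real.pi_pos]
  have h4pos : 0 < Real.Gamma (1/4) := Real.Gamma_pos_of_pos (by norm_num)
  have h34pos : 0 < Real.Gamma (3/4) := Real.Gamma_pos_of_pos (by norm_num)
  have hspos : 0 < Real.sqrt Real.pi := Real.sqrt_pos.mpr Real.pi_pos
  rw [div_le_iff₀ (by positivity)]
  calc Real.pi * Real.sqrt 2 = Real.Gamma (3/4) * Real.Gamma (1/4) := by rw [← hval]; ring
    _ ≤ Real.Gamma (3/4) * (2 + Real.sqrt Real.pi) := by
        exact mul_le_mul_of_nonneg_left gamma_quarter_upper (le_of_lt h34pos)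

lemma log_numeric :
    4 * Real.log (2 + Real.sqrt Real.pi)
      < 4 * Real.log 2 + 2 * Real.log Real.pi + Real.eulerMascheroniConstant := by
  have hspos : 0 < Real.sqrt Real.pi := Real.sqrt_pos.mpr Real.pi_pos
  have hsqrt : (8/5 : ℝ) ≤ Real.sqrt Real.pi := by
    rw [show (8/5 : ℝ) = Real.sqrt ((8/5)^2) by rw [Real.sqrt_sq (by norm_num)]]
    apply Real.sqrt_le_sqrt
    nlinarith [Real.pi_gt_three]
  have h1 : 2 + Real.sqrt Real.pi ≤ 9/8 * (2 * Real.sqrt Real.pi) := by linarith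
  have h2 : Real.log (2 + Real.sqrt Real.pi) ≤ Real.log (9/8) + Real.log 2
      + Real.log Real.pi / 2 := by
    calc Real.log (2 + Real.sqrt Real.pi) ≤ Real.log (9/8 * (2 * Real.sqrt Real.pi)) :=
          Real.log_le_log (by positivity) h1
      _ = Real.log (9/8) + (Real.log 2 + Real.log (Real.sqrt Real.pi)) := by
          rw [Real.log_mul (by norm_num) (by positivity), Real.log_mul (by norm_num) (ne_of_gt hspos)]
      _ = Real.log (9/8) + Real.log 2 + Real.log Real.pi / 2 := by
          rw [Real.log_sqrt Real.pi_pos.le]; ring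
  have h3 : Real.log (9/8 : ℝ) ≤ 1/8 := by
    have := Real.log_le_sub_one_of_pos (show (0:ℝ) < 9/8 by norm_num)
    linarith
  have h4 : (1/2 : ℝ) < Real.eulerMascheroniConstant := Real.one_half_lt_eulerMascheroniConstant
  linarith

lemma psi_three_quarter_bound :
    -(Real.eulerMascheroniConstant + Real.log 4)
      < deriv Real.Gamma (3/4) / Real.Gamma (3/4) := by
  have hGpos : 0 < Real.Gamma (3/4) := Real.Gamma_pos_of_pos (by norm_num)
  have hG12 : Real.Gamma (1/2) = Real.sqrt Real.pi := Real.Gamma_one_half_eq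
  have hdR : HasDerivAt Real.Gamma (deriv Real.Gamma (3/4)) (3/4:ℝ) := by
    refine (Real.differentiableAt_Gamma ?_).hasDerivAt
    intro m h
    have hm : (0:ℝ) ≤ m := Nat.cast_nonneg m
    have h2 : (0:ℝ) < 3/4 := by norm_num
    rw [h] at h2
    linarith
  have hL : HasDerivAt (Real.log ∘ Real.Gamma) (deriv Real.Gamma (3/4) / Real.Gamma (3/4))
      (3/4:ℝ) := hdR.log (ne_of_gt hGpos)
  -- slope inequality from convexity
  have hslope : 4 * (Real.log (Real.Gamma (3/4)) - Real.log (Real.Gamma (1/2)))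
      ≤ deriv Real.Gamma (3/4) / Real.Gamma (3/4) := by
    rw [hasDerivAt_iff_tendsto_slope] at hL
    have hmono' := hL.mono_left (nhdsWithin_mono _
      (fun x (hx : x ∈ Set.Iio (3/4:ℝ)) => ne_of_lt hx))
    refine ge_of_tendsto hmono' ?_
    filter_upwards [Ioo_mem_nhdsLT (show (1/2:ℝ) < 3/4 by norm_num)] with x hx
    obtain ⟨hx1, hx2⟩ := hx
    have key := Real.convexOn_log_Gamma.secant_mono
      (Set.mem_Ioi.mpr (show (0:ℝ) < 3/4 by norm_num))
      (Set.mem_Ioi.mpr (show (0:ℝ) < 1/2 by norm_num))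
      (Set.mem_Ioi.mpr (show (0:ℝ) < x by linarith))
      (by norm_num) (ne_of_lt hx2) (le_of_lt hx1)
    rw [slope_def_field]
    have hrw : ((Real.log ∘ Real.Gamma) (1/2) - (Real.log ∘ Real.Gamma) (3/4)) / (1/2 - 3/4)
        = 4 * (Real.log (Real.Gamma (3/4)) - Real.log (Real.Gamma (1/2))) := by
      simp only [Function.comp_apply]
      ring
    rw [hrw] at key
    exact key
  have hlog34 : Real.log (Real.pi * Real.sqrt 2 / (2 + Real.sqrt Real.pi))
      ≤ Real.log (Real.Gamma (3/4)) := by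
    apply Real.log_le_log (by positivity) gamma_three_quarter_lower
  have hspos : 0 < Real.sqrt Real.pi := Real.sqrt_pos.mpr Real.pi_pos
  have hexp : Real.log (Real.pi * Real.sqrt 2 / (2 + Real.sqrt Real.pi))
      = Real.log Real.pi + Real.log 2 / 2 - Real.log (2 + Real.sqrt Real.pi) := by
    rw [Real.log_div (by positivity) (by positivity),
      Real.log_mul (ne_of_gt Real.pi_pos) (by positivity),
      Real.log_sqrt (by norm_num : (0:ℝ) ≤ 2)]
  have hlog4 : Real.log 4 = 2 * Real.log 2 := by
    rw [show (4:ℝ) = 2^2 by norm_num, Real.log_pow]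
    push_cast
    ring
  have := log_numeric
  rw [hG12] at hslope
  have hs2 : Real.log (Real.sqrt Real.pi) = Real.log Real.pi / 2 :=
    Real.log_sqrt Real.pi_pos.le
  calc -(Real.eulerMascheroniConstant + Real.log 4)
      < 4 * (Real.log (Real.Gamma (3/4)) - Real.log (Real.sqrt Real.pi)) := by
        have h5 : 4 * Real.log (Real.Gamma (3/4))
            ≥ 4 * (Real.log Real.pi + Real.log 2 / 2 - Real.log (2 + Real.sqrt Real.pi)) := by
          rw [← hexp]
          linarith
        rw [hs2, hlog4]
        linarith
    _ ≤ deriv Real.Gamma (3/4) / Real.Gamma (3/4) := hslope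

theorem L'_zero_implies_multiple_zero_odd {q : ℕ} [NeZero q]
    (hq : 4 * Real.pi * Real.exp Real.eulerMascheroniConstant < (q : ℝ))
    (χ : DirichletCharacter ℂ q) (hχ : χ.IsPrimitive) (hodd : χ.Odd)
    (t : ℝ) (ht : deriv (LFunction χ) (1 / 2 + t * Complex.I) = 0) :
    LFunction χ (1 / 2 + t * Complex.I) = 0 := by
  by_contra hL0
  set s₀ : ℂ := 1/2 + t*Complex.I with hs₀def
  have hqR : (12:ℝ) < q := by
    have h1 : (1:ℝ) ≤ Real.exp Real.eulerMascheroniConstant := by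
      rw [show (1:ℝ) = Real.exp 0 by simp]
      exact Real.exp_le_exp.mpr (le_of_lt (by linarith [Real.one_half_lt_eulerMascheroniConstant]))
    nlinarith [Real.pi_gt_three]
  have hq1 : q ≠ 1 := by
    intro h
    rw [h] at hqR
    norm_num at hqR
  have hχ1 : χ ≠ 1 := odd_ne_one hodd
  set f := completedLFunction χ with hfdef
  set z₀ : ℂ := (s₀ + 1)/2 with hz₀def
  have hz₀eq : z₀ = ((3/4:ℝ):ℂ) + (t/2)*Complex.I := by
    rw [hz₀def, hs₀def]
    push_cast
    ring
  have hz₀ne : ∀ m : ℕ, z₀ ≠ -m := by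
    intro m h
    have := congrArg Complex.re h
    rw [hz₀eq] at this
    simp at this
    have hm : (0:ℝ) ≤ m := Nat.cast_nonneg m
    linarith
  have hΓz₀ : Complex.Gamma z₀ ≠ 0 := Complex.Gamma_ne_zero hz₀ne
  have hπ0 : ((Real.pi:ℝ):ℂ) ≠ 0 := Complex.ofReal_ne_zero.mpr Real.pi_ne_zero
  have hpow0 : ((Real.pi:ℝ):ℂ)^(-z₀) ≠ 0 := by
    simp [Complex.cpow_eq_zero_iff, hπ0]
  -- G and its value/nonvanishing at s₀
  have hGval : ∀ s : ℂ, Complex.Gammaℝ (s + 1) = ((Real.pi:ℝ):ℂ)^(-(s+1)/2) * Complex.Gamma ((s+1)/2) :=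
    fun s => Complex.Gammaℝ_def (s+1)
  have hGne : Complex.Gammaℝ (s₀ + 1) ≠ 0 := by
    rw [hGval]
    apply mul_ne_zero
    · simp [Complex.cpow_eq_zero_iff, hπ0]
    · rw [show (s₀+1)/2 = z₀ from rfl]
      exact hΓz₀
  -- L as f / Gammaℝ(s+1) globally
  have hLfun : LFunction χ = fun s => f s / Complex.Gammaℝ (s + 1) := by
    funext s
    rw [LFunction_eq_completed_div_gammaFactor χ s (Or.inr hq1), hodd.gammaFactor_def]
  have hf0 : f s₀ ≠ 0 := by
    intro h
    apply hL0
    rw [hLfun]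
    show f s₀ / _ = 0
    rw [h, zero_div]
  -- derivative of G at s₀
  set dΓ : ℂ := deriv Complex.Gamma z₀ with hdΓ
  have hΓd : HasDerivAt Complex.Gamma dΓ z₀ := (Complex.differentiableAt_Gamma _ hz₀ne).hasDerivAt
  have hinner : HasDerivAt (fun s : ℂ => (s+1)/2) (1/2) s₀ := by
    simpa using ((hasDerivAt_id s₀).add_const 1).div_const 2
  have hinner' : HasDerivAt (fun s : ℂ => -((s+1)/2)) (-(1/2)) s₀ := hinner.neg
  have hΓcomp : HasDerivAt (fun s : ℂ => Complex.Gamma ((s+1)/2)) (dΓ * (1/2)) s₀ :=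
    hΓd.comp s₀ hinner
  have hpowd : HasDerivAt (fun s : ℂ => ((Real.pi:ℝ):ℂ)^(-((s+1)/2)))
      (((Real.pi:ℝ):ℂ)^(-z₀) * Complex.log (Real.pi:ℝ) * (-(1/2))) s₀ := by
    have := hinner'.const_cpow (c := ((Real.pi:ℝ):ℂ)) (Or.inl hπ0)
    simpa using this
  set Gd : ℂ := ((Real.pi:ℝ):ℂ)^(-z₀) * Complex.log (Real.pi:ℝ) * (-(1/2)) * Complex.Gamma z₀
      + ((Real.pi:ℝ):ℂ)^(-z₀) * (dΓ * (1/2)) with hGddef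
  have hGd : HasDerivAt (fun s : ℂ => Complex.Gammaℝ (s + 1)) Gd s₀ := by
    have heq : (fun s : ℂ => Complex.Gammaℝ (s + 1))
        = fun s : ℂ => ((Real.pi:ℝ):ℂ)^(-((s+1)/2)) * Complex.Gamma ((s+1)/2) := by
      funext s
      rw [hGval s, neg_div]
    rw [heq]
    have := hpowd.mul hΓcomp
    rw [hGddef]
    exact this
  -- derivative of f at s₀
  have hfd : HasDerivAt f (deriv f s₀) s₀ := (differentiable_completedLFunction hχ1 s₀).hasDerivAt
  set f' : ℂ := deriv f s₀ with hf'
  -- derivative of L at s₀ is zero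
  have hLd : HasDerivAt (LFunction χ)
      ((f' * Complex.Gammaℝ (s₀ + 1) - f s₀ * Gd) / (Complex.Gammaℝ (s₀ + 1))^2) s₀ := by
    rw [hLfun]
    exact hfd.div hGd hGne
  have hL'0 : f' * Complex.Gammaℝ (s₀ + 1) = f s₀ * Gd := by
    have := hLd.deriv
    rw [ht] at this
    have h2 := div_eq_zero_iff.mp this.symm
    rcases h2 with h2 | h2
    · exact sub_eq_zero.mp h2
    · exact absurd h2 (pow_ne_zero 2 hGne)
  -- the key real part identity from the functional equation
  have hkey := re_completed_logDeriv hχ hodd t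
  rw [show (1/2 + (t:ℂ)*Complex.I) = s₀ from rfl] at hkey
  -- express f' in terms of Gd
  have hf'eq : f' = f s₀ * Gd / Complex.Gammaℝ (s₀ + 1) := by
    field_simp [hGne]
    exact hL'0
  -- deduce (Gd / G).re = -(log q) / 2
  have hnormpos : 0 < Complex.normSq (f s₀) := Complex.normSq_pos.mpr hf0
  have hsubst : (f' * conj' (f s₀)) = (Complex.normSq (f s₀) : ℂ)
      * (Gd / Complex.Gammaℝ (s₀ + 1)) := by
    rw [hf'eq]
    rw [show (Complex.normSq (f s₀) : ℂ) = f s₀ * conj' (f s₀) from (Complex.mul_conj _).symm]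
    ring
  have hGdre : (Gd / Complex.Gammaℝ (s₀ + 1)).re = -(Real.log q) / 2 := by
    have h1 : (f' * conj' (f s₀)).re
        = Complex.normSq (f s₀) * (Gd / Complex.Gammaℝ (s₀ + 1)).re := by
      rw [hsubst, Complex.re_ofReal_mul]
    have h2 : Complex.normSq (f s₀) * (Gd / Complex.Gammaℝ (s₀ + 1)).re
        = Complex.normSq (f s₀) * (-(Real.log q)/2) := by
      rw [← h1, hkey]
      ring
    exact mul_left_cancel₀ (ne_of_gt hnormpos) h2
  -- compute Gd / G explicitly
  have hGdiv : Gd / Complex.Gammaℝ (s₀ + 1)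
      = -(Complex.log (Real.pi:ℝ))/2 + dΓ / Complex.Gamma z₀ / 2 := by
    rw [hGval, show -(s₀+1)/2 = -z₀ by rw [hz₀def]; ring, hGddef]
    rw [show (s₀+1)/2 = z₀ from rfl]
    field_simp
  set u : ℂ := dΓ / Complex.Gamma z₀ with hu
  have hre2 : u.re = Real.log Real.pi - Real.log q := by
    have heq := hGdre
    rw [hGdiv] at heq
    have ha : (-(Complex.log ((Real.pi:ℝ):ℂ))/2).re = -(Real.log Real.pi)/2 := by
      rw [show -(Complex.log ((Real.pi:ℝ):ℂ))/2 = ((-(Real.log Real.pi)/2 : ℝ) : ℂ) by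
        rw [← Complex.ofReal_log Real.pi_pos.le]; push_cast; ring, Complex.ofReal_re]
    have hb : (u/2).re = (1/2) * u.re := by
      rw [show u/2 = (((1/2:ℝ)):ℂ) * u by push_cast; ring, Complex.re_ofReal_mul]
    rw [Complex.add_re, ha, hb] at heq
    linarith
  -- lower bound for u.re via monotonicity and the numeric digamma bound
  have hDre : u.re = (dΓ * conj' (Complex.Gamma z₀)).re / Complex.normSq (Complex.Gamma z₀) := by
    rw [hu, Complex.div_re, Complex.mul_re, Complex.conj_re, Complex.conj_im]
    field_simp
    ring
  have hmono := re_logDeriv_Gamma_ge (t/2)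
  rw [show ((3/4:ℝ):ℂ) + ((t/2:ℝ):ℂ)*Complex.I = z₀ by rw [hz₀eq]; push_cast; ring] at hmono
  rw [hDre] at hre2
  have hnum := psi_three_quarter_bound
  rw [hre2] at hmono
  -- from hq : log(4π e^γ) < log q
  have hlogq : Real.log 4 + Real.log Real.pi + Real.eulerMascheroniConstant < Real.log q := by
    have h0 : (0:ℝ) < 4 * Real.pi * Real.exp Real.eulerMascheroniConstant := by
      positivity
    have := Real.log_lt_log h0 hq
    rw [Real.log_mul (by positivity) (Real.exp_ne_zero _),
      Real.log_mul (by norm_num) Real.pi_ne_zero, Real.log_exp] at this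
    linarith
  linarith
end
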